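/- arXiv:2208.09593 — 5 statements merged into one kernel-verified Lean document; each statement's English description precedes it below -/
import Mathlib

section
/- The integral from 0 to 1 of arctan(x)² dx equals π²/16 + (1/4)·π·log 2 − G, where G is Catalan's constant. -/
open Real

/-- Catalan's constant `G = ∑_{n≥1} (−1)^{n−1}/(2n−1)²`. -/
noncomputable def catalanConst : ℝ := ∑' n : ℕ, (-1 : ℝ) ^ n / (2 * (n : ℝ) + 1) ^ 2

open MeasureTheory intervalIntegral Set Filter Topology


lemma neg_log_le_rpow {x : ℝ} (hx : 0 < x) : -Real.log x ≤ 2 * x ^ (-(1:ℝ)/2) := by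
  have h1 : (0:ℝ) < x ^ (-(1:ℝ)/2) := Real.rpow_pos_of_pos hx _
  have h2 : Real.log (x ^ (-(1:ℝ)/2)) ≤ x ^ (-(1:ℝ)/2) - 1 := Real.log_le_sub_one_of_pos h1
  rw [Real.log_rpow hx] at h2
  nlinarith [Real.log_le_sub_one_of_pos h1]

lemma intervalIntegrable_log_zero {b : ℝ} (hb : 0 ≤ b) :
    IntervalIntegrable Real.log volume 0 b := by
  have hg : IntervalIntegrable (fun x : ℝ => 2 * x ^ (-(1:ℝ)/2) + x) volume 0 b :=
    ((intervalIntegrable_rpow' (by norm_num)).const_mul 2).add intervalIntegrable_id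
  refine hg.mono_fun' Real.measurable_log.aestronglyMeasurable ?_
  rw [uIoc_of_le hb]
  filter_upwards [ae_restrict_mem measurableSet_Ioc] with x hx
  have hx0 : 0 < x := hx.1
  have h1 : (0:ℝ) < x ^ (-(1:ℝ)/2) := Real.rpow_pos_of_pos hx0 _
  rw [Real.norm_eq_abs, abs_le]
  constructor
  · have := neg_log_le_rpow hx0
    nlinarith
  · have := Real.log_le_sub_one_of_pos hx0
    nlinarith

lemma intervalIntegrable_log_sin₀ : IntervalIntegrable (fun x => Real.log (Real.sin x)) volume 0 (π/2) := by
  have hg : IntervalIntegrable (fun x : ℝ => Real.log (π/2) - Real.log x) volume 0 (π/2) :=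
    (intervalIntegrable_const.sub (intervalIntegrable_log_zero (by positivity)))
  refine hg.mono_fun' (Real.measurable_log.comp Real.measurable_sin).aestronglyMeasurable ?_
  rw [uIoc_of_le (by positivity : (0:ℝ) ≤ π/2)]
  filter_upwards [ae_restrict_mem measurableSet_Ioc] with x hx
  have hx0 : 0 < x := hx.1
  have hsin : 0 < Real.sin x := Real.sin_pos_of_pos_of_lt_pi hx0 (lt_of_le_of_lt hx.2 (by linarith [Real.pi_pos]))
  have hb : 2/π * x ≤ Real.sin x := Real.mul_le_sin hx0.le hx.2
  have hsin1 : Real.sin x ≤ 1 := Real.sin_le_one x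
  rw [Real.norm_eq_abs, abs_of_nonpos (Real.log_nonpos hsin.le hsin1)]
  have h2 : Real.log (2/π * x) ≤ Real.log (Real.sin x) :=
    Real.log_le_log (by positivity) hb
  have h3 : Real.log (2/π * x) = Real.log (2/π) + Real.log x :=
    Real.log_mul (by positivity) hx0.ne'
  have h4 : Real.log (2/π) = - Real.log (π/2) := by
    rw [← Real.log_inv]; norm_num
  linarith

lemma intervalIntegrable_log_sin' : IntervalIntegrable (fun x => Real.log (Real.sin x)) volume (π/2) π := by
  have h := (intervalIntegrable_log_sin₀.comp_sub_left π (h := enorm_ne_top))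
  simp only [Real.sin_pi_sub] at h
  have e1 : π - 0 = π := by ring
  have e2 : π - π/2 = π/2 := by ring
  rw [e1, e2] at h
  exact h.symm

lemma intervalIntegrable_log_sin_pi : IntervalIntegrable (fun x => Real.log (Real.sin x)) volume 0 π :=
  intervalIntegrable_log_sin₀.trans intervalIntegrable_log_sin'

lemma intervalIntegrable_log_sin_two : IntervalIntegrable (fun x => Real.log (Real.sin (2*x))) volume 0 (π/2) := by
  have h := intervalIntegrable_log_sin_pi.comp_mul_left (c := 2) (h := enorm_ne_top) (h' := enorm_ne_top)
  norm_num at h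
  exact h

lemma integral_log_sin_pi : ∫ x in (0:ℝ)..π, Real.log (Real.sin x)
    = 2 * ∫ x in (0:ℝ)..(π/2), Real.log (Real.sin x) := by
  have h2 : ∫ x in (π/2:ℝ)..π, Real.log (Real.sin x)
      = ∫ x in (0:ℝ)..(π/2), Real.log (Real.sin x) := by
    have h := integral_comp_sub_left (a := (0:ℝ)) (b := π/2) (fun x => Real.log (Real.sin x)) π
    simp only [Real.sin_pi_sub] at h
    have e1 : π - 0 = π := by ring
    have e2 : π - π/2 = π/2 := by ring
    rw [e1, e2] at h
    exact h.symm
  rw [← integral_add_adjacent_intervals intervalIntegrable_log_sin₀ intervalIntegrable_log_sin', h2]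
  ring

lemma intervalIntegrable_log_cos₀ : IntervalIntegrable (fun x => Real.log (Real.cos x)) volume 0 (π/2) := by
  have h := intervalIntegrable_log_sin₀.comp_sub_left (π/2) (h := enorm_ne_top)
  simp only [Real.sin_pi_div_two_sub] at h
  have e1 : π/2 - 0 = π/2 := by ring
  have e2 : π/2 - π/2 = 0 := by ring
  rw [e1, e2] at h
  exact h.symm

lemma integral_log_sin_eq : ∫ x in (0:ℝ)..(π/2), Real.log (Real.sin x) = -(π/2) * Real.log 2 := by
  set S := ∫ x in (0:ℝ)..(π/2), Real.log (Real.sin x) with hS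
  have hcos : ∫ x in (0:ℝ)..(π/2), Real.log (Real.cos x) = S := by
    have h := integral_comp_sub_left (a := (0:ℝ)) (b := π/2) (fun x => Real.log (Real.sin x)) (π/2)
    simp only [Real.sin_pi_div_two_sub] at h
    have e1 : π/2 - 0 = π/2 := by ring
    have e2 : π/2 - π/2 = 0 := by ring
    rw [e1, e2] at h
    rw [hS]; exact h
  have hdouble : ∫ x in (0:ℝ)..(π/2), Real.log (Real.sin (2*x))
      = (1/2) * ∫ x in (0:ℝ)..π, Real.log (Real.sin x) := by
    have h := integral_comp_mul_left (a := (0:ℝ)) (b := π/2) (fun x => Real.log (Real.sin x)) (c := 2) two_ne_zero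
    have e1 : 2 * (π/2) = π := by ring
    have e2 : 2 * (0:ℝ) = 0 := by ring
    rw [e1, e2] at h
    rw [h, smul_eq_mul]
    norm_num
  have hcongr : ∫ x in (0:ℝ)..(π/2), (Real.log (Real.sin x) + Real.log (Real.cos x))
      = ∫ x in (0:ℝ)..(π/2), (Real.log (Real.sin (2*x)) - Real.log 2) := by
    apply intervalIntegral.integral_congr_ae
    have hne : (volume : Measure ℝ) {π/2} = 0 := measure_singleton _
    filter_upwards [compl_mem_ae_iff.mpr hne] with x hx hmem
    rw [uIoc_of_le (by positivity : (0:ℝ) ≤ π/2)] at hmem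
    have hx2 : x < π/2 := lt_of_le_of_ne hmem.2 (by simpa using hx)
    have hs : 0 < Real.sin x := Real.sin_pos_of_pos_of_lt_pi hmem.1 (by linarith [Real.pi_pos])
    have hc : 0 < Real.cos x := Real.cos_pos_of_mem_Ioo ⟨by linarith [Real.pi_pos, hmem.1], hx2⟩
    have h2x : Real.sin (2*x) = 2 * (Real.sin x * Real.cos x) := by
      rw [Real.sin_two_mul]; ring
    show Real.log (Real.sin x) + Real.log (Real.cos x) = Real.log (Real.sin (2*x)) - Real.log 2
    rw [h2x, Real.log_mul (by norm_num) (by positivity), Real.log_mul hs.ne' hc.ne']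
    ring
  rw [integral_add intervalIntegrable_log_sin₀ intervalIntegrable_log_cos₀,
    intervalIntegral.integral_sub intervalIntegrable_log_sin_two
      (_root_.intervalIntegrable_const (c := Real.log 2)),
    hdouble, integral_log_sin_pi, intervalIntegral.integral_const, hcos, ← hS] at hcongr
  simp only [smul_eq_mul, sub_zero] at hcongr
  linarith

lemma pi_quarter_pos : (0:ℝ) < π/4 := by positivity
lemma pi_quarter_lt : (π/4 : ℝ) < π/2 := by linarith [Real.pi_pos]

lemma subset_quarter : uIoc (0:ℝ) (π/4) ⊆ uIoc (0:ℝ) (π/2) := by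
  rw [uIoc_of_le pi_quarter_pos.le, uIoc_of_le (by positivity : (0:ℝ) ≤ π/2)]
  exact Ioc_subset_Ioc le_rfl pi_quarter_lt.le

lemma iiSinQ : IntervalIntegrable (fun x => Real.log (Real.sin x)) volume 0 (π/4) :=
  intervalIntegrable_log_sin₀.mono_set' subset_quarter

lemma iiCosQ : IntervalIntegrable (fun x => Real.log (Real.cos x)) volume 0 (π/4) :=
  intervalIntegrable_log_cos₀.mono_set' subset_quarter

/-- `Ls + Lc = -(π/2) log 2` -/
lemma quarter_sum :
    (∫ x in (0:ℝ)..(π/4), Real.log (Real.sin x)) + (∫ x in (0:ℝ)..(π/4), Real.log (Real.cos x))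
      = -(π/2) * Real.log 2 := by
  have hii2 : IntervalIntegrable (fun x => Real.log (Real.sin (2*x))) volume 0 (π/4) := by
    have h := intervalIntegrable_log_sin₀.comp_mul_left (c := 2) (h := enorm_ne_top) (h' := enorm_ne_top)
    have e : π/2/2 = π/4 := by ring
    norm_num at h
    rw [e] at h
    exact h
  have hcongr : ∫ x in (0:ℝ)..(π/4), (Real.log (Real.sin x) + Real.log (Real.cos x))
      = ∫ x in (0:ℝ)..(π/4), (Real.log (Real.sin (2*x)) - Real.log 2) := by
    apply intervalIntegral.integral_congr_ae
    refine Eventually.of_forall ?_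
    intro x hmem
    rw [uIoc_of_le pi_quarter_pos.le] at hmem
    have hs : 0 < Real.sin x := Real.sin_pos_of_pos_of_lt_pi hmem.1 (by linarith [Real.pi_pos, hmem.2, pi_quarter_lt])
    have hc : 0 < Real.cos x := Real.cos_pos_of_mem_Ioo ⟨by linarith [Real.pi_pos, hmem.1], by linarith [hmem.2, pi_quarter_lt]⟩
    have h2x : Real.sin (2*x) = 2 * (Real.sin x * Real.cos x) := by rw [Real.sin_two_mul]; ring
    show Real.log (Real.sin x) + Real.log (Real.cos x) = Real.log (Real.sin (2*x)) - Real.log 2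
    rw [h2x, Real.log_mul (by norm_num) (by positivity), Real.log_mul hs.ne' hc.ne']
    ring
  have hdouble : ∫ x in (0:ℝ)..(π/4), Real.log (Real.sin (2*x))
      = -(π/4) * Real.log 2 := by
    have h := integral_comp_mul_left (a := (0:ℝ)) (b := π/4) (fun x => Real.log (Real.sin x)) (c := 2) two_ne_zero
    have e1 : 2 * (π/4) = π/2 := by ring
    have e2 : 2 * (0:ℝ) = 0 := by ring
    rw [e1, e2] at h
    rw [h, integral_log_sin_eq, smul_eq_mul]
    ring
  rw [integral_add iiSinQ iiCosQ,
    intervalIntegral.integral_sub hii2 (_root_.intervalIntegrable_const (c := Real.log 2)),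
    hdouble, intervalIntegral.integral_const] at hcongr
  rw [hcongr]
  simp only [smul_eq_mul, sub_zero]
  ring

/-- proper tan substitution -/
lemma tan_substitution {a b : ℝ} (ha : 0 ≤ a) (hb : b ≤ π/4) (hab : a ≤ b) (g : ℝ → ℝ)
    (hg : ContinuousOn g (Icc (Real.tan a) (Real.tan b))) :
    ∫ θ in a..b, (1 / Real.cos θ ^ 2) * g (Real.tan θ) = ∫ x in Real.tan a..Real.tan b, g x := by
  have hmem : ∀ x ∈ uIcc a b, x ∈ Ioo (-(π/2)) (π/2) := by
    intro x hx
    rw [uIcc_of_le hab] at hx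
    constructor
    · linarith [Real.pi_pos, hx.1]
    · linarith [hx.2, pi_quarter_lt]
  have hcos : ∀ x ∈ uIcc a b, Real.cos x ≠ 0 := fun x hx =>
    (Real.cos_pos_of_mem_Ioo (hmem x hx)).ne'
  have hderiv : ∀ x ∈ uIcc a b, HasDerivAt Real.tan (1 / Real.cos x ^ 2) x := fun x hx =>
    Real.hasDerivAt_tan (hcos x hx)
  have h' : ContinuousOn (fun x => 1 / Real.cos x ^ 2) (uIcc a b) := by
    apply ContinuousOn.div continuousOn_const (Real.continuous_cos.continuousOn.pow 2)
    intro x hx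
    exact pow_ne_zero 2 (hcos x hx)
  have himg : Real.tan '' (uIcc a b) ⊆ Icc (Real.tan a) (Real.tan b) := by
    rintro _ ⟨x, hx, rfl⟩
    rw [uIcc_of_le hab] at hx
    have hmemx := hmem x (by rw [uIcc_of_le hab]; exact hx)
    constructor
    · exact Real.strictMonoOn_tan.monotoneOn (hmem a (by rw [uIcc_of_le hab]; exact ⟨le_rfl, hab⟩)) hmemx hx.1
    · exact Real.strictMonoOn_tan.monotoneOn hmemx (hmem b (by rw [uIcc_of_le hab]; exact ⟨hab, le_rfl⟩)) hx.2
  have := integral_comp_smul_deriv' hderiv h' (hg.mono himg)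
  simpa [smul_eq_mul] using this

noncomputable def fLog : ℝ → ℝ := fun x => Real.log x / (1 + x^2)
noncomputable def FF : ℝ → ℝ := fun θ => Real.log (Real.sin θ) - Real.log (Real.cos θ)

lemma fLog_int : IntervalIntegrable fLog volume 0 1 := by
  refine (intervalIntegrable_log_zero (zero_le_one)).mono_fun ?_ ?_
  · exact (Real.measurable_log.div (measurable_const.add (measurable_id.pow_const 2))).aestronglyMeasurable
  · refine Eventually.of_forall fun x => ?_
    simp only [fLog, Real.norm_eq_abs, abs_div]
    have h1 : (0:ℝ) < 1 + x^2 := by positivity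
    rw [abs_of_pos h1]
    calc |Real.log x| / (1 + x^2) ≤ |Real.log x| / 1 :=
          div_le_div_of_nonneg_left (abs_nonneg _) one_pos (by nlinarith)
      _ = |Real.log x| := div_one _

lemma FF_int : IntervalIntegrable FF volume 0 (π/4) := iiSinQ.sub iiCosQ

lemma FF_eq_logtan {θ : ℝ} (h0 : 0 ≤ θ) (h1 : θ ≤ π/4) : Real.log (Real.tan θ) = FF θ := by
  rcases eq_or_lt_of_le h0 with h | h
  · simp [FF, ← h]
  · have hc : 0 < Real.cos θ := Real.cos_pos_of_mem_Ioo
      ⟨by linarith [Real.pi_pos], by linarith [pi_quarter_lt]⟩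
    have hs : 0 < Real.sin θ := Real.sin_pos_of_pos_of_lt_pi h (by linarith [Real.pi_pos, pi_quarter_lt])
    rw [Real.tan_eq_sin_div_cos, Real.log_div hs.ne' hc.ne']
    rfl

/-- The key improper substitution identity. -/
lemma integral_fLog_eq :
    ∫ x in (0:ℝ)..1, fLog x = ∫ θ in (0:ℝ)..(π/4), FF θ := by
  -- the interval [δ, π/4] identity
  have key : ∀ δ ∈ Ioo (0:ℝ) (π/4),
      (∫ θ in (0:ℝ)..(π/4), FF θ) - (∫ θ in (0:ℝ)..δ, FF θ)
        = ∫ x in Real.tan δ..(1:ℝ), fLog x := by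
    intro δ hδ
    have hsplit : (∫ θ in (0:ℝ)..δ, FF θ) + (∫ θ in δ..(π/4), FF θ) = ∫ θ in (0:ℝ)..(π/4), FF θ := by
      apply integral_add_adjacent_intervals
      · apply FF_int.mono_set'
        rw [uIoc_of_le hδ.1.le, uIoc_of_le pi_quarter_pos.le]
        exact Ioc_subset_Ioc le_rfl hδ.2.le
      · apply FF_int.mono_set'
        rw [uIoc_of_le (by linarith [hδ.2] : δ ≤ π/4), uIoc_of_le pi_quarter_pos.le]
        exact Ioc_subset_Ioc hδ.1.le le_rfl
    have hsub : ∫ θ in δ..(π/4), FF θ = ∫ x in Real.tan δ..(1:ℝ), fLog x := by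
      have htan_pos : 0 < Real.tan δ := Real.tan_pos_of_pos_of_lt_pi_div_two hδ.1 (by linarith [hδ.2, pi_quarter_lt])
      have hcont : ContinuousOn fLog (Icc (Real.tan δ) (Real.tan (π/4))) := by
        apply ContinuousOn.div
        · exact Real.continuousOn_log.mono (fun x hx => by
            simp only [mem_compl_iff, mem_singleton_iff]
            exact (lt_of_lt_of_le htan_pos hx.1).ne')
        · exact (continuous_const.add (continuous_pow 2)).continuousOn
        · intro x _; positivity
      have h := tan_substitution hδ.1.le le_rfl hδ.2.le fLog hcont
      rw [Real.tan_pi_div_four] at h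
      rw [← h]
      apply intervalIntegral.integral_congr
      intro θ hθ
      rw [uIcc_of_le hδ.2.le] at hθ
      have hc : 0 < Real.cos θ := Real.cos_pos_of_mem_Ioo
        ⟨by linarith [Real.pi_pos, hδ.1, hθ.1], by linarith [hθ.2, pi_quarter_lt]⟩
      have h1t : 1 + Real.tan θ ^ 2 = (Real.cos θ ^ 2)⁻¹ := by
        rw [← Real.inv_one_add_tan_sq hc.ne', inv_inv]
      show FF θ = (1 / Real.cos θ ^ 2) * fLog (Real.tan θ)
      rw [← FF_eq_logtan (by linarith [hδ.1, hθ.1]) hθ.2]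
      simp only [fLog]
      rw [h1t]
      have : Real.cos θ ^ 2 ≠ 0 := pow_ne_zero 2 hc.ne'
      field_simp
    linarith [hsplit, hsub]
  -- now take limits δ → 0⁺
  have hl : (𝓝[Ioo (0:ℝ) (π/4)] 0).NeBot := by
    rw [nhdsWithin_Ioo_eq_nhdsGT pi_quarter_pos]
    exact nhdsGT_neBot 0
  have hQ : Tendsto (fun δ => ∫ θ in (0:ℝ)..δ, FF θ) (𝓝[Ioo (0:ℝ) (π/4)] 0) (𝓝 0) := by
    have hcont : ContinuousOn (fun δ => ∫ θ in (0:ℝ)..δ, FF θ) (uIcc 0 (π/4)) := by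
      apply continuousOn_primitive_interval
      rw [← intervalIntegrable_iff']
      exact FF_int
    have h0 : (0:ℝ) ∈ uIcc (0:ℝ) (π/4) := left_mem_uIcc
    have := (hcont 0 h0).tendsto
    simp only [intervalIntegral.integral_same] at this
    exact this.mono_left (nhdsWithin_mono 0 (by
      rw [uIcc_of_le pi_quarter_pos.le]
      exact Ioo_subset_Icc_self))
  have hLHS : Tendsto (fun δ => (∫ θ in (0:ℝ)..(π/4), FF θ) - (∫ θ in (0:ℝ)..δ, FF θ))
      (𝓝[Ioo (0:ℝ) (π/4)] 0) (𝓝 (∫ θ in (0:ℝ)..(π/4), FF θ)) := by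
    simpa using (tendsto_const_nhds.sub hQ)
  have hP : Tendsto (fun δ => ∫ x in Real.tan δ..(1:ℝ), fLog x) (𝓝[Ioo (0:ℝ) (π/4)] 0)
      (𝓝 (∫ x in (0:ℝ)..1, fLog x)) := by
    have hPc : ContinuousOn (fun u => ∫ x in u..(1:ℝ), fLog x) (uIcc (0:ℝ) 1) := by
      apply continuousOn_primitive_interval_left
      rw [← intervalIntegrable_iff']
      exact fLog_int
    have h0 : (0:ℝ) ∈ uIcc (0:ℝ) 1 := left_mem_uIcc
    have htan : Tendsto Real.tan (𝓝[Ioo (0:ℝ) (π/4)] 0) (𝓝[uIcc (0:ℝ) 1] 0) := by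
      apply tendsto_nhdsWithin_of_tendsto_nhds_of_eventually_within
      · have hc : ContinuousAt Real.tan 0 := Real.continuousAt_tan.2 (by simp)
        have := hc.tendsto.mono_left (nhdsWithin_le_nhds (s := Ioo (0:ℝ) (π/4)))
        simpa [Real.tan_zero] using this
      · refine eventually_nhdsWithin_of_forall fun δ hδ => ?_
        rw [uIcc_of_le zero_le_one]
        have h1 := Real.tan_pos_of_pos_of_lt_pi_div_two hδ.1 (by linarith [pi_quarter_lt, hδ.2])
        have h2 : Real.tan δ < 1 := by
          rw [← Real.tan_pi_div_four]
          exact Real.tan_lt_tan_of_nonneg_of_lt_pi_div_two hδ.1.le pi_quarter_lt hδ.2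
        exact ⟨h1.le, h2.le⟩
    exact (hPc 0 h0).tendsto.comp htan
  exact (tendsto_nhds_unique (hLHS.congr' (eventually_nhdsWithin_of_forall fun δ hδ => key δ hδ)) hP).symm


lemma iiPowLog (k : ℕ) : IntervalIntegrable (fun x => x ^ k * Real.log x) volume 0 1 := by
  refine (intervalIntegrable_log_zero zero_le_one).mono_fun ?_ ?_
  · exact ((measurable_id.pow_const k).mul Real.measurable_log).aestronglyMeasurable
  · rw [uIoc_of_le zero_le_one]
    filter_upwards [ae_restrict_mem measurableSet_Ioc] with x hx
    simp only [Real.norm_eq_abs, abs_mul]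
    have h1 : |x ^ k| ≤ 1 := by
      rw [abs_pow]
      exact pow_le_one₀ (abs_nonneg x) (abs_le.2 ⟨by linarith [hx.1], hx.2⟩)
    nlinarith [abs_nonneg (Real.log x), abs_nonneg (x^k), abs_mul x x]

/-- `∫₀¹ x^k log x dx = -1/(k+1)^2` -/
lemma integral_pow_mul_log (k : ℕ) :
    ∫ x in (0:ℝ)..1, x ^ k * Real.log x = -(1 / ((k:ℝ) + 1) ^ 2) := by
  set c : ℝ := (k:ℝ) + 1 with hc
  have hc0 : (0:ℝ) < c := by positivity
  set H : ℝ → ℝ := fun x => x ^ (k+1) * Real.log x / c - x ^ (k+1) / c ^ 2 with hH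
  have h0' : H 0 = 0 := by simp [hH, zero_pow (Nat.succ_ne_zero k)]
  have htend : Tendsto H (𝓝[>] (0:ℝ)) (𝓝 0) := by
    have h1 := tendsto_log_mul_rpow_nhdsGT_zero (by positivity : (0:ℝ) < (k:ℝ)+1)
    have h1' : Tendsto (fun x:ℝ => x ^ (k+1) * Real.log x) (𝓝[>] (0:ℝ)) (𝓝 0) := by
      apply h1.congr'
      filter_upwards [self_mem_nhdsWithin] with x hx
      rw [show ((k:ℝ)+1) = ((k+1 : ℕ) : ℝ) by push_cast; ring, Real.rpow_natCast]
      ring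
    have h2 : Tendsto (fun x:ℝ => x ^ (k+1) / c^2) (𝓝[>] (0:ℝ)) (𝓝 0) := by
      have hcont : Continuous fun x:ℝ => x^(k+1)/c^2 := (continuous_pow (k+1)).div_const _
      have := (hcont.tendsto 0).mono_left (nhdsWithin_le_nhds (s := Ioi (0:ℝ)))
      simpa [zero_pow (Nat.succ_ne_zero k)] using this
    have := (h1'.div_const c).sub h2
    simpa using this
  have hcont : ContinuousOn H (Icc 0 1) := by
    intro x hx
    rcases eq_or_lt_of_le hx.1 with h0 | h0
    · subst h0
      rw [← continuousWithinAt_diff_self]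
      unfold ContinuousWithinAt
      rw [h0']
      refine htend.mono_left (nhdsWithin_mono _ ?_)
      rintro y ⟨hy1, hy2⟩
      exact lt_of_le_of_ne hy1.1 (Ne.symm hy2)
    · refine ContinuousAt.continuousWithinAt ?_
      exact (((continuous_pow (k+1)).continuousAt.mul
        (Real.continuousAt_log h0.ne')).div_const c).sub
        ((continuous_pow (k+1)).continuousAt.div_const (c^2))
  have hderiv : ∀ x ∈ Ioo (0:ℝ) 1, HasDerivWithinAt H (x ^ k * Real.log x) (Ioi x) x := by
    intro x hx
    have h1 : HasDerivAt (fun y : ℝ => y ^ (k+1)) (((k:ℝ)+1) * x ^ k) x := by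
      have := hasDerivAt_pow (k+1) x
      simpa [Nat.add_sub_cancel] using this
    have h2 : HasDerivAt Real.log x⁻¹ x := Real.hasDerivAt_log hx.1.ne'
    have hd : HasDerivAt H
        ((((k:ℝ)+1) * x ^ k * Real.log x + x ^ (k+1) * x⁻¹) / c - ((k:ℝ)+1) * x ^ k / c ^ 2) x :=
      ((h1.mul h2).div_const c).sub (h1.div_const (c^2))
    have heq : (((k:ℝ)+1) * x ^ k * Real.log x + x ^ (k+1) * x⁻¹) / c - ((k:ℝ)+1) * x ^ k / c ^ 2
        = x ^ k * Real.log x := by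
      rw [hc]
      have hx0 : x ≠ 0 := hx.1.ne'
      field_simp
      ring
    rw [heq] at hd
    exact hd.hasDerivWithinAt
  have := integral_eq_sub_of_hasDeriv_right_of_le zero_le_one hcont hderiv (iiPowLog k)
  rw [this, h0']
  simp only [hH, one_pow, Real.log_one]
  ring

lemma integral_fLog_val : ∫ x in (0:ℝ)..1, fLog x = -catalanConst := by
  set μ := volume.restrict (Ioo (0:ℝ) 1) with hμ
  set F : ℕ → ℝ → ℝ := fun n x => (-1)^n * (x^(2*n) * Real.log x) with hF
  have hIoo : ∀ (g : ℝ → ℝ), ∫ x, g x ∂μ = ∫ x in (0:ℝ)..1, g x := by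
    intro g
    rw [intervalIntegral.integral_of_le zero_le_one, integral_Ioc_eq_integral_Ioo, hμ]
  have hFi : ∀ n, Integrable (F n) μ := by
    intro n
    have := (iiPowLog (2*n)).def'
    rw [uIoc_of_le zero_le_one] at this
    exact ((this.mono_set Ioo_subset_Ioc_self).const_mul ((-1:ℝ)^n))
  have hFnorm : ∀ n, ∫ x, ‖F n x‖ ∂μ = 1 / (2*(n:ℝ)+1)^2 := by
    intro n
    have hcongr : ∀ x ∈ Ioo (0:ℝ) 1, ‖F n x‖ = -(x^(2*n) * Real.log x) := by
      intro x hx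
      have hlog : Real.log x ≤ 0 := Real.log_nonpos hx.1.le hx.2.le
      simp only [hF, Real.norm_eq_abs, abs_mul, abs_pow, abs_neg, abs_one, one_pow, one_mul]
      rw [abs_of_nonneg hx.1.le, abs_of_nonpos hlog]
      ring
    rw [hμ, setIntegral_congr_fun measurableSet_Ioo hcongr]
    have : ∫ x in Ioo (0:ℝ) 1, -(x^(2*n) * Real.log x) = - ∫ x in Ioo (0:ℝ) 1, x^(2*n) * Real.log x := by
      exact MeasureTheory.integral_neg _
    rw [this, ← integral_Ioc_eq_integral_Ioo, ← intervalIntegral.integral_of_le zero_le_one,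
      integral_pow_mul_log]
    push_cast
    ring_nf
  have hsummable : Summable (fun n : ℕ => ∫ x, ‖F n x‖ ∂μ) := by
    simp_rw [hFnorm]
    have base : Summable (fun n : ℕ => 1 / ((n:ℝ)) ^ 2) := by
      have := Real.summable_one_div_nat_pow (p := 2)
      exact this.2 one_lt_two
    have base1 : Summable (fun n : ℕ => 1 / ((n:ℝ)+1) ^ 2) := by
      have := (summable_nat_add_iff 1).2 base
      simpa using this
    refine Summable.of_nonneg_of_le (fun n => by positivity) (fun n => ?_) base1
    apply one_div_le_one_div_of_le (by positivity)
    nlinarith [Nat.cast_nonneg (α := ℝ) n]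
  have hsum := hasSum_integral_of_summable_integral_norm hFi hsummable
  have hptwise : ∫ x, (∑' n, F n x) ∂μ = ∫ x, fLog x ∂μ := by
    apply MeasureTheory.integral_congr_ae
    rw [hμ]
    filter_upwards [ae_restrict_mem measurableSet_Ioo] with x hx
    have hx2 : ‖-x^2‖ < 1 := by
      rw [norm_neg, Real.norm_eq_abs, abs_of_nonneg (by positivity)]
      nlinarith [hx.1, hx.2]
    have hgeo := tsum_geometric_of_norm_lt_one hx2
    have hFx : ∀ n, F n x = Real.log x * (-x^2)^n := by
      intro n
      simp only [hF]
      rw [neg_pow, pow_mul]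
      ring
    simp_rw [hFx]
    rw [tsum_mul_left, hgeo]
    simp only [fLog]
    rw [sub_neg_eq_add]
    rw [div_eq_mul_inv]
  have hval : ∀ n, ∫ x, F n x ∂μ = -((-1:ℝ)^n / (2*(n:ℝ)+1)^2) := by
    intro n
    have : ∫ x, F n x ∂μ = (-1:ℝ)^n * ∫ x, x^(2*n) * Real.log x ∂μ := by
      simp_rw [hF]
      exact integral_const_mul _ _
    rw [this, hIoo, integral_pow_mul_log]
    push_cast
    ring_nf
  rw [hptwise] at hsum
  simp_rw [hval] at hsum
  have hneg := hsum.neg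
  simp only [neg_neg] at hneg
  have hcat : catalanConst = - ∫ x, fLog x ∂μ := hneg.tsum_eq
  rw [hIoo] at hcat
  linarith



lemma Lc_val : ∫ x in (0:ℝ)..(π/4), Real.log (Real.cos x)
    = (-(π/2) * Real.log 2 + catalanConst) / 2 := by
  have h1 : (∫ x in (0:ℝ)..(π/4), Real.log (Real.sin x)) - (∫ x in (0:ℝ)..(π/4), Real.log (Real.cos x))
      = -catalanConst := by
    rw [← intervalIntegral.integral_sub iiSinQ iiCosQ, ← integral_fLog_val, integral_fLog_eq]
    rfl
  linarith [quarter_sum]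

lemma c_val : ∫ x in (0:ℝ)..1, Real.log (1 + x^2) / (1 + x^2)
    = (π/2) * Real.log 2 - catalanConst := by
  have hg : ContinuousOn (fun x : ℝ => Real.log (1 + x^2) / (1 + x^2))
      (Icc (Real.tan 0) (Real.tan (π/4))) := by
    apply ContinuousOn.div
    · apply ContinuousOn.log ((continuous_const.add (continuous_pow 2)).continuousOn)
      intro x _; exact (by positivity : (0:ℝ) < 1 + x^2).ne'
    · exact (continuous_const.add (continuous_pow 2)).continuousOn
    · intro x _; positivity
  have h := tan_substitution le_rfl le_rfl (by positivity) _ hg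
  rw [Real.tan_zero, Real.tan_pi_div_four] at h
  have hLHS : ∫ θ in (0:ℝ)..(π/4), (1 / Real.cos θ ^ 2) * (Real.log (1 + Real.tan θ^2) / (1 + Real.tan θ^2))
      = ∫ θ in (0:ℝ)..(π/4), (-2) * Real.log (Real.cos θ) := by
    apply intervalIntegral.integral_congr
    intro θ hθ
    rw [uIcc_of_le (by positivity : (0:ℝ) ≤ π/4)] at hθ
    have hc : 0 < Real.cos θ := Real.cos_pos_of_mem_Ioo
      ⟨by linarith [Real.pi_pos, hθ.1], by linarith [hθ.2, pi_quarter_lt]⟩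
    have h1t : 1 + Real.tan θ ^ 2 = (Real.cos θ ^ 2)⁻¹ := by
      rw [← Real.inv_one_add_tan_sq hc.ne', inv_inv]
    show (1 / Real.cos θ ^ 2) * (Real.log (1 + Real.tan θ^2) / (1 + Real.tan θ^2))
      = (-2) * Real.log (Real.cos θ)
    have hc2 : Real.cos θ ^ 2 ≠ 0 := pow_ne_zero 2 hc.ne'
    rw [h1t, Real.log_inv, Real.log_pow]
    field_simp
    push_cast; ring
  rw [hLHS] at h
  rw [intervalIntegral.integral_const_mul, Lc_val] at h
  rw [← h]
  ring

theorem arctan_sq_integral :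
    ∫ x in (0:ℝ)..1, Real.arctan x ^ 2
      = π ^ 2 / 16 + (1/4) * π * Real.log 2 - catalanConst := by
  -- FTC 1 : d/dx (x * arctan x ^ 2)
  have hcont_at : Continuous Real.arctan := Real.continuous_arctan
  have hd1 : ∀ x : ℝ, HasDerivAt (fun y => y * Real.arctan y ^ 2)
      (Real.arctan x ^ 2 + x * (2 * Real.arctan x * (1 / (1 + x^2)))) x := by
    intro x
    have h1 : HasDerivAt (fun y : ℝ => Real.arctan y ^ 2)
        (2 * Real.arctan x ^ 1 * (1 / (1 + x^2))) x := (Real.hasDerivAt_arctan x).pow 2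
    have := (hasDerivAt_id x).mul h1
    exact this.congr_deriv (by simp only [id_eq]; ring)
  have hint1 : Continuous fun x : ℝ => Real.arctan x ^ 2 + x * (2 * Real.arctan x * (1 / (1 + x^2))) := by
    have h2 : Continuous fun x : ℝ => 1 + x^2 := continuous_const.add (continuous_pow 2)
    exact (hcont_at.pow 2).add (continuous_id.mul ((continuous_const.mul hcont_at).mul
      (continuous_const.div h2 (fun x => by positivity))))
  have hFTC1 := integral_eq_sub_of_hasDerivAt (fun x (_ : x ∈ uIcc (0:ℝ) 1) => hd1 x)
      (hint1.intervalIntegrable 0 1)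
  -- FTC 2 : d/dx (arctan x * log (1+x²))
  have hd2 : ∀ x : ℝ, HasDerivAt (fun y => Real.arctan y * Real.log (1 + y^2))
      (Real.log (1 + x^2) / (1 + x^2) + x * (2 * Real.arctan x * (1 / (1 + x^2)))) x := by
    intro x
    have hx2 : (0:ℝ) < 1 + x^2 := by positivity
    have hsq : HasDerivAt (fun y : ℝ => 1 + y^2) (2 * x) x := by
      have := ((hasDerivAt_pow 2 x).const_add 1)
      simpa using this
    have hlog : HasDerivAt (fun y : ℝ => Real.log (1 + y^2)) (2 * x / (1 + x^2)) x :=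
      hsq.log hx2.ne'
    have := (Real.hasDerivAt_arctan x).mul hlog
    apply this.congr_deriv
    field_simp
  have hint2 : Continuous fun x : ℝ =>
      Real.log (1 + x^2) / (1 + x^2) + x * (2 * Real.arctan x * (1 / (1 + x^2))) := by
    have h2 : Continuous fun x : ℝ => 1 + x^2 := continuous_const.add (continuous_pow 2)
    have hne : ∀ x : ℝ, 1 + x^2 ≠ 0 := fun x => by positivity
    exact ((h2.log hne).div h2 hne).add (continuous_id.mul ((continuous_const.mul hcont_at).mul
      (continuous_const.div h2 hne)))
  have hFTC2 := integral_eq_sub_of_hasDerivAt (fun x (_ : x ∈ uIcc (0:ℝ) 1) => hd2 x)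
      (hint2.intervalIntegrable 0 1)
  -- split the integrals
  have h2c : Continuous fun x : ℝ => 1 + x^2 := continuous_const.add (continuous_pow 2)
  have hne : ∀ x : ℝ, 1 + x^2 ≠ 0 := fun x => by positivity
  have hB : Continuous fun x : ℝ => x * (2 * Real.arctan x * (1 / (1 + x^2))) :=
    continuous_id.mul ((continuous_const.mul hcont_at).mul (continuous_const.div h2c hne))
  have hsplit1 : ∫ x in (0:ℝ)..1, (Real.arctan x ^ 2 + x * (2 * Real.arctan x * (1 / (1 + x^2))))
      = (∫ x in (0:ℝ)..1, Real.arctan x ^ 2)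
        + ∫ x in (0:ℝ)..1, x * (2 * Real.arctan x * (1 / (1 + x^2))) :=
    integral_add ((hcont_at.pow 2).intervalIntegrable 0 1) (hB.intervalIntegrable 0 1)
  have hsplit2 : ∫ x in (0:ℝ)..1,
        (Real.log (1 + x^2) / (1 + x^2) + x * (2 * Real.arctan x * (1 / (1 + x^2))))
      = (∫ x in (0:ℝ)..1, Real.log (1 + x^2) / (1 + x^2))
        + ∫ x in (0:ℝ)..1, x * (2 * Real.arctan x * (1 / (1 + x^2))) :=
    integral_add (((h2c.log hne).div h2c hne).intervalIntegrable 0 1) (hB.intervalIntegrable 0 1)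
  rw [hsplit1] at hFTC1
  rw [hsplit2] at hFTC2
  simp only [Real.arctan_one, Real.arctan_zero, one_mul, zero_mul, mul_zero, sub_zero] at hFTC1
  simp only [Real.arctan_one, Real.arctan_zero, one_mul, zero_mul, mul_zero, sub_zero] at hFTC2
  have e2 : Real.log (1 + (1:ℝ)^2) = Real.log 2 := by norm_num
  rw [e2] at hFTC2
  have hc := c_val
  have hpi : (π/4)^2 = π^2/16 := by ring
  linarith [hFTC1, hFTC2, hc, hpi]
end

section
/- The integral from 0 to 1 of arctan(x)³/x dx equals (9/8)·ζ(2)·G − (3/2)·β(4). -/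
open Real

/-- `ζ(2) = ∑_{n≥1} 1/n²`. -/
noncomputable def zeta2 : ℝ := ∑' n : ℕ, 1 / ((n : ℝ) + 1) ^ 2

/-- Dirichlet beta value `β(4)`. -/
noncomputable def beta4 : ℝ := ∑' n : ℕ, (-1 : ℝ) ^ n / (2 * (n : ℝ) + 1) ^ 4

open Set MeasureTheory intervalIntegral Filter Topology

/-- Key series: Abel-regularized log-tan Fourier series. -/
lemma hasSum_phi (r θ : ℝ) (hr0 : 0 ≤ r) (hr1 : r < 1) :
    HasSum (fun k : ℕ => r ^ (2*k+1) * Real.cos ((4*(k:ℝ)+2)*θ) / (2*(k:ℝ)+1))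
      ((Real.log (1+2*r*Real.cos (2*θ)+r^2) - Real.log (1-2*r*Real.cos (2*θ)+r^2))/4) := by
  set w : ℂ := (r:ℂ) * Complex.exp ((2*θ:ℝ) * Complex.I) with hw
  have hnw : ‖w‖ = r := by
    rw [hw, norm_mul, Complex.norm_exp_ofReal_mul_I, Complex.norm_real, Real.norm_eq_abs, abs_of_nonneg hr0, mul_one]
  have hwlt : ‖w‖ < 1 := by rw [hnw]; exact hr1
  have h1 : HasSum (fun n : ℕ => (-1)^n * (-Complex.I*w)^(2*n+1) / ((2*n+1 : ℕ):ℂ))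
      (Complex.arctan (-Complex.I*w)) := by
    exact Complex.hasSum_arctan (by simpa using hwlt)
  have h2 := h1.mul_left Complex.I
  have hterm : ∀ n : ℕ, Complex.I * ((-1)^n * (-Complex.I*w)^(2*n+1) / ((2*n+1 : ℕ):ℂ))
      = w^(2*n+1) / ((2*n+1 : ℕ):ℂ) := by
    intro n
    have hpow : (-Complex.I*w)^(2*n+1) = (-1)^n * (-Complex.I) * w^(2*n+1) := by
      rw [mul_pow, pow_succ, pow_mul,
        show (-Complex.I)^2 = -1 by rw [neg_pow, Complex.I_sq]; ring]
    have h4 : ((-1:ℂ)^n)*((-1:ℂ)^n) = 1 := by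
      rw [← pow_add, ← two_mul, pow_mul]; norm_num
    have h5 : Complex.I * -Complex.I = 1 := by
      rw [mul_neg, Complex.I_mul_I, neg_neg]
    rw [hpow, div_eq_mul_inv, div_eq_mul_inv]
    calc Complex.I * ((-1:ℂ)^n * ((-1)^n * -Complex.I * w^(2*n+1)) * ((2*n+1:ℕ):ℂ)⁻¹)
        = ((-1:ℂ)^n*(-1)^n) * (Complex.I * -Complex.I) * (w^(2*n+1) * ((2*n+1:ℕ):ℂ)⁻¹) := by
          ring
      _ = w^(2*n+1) * ((2*n+1:ℕ):ℂ)⁻¹ := by rw [h4, h5, one_mul, one_mul]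
  rw [funext hterm] at h2
  have harc : Complex.I * Complex.arctan (-Complex.I*w) = Complex.log ((1+w)/(1-w)) / 2 := by
    rw [Complex.arctan]
    have h6 : -Complex.I*w*Complex.I = w := by
      rw [mul_comm (-Complex.I) w, mul_assoc, neg_mul, Complex.I_mul_I, neg_neg, mul_one]
    rw [h6]
    rw [show Complex.I * (-Complex.I / 2 * Complex.log ((1 + w) / (1 - w)))
      = (Complex.I * -Complex.I) * Complex.log ((1 + w) / (1 - w)) / 2 by ring,
      mul_neg, Complex.I_mul_I, neg_neg, one_mul]
  rw [harc] at h2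
  have h3 := Complex.hasSum_re h2
  have hterm2 : ∀ n : ℕ, (w^(2*n+1) / ((2*n+1:ℕ):ℂ)).re
      = r^(2*n+1) * Real.cos ((4*(n:ℝ)+2)*θ) / (2*(n:ℝ)+1) := by
    intro n
    have hwp : w^(2*n+1) = ((r^(2*n+1):ℝ):ℂ)
        * Complex.exp ((((4*(n:ℝ)+2)*θ : ℝ)) * Complex.I) := by
      rw [hw, mul_pow, ← Complex.exp_nat_mul]
      push_cast
      ring_nf
    rw [show ((2*n+1:ℕ):ℂ) = ((2*(n:ℝ)+1 : ℝ):ℂ) by push_cast; ring,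
      hwp, Complex.div_ofReal_re, Complex.re_ofReal_mul, Complex.exp_ofReal_mul_I_re]
  rw [funext hterm2] at h3
  convert h3 using 1
  -- RHS real part computation
  have habs : ∀ s : ℝ, ‖1+(s:ℂ)*Complex.exp ((2*θ:ℝ) * Complex.I)‖
      = Real.sqrt (1+2*s*Real.cos (2*θ)+s^2) := by
    intro s
    rw [Complex.norm_def]
    congr 1
    rw [Complex.normSq_apply]
    simp only [Complex.add_re, Complex.add_im, Complex.one_re, Complex.one_im,
      Complex.re_ofReal_mul, Complex.im_ofReal_mul, Complex.exp_ofReal_mul_I_re,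
      Complex.exp_ofReal_mul_I_im]
    linear_combination (s^2) * (Real.sin_sq_add_cos_sq (2*θ))
  have hpos1 : (0:ℝ) < 1+2*r*Real.cos (2*θ)+r^2 := by
    nlinarith [Real.neg_one_le_cos (2*θ), Real.cos_le_one (2*θ), sq_nonneg (1-r), sq_nonneg (1+r)]
  have hpos2 : (0:ℝ) < 1-2*r*Real.cos (2*θ)+r^2 := by
    nlinarith [Real.neg_one_le_cos (2*θ), Real.cos_le_one (2*θ), sq_nonneg (1-r), sq_nonneg (1+r)]
  have habs1 : ‖1+w‖ = Real.sqrt (1+2*r*Real.cos (2*θ)+r^2) := habs r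
  have habs2 : ‖1-w‖ = Real.sqrt (1-2*r*Real.cos (2*θ)+r^2) := by
    have : (1:ℂ) - w = 1 + ((-r:ℝ):ℂ) * Complex.exp ((2*θ:ℝ) * Complex.I) := by
      rw [hw]; push_cast; ring
    rw [this, habs (-r)]
    congr 1
    ring
  have hne1 : ‖1+w‖ ≠ 0 := by
    rw [habs1]; positivity
  have hne2 : ‖1-w‖ ≠ 0 := by
    rw [habs2]; positivity
  rw [show (2:ℂ) = ((2:ℝ):ℂ) by norm_num, Complex.div_ofReal_re, Complex.log_re, norm_div,
    Real.log_div hne1 hne2, habs1, habs2, Real.log_sqrt hpos1.le, Real.log_sqrt hpos2.le]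
  ring

lemma integral_sq_cos (m : ℝ) (hm : m ≠ 0) (b : ℝ) :
    ∫ θ in (0:ℝ)..b, θ^2 * Real.cos (m*θ)
      = b^2*Real.sin (m*b)/m + 2*b*Real.cos (m*b)/m^2 - 2*Real.sin (m*b)/m^3 := by
  have key : ∀ θ : ℝ, HasDerivAt
      (fun t : ℝ => t^2*Real.sin (m*t)/m + 2*t*Real.cos (m*t)/m^2 - 2*Real.sin (m*t)/m^3)
      (θ^2 * Real.cos (m*θ)) θ := by
    intro θ
    have h1 : HasDerivAt (fun t:ℝ => t^2) (2*θ) θ := by simpa using hasDerivAt_pow 2 θ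
    have hm' : HasDerivAt (fun t:ℝ => m*t) m θ := by simpa using (hasDerivAt_id θ).const_mul m
    have hsin : HasDerivAt (fun t:ℝ => Real.sin (m*t)) (Real.cos (m*θ)*m) θ := hm'.sin
    have hcos : HasDerivAt (fun t:ℝ => Real.cos (m*t)) (-Real.sin (m*θ)*m) θ := hm'.cos
    have h2 : HasDerivAt (fun t:ℝ => 2*t) 2 θ := by simpa using (hasDerivAt_id θ).const_mul 2
    have := (((h1.mul hsin).div_const m).add
      ((h2.mul hcos).div_const (m^2))).sub ((hsin.const_mul 2).div_const (m^3))
    refine this.congr_deriv ?_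
    field_simp
    ring
  rw [integral_eq_sub_of_hasDerivAt (fun θ _ => key θ)
    (Continuous.intervalIntegrable (by continuity) 0 b)]
  simp

lemma Tk (k : ℕ) : ∫ θ in (0:ℝ)..(π/4), θ^2 * Real.cos ((4*(k:ℝ)+2)*θ)
    = (-1)^k * (π^2/(16*(4*(k:ℝ)+2)) - 2/(4*(k:ℝ)+2)^3) := by
  have hm : (4*(k:ℝ)+2) ≠ 0 := by positivity
  have harg : (4*(k:ℝ)+2) * (π/4) = (k:ℝ)*π + π/2 := by ring
  have hsin : Real.sin ((4*(k:ℝ)+2) * (π/4)) = (-1)^k := by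
    rw [harg, Real.sin_add_pi_div_two]
    have := Real.cos_nat_mul_pi_sub 0 k
    simpa using this
  have hcos : Real.cos ((4*(k:ℝ)+2) * (π/4)) = 0 := by
    rw [harg, Real.cos_add_pi_div_two, Real.sin_nat_mul_pi, neg_zero]
  rw [integral_sq_cos _ hm, hsin, hcos]
  field_simp
  ring

lemma integrableOn_of_bdd_Ioc {f : ℝ → ℝ} {b C : ℝ}
    (hc : ContinuousOn f (Ioc 0 b)) (hC : ∀ θ ∈ Ioc (0:ℝ) b, |f θ| ≤ C) :
    IntegrableOn f (Ioc 0 b) volume := by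
  refine ⟨hc.aestronglyMeasurable measurableSet_Ioc, ?_⟩
  apply MeasureTheory.HasFiniteIntegral.restrict_of_bounded (C := C) measure_Ioc_lt_top
  exact (ae_restrict_iff' measurableSet_Ioc).mpr (Filter.Eventually.of_forall
    (fun θ hθ => by rw [Real.norm_eq_abs]; exact hC θ hθ))

lemma tan_mem_facts {θ : ℝ} (hθ : θ ∈ Ioc (0:ℝ) (π/4)) :
    0 < Real.sin θ ∧ 0 < Real.cos θ ∧ 0 < Real.tan θ ∧ Real.tan θ ≤ 1 ∧ θ ≤ Real.tan θ := by
  have hpi : π/4 < π/2 := by linarith [Real.pi_pos]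
  have h1 : 0 < Real.sin θ := Real.sin_pos_of_pos_of_lt_pi hθ.1 (by linarith [Real.pi_pos, hθ.2])
  have h2 : 0 < Real.cos θ := Real.cos_pos_of_mem_Ioo ⟨by linarith [Real.pi_pos, hθ.1], by linarith [hθ.2]⟩
  have h3 : 0 < Real.tan θ := by rw [Real.tan_eq_sin_div_cos]; positivity
  have h4 : Real.tan θ ≤ 1 := by
    rw [← Real.tan_pi_div_four]
    rcases eq_or_lt_of_le hθ.2 with h | h
    · rw [h]
    · exact le_of_lt (Real.tan_lt_tan_of_nonneg_of_lt_pi_div_two hθ.1.le hpi h)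
  have h5 : θ ≤ Real.tan θ :=
    (Real.lt_tan hθ.1 (by linarith [hθ.2])).le
  exact ⟨h1, h2, h3, h4, h5⟩

lemma neg_log_le_inv {x : ℝ} (hx : 0 < x) : -Real.log x ≤ 1/x := by
  have := Real.log_le_sub_one_of_pos (show (0:ℝ) < 1/x by positivity)
  rw [Real.log_div one_ne_zero hx.ne', Real.log_one] at this
  linarith

lemma abs_log_tan_le {θ : ℝ} (hθ : θ ∈ Ioc (0:ℝ) (π/4)) : |Real.log (Real.tan θ)| ≤ 1/θ := by
  obtain ⟨h1, h2, h3, h4, h5⟩ := tan_mem_facts hθ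
  have hle : Real.log (Real.tan θ) ≤ 0 := Real.log_nonpos h3.le h4
  have hge : Real.log θ ≤ Real.log (Real.tan θ) := Real.log_le_log hθ.1 h5
  rw [abs_of_nonpos hle]
  calc -Real.log (Real.tan θ) ≤ -Real.log θ := by linarith
    _ ≤ 1/θ := neg_log_le_inv hθ.1

lemma contOn_log_tan : ContinuousOn (fun θ => Real.log (Real.tan θ)) (Ioc (0:ℝ) (π/4)) := by
  apply ContinuousOn.log
  · apply ContinuousOn.mono Real.continuousOn_tan
    intro θ hθ
    exact (tan_mem_facts hθ).2.1.ne'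
  · intro θ hθ
    exact (tan_mem_facts hθ).2.2.1.ne'

lemma integrableOn_sq_log_tan :
    IntegrableOn (fun θ => θ^2 * Real.log (Real.tan θ)) (Ioc 0 (π/4)) volume := by
  apply integrableOn_of_bdd_Ioc (C := 1)
  · exact (continuousOn_pow 2).mul contOn_log_tan
  · intro θ hθ
    have h1 := abs_log_tan_le hθ
    have hpi : π/4 ≤ 1 := by nlinarith [Real.pi_le_four]
    rw [abs_mul, abs_pow, abs_of_pos hθ.1]
    calc θ^2 * |Real.log (Real.tan θ)| ≤ θ^2 * (1/θ) := by
          exact mul_le_mul_of_nonneg_left h1 (by positivity)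
      _ = θ := by field_simp [hθ.1.ne']
      _ ≤ 1 := hθ.2.trans hpi

lemma integrableOn_cube_sin_cos :
    IntegrableOn (fun θ => θ^3 / (Real.sin θ * Real.cos θ)) (Ioc 0 (π/4)) volume := by
  apply integrableOn_of_bdd_Ioc (C := 2)
  · apply ContinuousOn.div (continuousOn_pow 3)
      (Real.continuous_sin.continuousOn.mul Real.continuous_cos.continuousOn)
    intro θ hθ
    obtain ⟨h1, h2, _⟩ := tan_mem_facts hθ
    exact (mul_pos h1 h2).ne'
  · intro θ hθ
    obtain ⟨h1, h2, h3, h4, h5⟩ := tan_mem_facts hθ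
    have hc : Real.cos θ ^ 2 ≥ 1/2 := by
      have : Real.cos (π/4) ≤ Real.cos θ := by
        apply Real.cos_le_cos_of_nonneg_of_le_pi hθ.1.le (by linarith [Real.pi_pos]) hθ.2
      rw [Real.cos_pi_div_four] at this
      nlinarith [Real.sqrt_nonneg 2, Real.sq_sqrt (by norm_num : (2:ℝ) ≥ 0)]
    have hsc : Real.sin θ * Real.cos θ ≥ θ/2 := by
      have : Real.sin θ * Real.cos θ = Real.tan θ * Real.cos θ^2 := by
        rw [Real.tan_eq_sin_div_cos]; field_simp
      rw [this]
      calc Real.tan θ * Real.cos θ^2 ≥ θ * (1/2) := by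
            apply mul_le_mul h5 hc (by norm_num) (by linarith) |>.trans_eq rfl
        _ = θ/2 := by ring
    have hθ1 : θ ≤ 1 := hθ.2.trans (by nlinarith [Real.pi_le_four])
    rw [abs_of_nonneg (div_nonneg (pow_nonneg hθ.1.le 3) (mul_pos h1 h2).le)]
    calc θ^3 / (Real.sin θ * Real.cos θ) ≤ θ^3 / (θ/2) := by
          exact div_le_div_of_nonneg_left (pow_nonneg hθ.1.le 3) (half_pos hθ.1) hsc
      _ = 2*θ^2 := by field_simp [hθ.1.ne']
      _ ≤ 2 := by nlinarith [hθ.1]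

lemma arctan_le_self {x : ℝ} (hx : 0 ≤ x) : Real.arctan x ≤ x := by
  rcases eq_or_lt_of_le hx with h | h
  · simp [← h]
  · have h0 : 0 < Real.arctan x := by
      rw [← Real.arctan_zero]; exact Real.arctan_strictMono h
    have := Real.lt_tan h0 (Real.arctan_lt_pi_div_two x)
    rw [Real.tan_arctan] at this
    exact this.le

lemma arctan_nonneg' {x : ℝ} (hx : 0 ≤ x) : 0 ≤ Real.arctan x := by
  rw [← Real.arctan_zero]
  exact Real.arctan_strictMono.monotone hx

lemma contOn_g : ContinuousOn (fun u => Real.arctan u ^ 3 / u) (Icc (0:ℝ) 1) := by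
  intro x hx
  rcases eq_or_lt_of_le hx.1 with h | h
  · rw [← h]
    have h0 : Real.arctan (0:ℝ) ^ 3 / (0:ℝ) = 0 := by simp
    rw [ContinuousWithinAt, h0]
    apply squeeze_zero_norm' (a := fun x => x^2)
    · filter_upwards [self_mem_nhdsWithin] with x hx'
      rcases eq_or_lt_of_le hx'.1 with h' | h'
      · simp [← h']
      · rw [Real.norm_eq_abs, abs_div, abs_pow, abs_of_nonneg (arctan_nonneg' h'.le),
          abs_of_pos h']
        calc Real.arctan x ^ 3 / x ≤ x^3 / x := by
              gcongr
              · exact arctan_le_self h'.le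
          _ = x^2 := by field_simp [h'.ne']
    · have : Tendsto (fun x : ℝ => x^2) (nhds 0) (nhds 0) := by
        simpa using (continuous_pow 2).tendsto (0:ℝ)
      exact this.mono_left nhdsWithin_le_nhds
  · exact (((Real.continuous_arctan.pow 3).continuousAt).div continuousAt_id h.ne').continuousWithinAt

lemma subst_step :
    ∫ x in (0:ℝ)..1, Real.arctan x ^ 3 / x
      = ∫ θ in (0:ℝ)..(π/4), θ^3 / (Real.sin θ * Real.cos θ) := by
  have hpi4 : (0:ℝ) < π/4 := by linarith [Real.pi_pos]
  have huIcc : uIcc (0:ℝ) (π/4) = Icc 0 (π/4) := uIcc_of_le hpi4.le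
  have hcos_pos : ∀ θ ∈ Icc (0:ℝ) (π/4), 0 < Real.cos θ := by
    intro θ hθ
    exact Real.cos_pos_of_mem_Ioo ⟨by linarith [Real.pi_pos, hθ.1], by linarith [hθ.2, Real.pi_pos]⟩
  have htan_cont : ContinuousOn Real.tan (uIcc (0:ℝ) (π/4)) := by
    rw [huIcc]
    exact Real.continuousOn_tan.mono (fun θ hθ => (hcos_pos θ hθ).ne')
  have hmaps : Real.tan '' (uIcc (0:ℝ) (π/4)) ⊆ Icc 0 1 := by
    rw [huIcc, image_subset_iff]
    intro θ hθ
    constructor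
    · exact Real.tan_nonneg_of_nonneg_of_le_pi_div_two hθ.1 (by linarith [hθ.2, Real.pi_pos])
    · rcases eq_or_lt_of_le hθ.1 with h | h
      · simp [← h, Real.tan_zero]
      · exact (tan_mem_facts ⟨h, hθ.2⟩).2.2.2.1
  have key := intervalIntegral.integral_comp_smul_deriv''
    (f := Real.tan) (f' := fun θ => 1 / Real.cos θ ^ 2)
    (g := fun u => Real.arctan u ^ 3 / u) (a := 0) (b := π/4)
    htan_cont
    (by
      intro θ hθ
      rw [min_eq_left hpi4.le, max_eq_right hpi4.le] at hθ
      exact (Real.hasDerivAt_tan (hcos_pos θ (Ioo_subset_Icc_self hθ)).ne').hasDerivWithinAt)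
    (by
      rw [huIcc]
      apply ContinuousOn.div continuousOn_const
      · exact (Real.continuous_cos.continuousOn).pow 2
      · intro θ hθ; exact pow_ne_zero 2 (hcos_pos θ hθ).ne')
    (contOn_g.mono hmaps)
  rw [Real.tan_zero, Real.tan_pi_div_four] at key
  rw [← key]
  apply intervalIntegral.integral_congr
  intro θ hθ
  rw [huIcc] at hθ
  rcases eq_or_lt_of_le hθ.1 with h | h
  · simp [← h]
  · obtain ⟨h1, h2, h3, h4, h5⟩ := tan_mem_facts ⟨h, hθ.2⟩
    have harc : Real.arctan (Real.tan θ) = θ :=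
      Real.arctan_tan (by linarith [Real.pi_pos]) (by linarith [hθ.2, Real.pi_pos])
    simp only [Function.comp_apply, smul_eq_mul]
    rw [harc, Real.tan_eq_sin_div_cos]
    field_simp

lemma ftc_step :
    ∫ θ in (0:ℝ)..(π/4), θ^3 / (Real.sin θ * Real.cos θ)
      = -3 * ∫ θ in (0:ℝ)..(π/4), θ^2 * Real.log (Real.tan θ) := by
  have hpi4 : (0:ℝ) < π/4 := by linarith [Real.pi_pos]
  set H : ℝ → ℝ := fun θ => θ^3 * Real.log (Real.tan θ) with hH
  have hcont : ContinuousOn H (Icc 0 (π/4)) := by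
    intro θ hθ
    rcases eq_or_lt_of_le hθ.1 with h | h
    · rw [← h]
      have h0 : H 0 = 0 := by simp [hH]
      rw [ContinuousWithinAt, h0]
      apply squeeze_zero_norm' (a := fun θ : ℝ => θ^2)
      · filter_upwards [self_mem_nhdsWithin] with x hx'
        rcases eq_or_lt_of_le hx'.1 with h' | h'
        · simp [hH, ← h']
        · have hb := abs_log_tan_le ⟨h', hx'.2⟩
          rw [Real.norm_eq_abs, hH, abs_mul, abs_pow, abs_of_pos h']
          calc x^3 * |Real.log (Real.tan x)| ≤ x^3 * (1/x) :=
                mul_le_mul_of_nonneg_left hb (by positivity)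
            _ = x^2 := by field_simp [h'.ne']
      · have : Tendsto (fun x : ℝ => x^2) (nhds 0) (nhds 0) := by
          simpa using (continuous_pow 2).tendsto (0:ℝ)
        exact this.mono_left nhdsWithin_le_nhds
    · obtain ⟨h1, h2, h3, h4, h5⟩ := tan_mem_facts ⟨h, hθ.2⟩
      apply ContinuousAt.continuousWithinAt
      apply ContinuousAt.mul (continuousAt_pow θ 3)
      apply ContinuousAt.log ?_ h3.ne'
      exact Real.continuousAt_tan.mpr h2.ne'
  have hint1 : IntervalIntegrable (fun θ => θ^2 * Real.log (Real.tan θ)) volume 0 (π/4) := by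
    rw [intervalIntegrable_iff_integrableOn_Ioc_of_le hpi4.le]
    exact integrableOn_sq_log_tan
  have hint2 : IntervalIntegrable (fun θ => θ^3 / (Real.sin θ * Real.cos θ)) volume 0 (π/4) := by
    rw [intervalIntegrable_iff_integrableOn_Ioc_of_le hpi4.le]
    exact integrableOn_cube_sin_cos
  have hint : IntervalIntegrable
      (fun θ => 3*(θ^2 * Real.log (Real.tan θ)) + θ^3 / (Real.sin θ * Real.cos θ))
      volume 0 (π/4) := (hint1.const_mul 3).add hint2
  have hderiv : ∀ θ ∈ Ioo (0:ℝ) (π/4),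
      HasDerivWithinAt H
        (3*(θ^2 * Real.log (Real.tan θ)) + θ^3 / (Real.sin θ * Real.cos θ)) (Ioi θ) θ := by
    intro θ hθ
    obtain ⟨h1, h2, h3, h4, h5⟩ := tan_mem_facts ⟨hθ.1, hθ.2.le⟩
    have hp : HasDerivAt (fun t : ℝ => t^3) (3*θ^2) θ := by simpa using hasDerivAt_pow 3 θ
    have htan : HasDerivAt Real.tan (1 / Real.cos θ ^ 2) θ := Real.hasDerivAt_tan h2.ne'
    have hlog : HasDerivAt (fun t => Real.log (Real.tan t))
        ((1 / Real.cos θ ^ 2) / Real.tan θ) θ := htan.log h3.ne'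
    have := hp.mul hlog
    apply HasDerivAt.hasDerivWithinAt
    refine this.congr_deriv ?_
    rw [Real.tan_eq_sin_div_cos]
    field_simp
  have hFTC := intervalIntegral.integral_eq_sub_of_hasDeriv_right_of_le hpi4.le hcont hderiv hint
  have hH0 : H 0 = 0 := by simp [hH]
  have hHpi : H (π/4) = 0 := by simp [hH, Real.tan_pi_div_four]
  rw [hH0, hHpi, sub_zero] at hFTC
  rw [intervalIntegral.integral_add (hint1.const_mul 3) hint2,
    intervalIntegral.integral_const_mul] at hFTC
  linarith [hFTC]

noncomputable def phiFun (r θ : ℝ) : ℝ :=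
  (Real.log (1+2*r*Real.cos (2*θ)+r^2) - Real.log (1-2*r*Real.cos (2*θ)+r^2))/4


lemma hasSum_phiFun (r θ : ℝ) (hr0 : 0 ≤ r) (hr1 : r < 1) :
    HasSum (fun k : ℕ => r ^ (2*k+1) * Real.cos ((4*(k:ℝ)+2)*θ) / (2*(k:ℝ)+1))
      (phiFun r θ) := hasSum_phi r θ hr0 hr1

noncomputable def gSeq (k : ℕ) : ℝ :=
  (π^2/32) * ((-1)^k/(2*(k:ℝ)+1)^2) - (1/4)*((-1)^k/(2*(k:ℝ)+1)^4)

lemma cos_facts {θ : ℝ} (hθ : θ ∈ Ioc (0:ℝ) (π/4)) :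
    0 ≤ Real.cos (2*θ) ∧ Real.cos (2*θ) < 1 := by
  have hpi := Real.pi_pos
  constructor
  · exact Real.cos_nonneg_of_mem_Icc ⟨by linarith [hθ.1], by linarith [hθ.2]⟩
  · have := Real.cos_lt_cos_of_nonneg_of_le_pi (x := 0) (y := 2*θ)
      (le_refl (0:ℝ)) (by linarith [hθ.2]) (by linarith [hθ.1])
    rwa [Real.cos_zero] at this

lemma denom_pos {r c : ℝ} (hr0 : 0 ≤ r) (hc1 : c < 1) :
    0 < 1 - 2*r*c + r^2 := by
  rcases eq_or_lt_of_le hr0 with h | h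
  · rw [← h]; norm_num
  · nlinarith [sq_nonneg (1-r), mul_pos h (sub_pos.mpr hc1)]

lemma num_pos {r c : ℝ} (hr0 : 0 ≤ r) (hc0 : 0 ≤ c) : 0 < 1 + 2*r*c + r^2 := by
  nlinarith [mul_nonneg hr0 hc0, sq_nonneg r]

lemma phi_one_eq {θ : ℝ} (hθ : θ ∈ Ioc (0:ℝ) (π/4)) :
    phiFun 1 θ = -(1/2) * Real.log (Real.tan θ) := by
  obtain ⟨hs, hc, ht, _, _⟩ := tan_mem_facts hθ
  have h2c : 1+2*1*Real.cos (2*θ)+(1:ℝ)^2 = (2*Real.cos θ)^2 := by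
    rw [Real.cos_two_mul]; ring
  have h2s : 1-2*1*Real.cos (2*θ)+(1:ℝ)^2 = (2*Real.sin θ)^2 := by
    rw [Real.cos_two_mul']
    have := Real.sin_sq_add_cos_sq θ
    nlinarith [this]
  rw [phiFun, h2c, h2s, Real.log_pow, Real.log_pow,
    Real.log_mul two_ne_zero hc.ne', Real.log_mul two_ne_zero hs.ne',
    Real.tan_eq_sin_div_cos, Real.log_div hs.ne' hc.ne']
  push_cast
  ring

lemma phi_nonneg {r θ : ℝ} (hr0 : 0 ≤ r) (hθ : θ ∈ Ioc (0:ℝ) (π/4)) :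
    0 ≤ phiFun r θ := by
  obtain ⟨hc0, hc1⟩ := cos_facts hθ
  have h1 := denom_pos hr0 hc1
  have h2 := num_pos hr0 hc0
  have hle : 1 - 2*r*Real.cos (2*θ) + r^2 ≤ 1 + 2*r*Real.cos (2*θ) + r^2 := by
    nlinarith [mul_nonneg hr0 hc0]
  have h := Real.log_le_log h1 hle
  rw [phiFun]
  exact div_nonneg (sub_nonneg.mpr h) (by norm_num)

lemma phi_le {r θ : ℝ} (hr0 : 0 ≤ r) (hr1 : r ≤ 1) (hθ : θ ∈ Ioc (0:ℝ) (π/4)) :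
    phiFun r θ ≤ phiFun 1 θ := by
  obtain ⟨hc0, hc1⟩ := cos_facts hθ
  rw [phiFun, phiFun]
  set c := Real.cos (2*θ) with hcdef
  have hA := num_pos hr0 hc0
  have hB := denom_pos hr0 hc1
  have hA1 : (0:ℝ) < 1 + 2*1*c + 1^2 := num_pos zero_le_one hc0
  have hB1 : (0:ℝ) < 1 - 2*1*c + 1^2 := denom_pos zero_le_one hc1
  have hmul : (1+2*r*c+r^2) * (1-2*1*c+1^2) ≤ (1+2*1*c+1^2) * (1-2*r*c+r^2) := by
    nlinarith [mul_nonneg hc0 (sq_nonneg (1-r))]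
  have hlog := Real.log_le_log (mul_pos hA hB1) hmul
  rw [Real.log_mul hA.ne' hB1.ne', Real.log_mul hA1.ne' hB.ne'] at hlog
  have h := sub_le_sub_iff.mpr hlog
  gcongr

lemma summable_inv_two_mul_add_one_pow {p : ℕ} (hp : 2 ≤ p) :
    Summable (fun k : ℕ => 1/(2*(k:ℝ)+1)^p) := by
  have hbase : Summable (fun n : ℕ => 1/((n:ℝ))^p) := by
    rw [Real.summable_one_div_nat_pow]
    omega
  have hshift : Summable (fun n : ℕ => 1/(((n:ℝ))+1)^p) := by
    have := (summable_nat_add_iff (f := fun n : ℕ => 1/((n:ℝ))^p) 1).mpr hbase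
    apply this.congr
    intro n
    push_cast
    ring
  apply hshift.of_nonneg_of_le (fun k => by positivity)
  intro k
  apply one_div_le_one_div_of_le (by positivity)
  apply pow_le_pow_left₀ (by positivity)
  linarith [Nat.cast_nonneg (α := ℝ) k]

lemma gSeq_abs_le (k : ℕ) :
    |gSeq k| ≤ π^2/32 * (1/(2*(k:ℝ)+1)^2) + (1/4) * (1/(2*(k:ℝ)+1)^4) := by
  have hpos : (0:ℝ) < 2*(k:ℝ)+1 := by positivity
  have habs : ∀ p : ℕ, |((-1:ℝ))^k/(2*(k:ℝ)+1)^p| = 1/(2*(k:ℝ)+1)^p := by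
    intro p
    rw [abs_div, abs_pow, abs_neg, abs_one, one_pow, abs_pow, abs_of_pos hpos]
  calc |gSeq k| ≤ |(π^2/32) * ((-1)^k/(2*(k:ℝ)+1)^2)| + |(1/4)*((-1)^k/(2*(k:ℝ)+1)^4)| :=
        abs_sub _ _
    _ = π^2/32 * (1/(2*(k:ℝ)+1)^2) + (1/4) * (1/(2*(k:ℝ)+1)^4) := by
        rw [abs_mul, abs_mul, habs 2, habs 4, abs_of_pos (by positivity : (0:ℝ) < π^2/32),
          abs_of_pos (by norm_num : (0:ℝ) < (1:ℝ)/4)]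

lemma summable_gBound :
    Summable (fun k : ℕ => π^2/32 * (1/(2*(k:ℝ)+1)^2) + (1/4) * (1/(2*(k:ℝ)+1)^4)) :=
  ((summable_inv_two_mul_add_one_pow (by norm_num : 2 ≤ 2)).mul_left _).add
    ((summable_inv_two_mul_add_one_pow (by norm_num : 2 ≤ 4)).mul_left _)

lemma num_pos' {r c : ℝ} (hr0 : 0 ≤ r) (hr1 : r < 1) (hc : -1 ≤ c) : 0 < 1+2*r*c+r^2 := by
  have h1 : 0 < (1-r)^2 := by nlinarith
  nlinarith [mul_nonneg hr0 (show 0 ≤ c+1 by linarith)]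

lemma denom_pos' {r c : ℝ} (hr0 : 0 ≤ r) (hr1 : r < 1) (hc : c ≤ 1) : 0 < 1-2*r*c+r^2 := by
  have h1 : 0 < (1-r)^2 := by nlinarith
  nlinarith [mul_nonneg hr0 (show 0 ≤ 1-c by linarith)]

lemma key_sum_eq :
    ∫ θ in Ioc (0:ℝ) (π/4), θ^2 * (-(1/2) * Real.log (Real.tan θ))
      = ∑' k : ℕ, gSeq k := by
  have hpi4 : (0:ℝ) < π/4 := by linarith [Real.pi_pos]
  have hpi41 : π/4 ≤ 1 := by nlinarith [Real.pi_le_four]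
  set rr : ℕ → ℝ := fun n => 1 - 1/((n:ℝ)+1) with hrr
  have hr0 : ∀ n, 0 ≤ rr n := by
    intro n
    have : 1/((n:ℝ)+1) ≤ 1 := by
      rw [div_le_one (by positivity)]
      linarith [Nat.cast_nonneg (α := ℝ) n]
    simp only [hrr]; linarith
  have hr1 : ∀ n, rr n < 1 := by
    intro n
    have : 0 < 1/((n:ℝ)+1) := by positivity
    simp only [hrr]; linarith
  have hrlim : Tendsto rr atTop (𝓝 1) := by
    have h1 := tendsto_one_div_add_atTop_nhds_zero_nat (𝕜 := ℝ)
    have h2 : Tendsto (fun n : ℕ => 1 - 1/((n:ℝ)+1)) atTop (𝓝 (1 - 0)) :=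
      tendsto_const_nhds.sub h1
    rw [hrr]
    simpa using h2
  -- Step A
  have stepA : ∀ n : ℕ, HasSum (fun k : ℕ => (rr n)^(2*k+1) * gSeq k)
      (∫ θ in Ioc (0:ℝ) (π/4), θ^2 * phiFun (rr n) θ) := by
    intro n
    set r := rr n with hrdef
    have hr0' : 0 ≤ r := hr0 n
    have hr1' : r < 1 := hr1 n
    set F : ℕ → ℝ → ℝ :=
      fun k θ => θ^2 * (r ^ (2*k+1) * Real.cos ((4*(k:ℝ)+2)*θ) / (2*(k:ℝ)+1)) with hF
    have hFcont : ∀ k, Continuous (F k) := by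
      intro k
      apply (continuous_pow 2).mul
      apply Continuous.div_const
      exact continuous_const.mul (Real.continuous_cos.comp (continuous_const.mul continuous_id))
    have hF_int : ∀ k, Integrable (F k) (volume.restrict (Ioc (0:ℝ) (π/4))) := fun k =>
      (hFcont k).integrableOn_Ioc
    have hbound : ∀ k, ∀ θ ∈ Ioc (0:ℝ) (π/4), ‖F k θ‖ ≤ r^(2*k+1) := by
      intro k θ hθ
      have hk : (0:ℝ) < 2*(k:ℝ)+1 := by positivity
      have h1 : θ^2 ≤ 1 := by nlinarith [hθ.1, hθ.2]
      have h2 : |Real.cos ((4*(k:ℝ)+2)*θ)| ≤ 1 := Real.abs_cos_le_one _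
      have hrm : (0:ℝ) ≤ r^(2*k+1) := pow_nonneg hr0' _
      rw [Real.norm_eq_abs, hF]
      simp only []
      rw [abs_mul, abs_of_nonneg (sq_nonneg θ), abs_div, abs_mul,
        abs_of_nonneg hrm, abs_of_pos hk]
      have hinner : r^(2*k+1) * |Real.cos ((4*(k:ℝ)+2)*θ)| / (2*(k:ℝ)+1) ≤ r^(2*k+1) := by
        rw [div_le_iff₀ hk]
        nlinarith [abs_nonneg (Real.cos ((4*(k:ℝ)+2)*θ))]
      calc θ^2 * (r^(2*k+1) * |Real.cos ((4*(k:ℝ)+2)*θ)| / (2*(k:ℝ)+1))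
          ≤ 1 * (r^(2*k+1) * |Real.cos ((4*(k:ℝ)+2)*θ)| / (2*(k:ℝ)+1)) := by
            apply mul_le_mul_of_nonneg_right h1
            positivity
        _ = r^(2*k+1) * |Real.cos ((4*(k:ℝ)+2)*θ)| / (2*(k:ℝ)+1) := one_mul _
        _ ≤ r^(2*k+1) := hinner
    have hSumGeom : Summable (fun k : ℕ => (π/4) * r^(2*k+1)) := by
      have hgeom : Summable (fun k : ℕ => (r^2)^k) :=
        summable_geometric_of_lt_one (by positivity) (by nlinarith)
      apply ((hgeom.mul_left ((π/4)*r))).congr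
      intro k
      rw [pow_succ r (2*k), pow_mul r 2 k]
      ring
    have hSum : Summable (fun k => ∫ θ in Ioc (0:ℝ) (π/4), ‖F k θ‖) := by
      apply hSumGeom.of_nonneg_of_le
        (fun k => integral_nonneg (fun θ => norm_nonneg _))
      intro k
      have hmono := setIntegral_mono_on ((hF_int k).norm)
        (integrableOn_const measure_Ioc_lt_top.ne)
        measurableSet_Ioc (hbound k)
      calc (∫ θ in Ioc (0:ℝ) (π/4), ‖F k θ‖) ≤ ∫ _ in Ioc (0:ℝ) (π/4), r^(2*k+1) := hmono
        _ = (π/4) * r^(2*k+1) := by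
            rw [setIntegral_const, measureReal_def, Real.volume_Ioc, smul_eq_mul]
            rw [ENNReal.toReal_ofReal (by linarith)]
            norm_num
    have hkey := hasSum_integral_of_summable_integral_norm hF_int hSum
    have htsum : (fun θ => ∑' k, F k θ) = fun θ => θ^2 * phiFun r θ := by
      funext θ
      exact ((hasSum_phiFun r θ hr0' hr1').mul_left (θ^2)).tsum_eq
    rw [htsum] at hkey
    have hIval : ∀ k, (∫ θ in Ioc (0:ℝ) (π/4), F k θ) = r^(2*k+1) * gSeq k := by
      intro k
      have hstep : (∫ θ in Ioc (0:ℝ) (π/4), F k θ)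
          = ∫ θ in Ioc (0:ℝ) (π/4),
              (r^(2*k+1)/(2*(k:ℝ)+1)) * (θ^2 * Real.cos ((4*(k:ℝ)+2)*θ)) := by
        apply MeasureTheory.integral_congr_ae
        filter_upwards with θ
        simp only [hF]
        ring
      rw [hstep, MeasureTheory.integral_const_mul, ← intervalIntegral.integral_of_le hpi4.le, Tk, gSeq]
      have h2k : (2*(k:ℝ)+1) ≠ 0 := by positivity
      have h4k : (4*(k:ℝ)+2) ≠ 0 := by positivity
      field_simp
      ring
    rw [show (∫ θ in Ioc (0:ℝ) (π/4), F · θ) = fun k => (∫ θ in Ioc (0:ℝ) (π/4), F k θ)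
      from rfl, funext hIval] at hkey
    exact hkey
  -- Step B : integral convergence
  have stepB : Tendsto (fun n => ∫ θ in Ioc (0:ℝ) (π/4), θ^2 * phiFun (rr n) θ) atTop
      (𝓝 (∫ θ in Ioc (0:ℝ) (π/4), θ^2 * (-(1/2) * Real.log (Real.tan θ)))) := by
    apply tendsto_integral_of_dominated_convergence
      (bound := fun θ => θ^2 * (-(1/2) * Real.log (Real.tan θ)))
    · intro n
      apply Continuous.aestronglyMeasurable
      apply (continuous_pow 2).mul
      have hcc : Continuous (fun θ : ℝ => 2*(rr n)*Real.cos (2*θ)) :=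
        continuous_const.mul (Real.continuous_cos.comp (continuous_const.mul continuous_id))
      have hc1 : Continuous (fun θ : ℝ => 1+2*(rr n)*Real.cos (2*θ)+(rr n)^2) :=
        (continuous_const.add hcc).add continuous_const
      have hc2 : Continuous (fun θ : ℝ => 1-2*(rr n)*Real.cos (2*θ)+(rr n)^2) :=
        (continuous_const.sub hcc).add continuous_const
      apply Continuous.div_const
      apply Continuous.sub
      · apply Continuous.log hc1
        intro θ
        exact (num_pos' (hr0 n) (hr1 n) (Real.neg_one_le_cos (2*θ))).ne'
      · apply Continuous.log hc2
        intro θ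
        exact (denom_pos' (hr0 n) (hr1 n) (Real.cos_le_one (2*θ))).ne'
    · have : (fun θ : ℝ => θ^2 * (-(1/2) * Real.log (Real.tan θ)))
          = fun θ : ℝ => (-(1/2)) * (θ^2 * Real.log (Real.tan θ)) := by
        funext θ; ring
      rw [this]
      exact (integrableOn_sq_log_tan.const_mul _)
    · intro n
      rw [ae_restrict_iff' measurableSet_Ioc]
      filter_upwards with θ hθ
      rw [Real.norm_eq_abs, abs_mul, abs_of_nonneg (sq_nonneg θ),
        abs_of_nonneg (phi_nonneg (hr0 n) hθ), ← phi_one_eq hθ]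
      exact mul_le_mul_of_nonneg_left (phi_le (hr0 n) (hr1 n).le hθ) (sq_nonneg θ)
    · rw [ae_restrict_iff' measurableSet_Ioc]
      filter_upwards with θ hθ
      obtain ⟨hc0, hc1⟩ := cos_facts hθ
      have hcontAt : ContinuousAt (fun s : ℝ => phiFun s θ) 1 := by
        have hA1 : (0:ℝ) < 1 + 2*1*Real.cos (2*θ) + 1^2 := num_pos zero_le_one hc0
        have hB1 : (0:ℝ) < 1 - 2*1*Real.cos (2*θ) + 1^2 := denom_pos zero_le_one hc1
        have hX : ContinuousAt (fun s : ℝ => 1 + 2*s*Real.cos (2*θ) + s^2) 1 :=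
          Continuous.continuousAt ((continuous_const.add ((continuous_const.mul
            continuous_id).mul continuous_const)).add (continuous_pow 2))
        have hY : ContinuousAt (fun s : ℝ => 1 - 2*s*Real.cos (2*θ) + s^2) 1 :=
          Continuous.continuousAt ((continuous_const.sub ((continuous_const.mul
            continuous_id).mul continuous_const)).add (continuous_pow 2))
        have hXl : ContinuousAt (fun s : ℝ => Real.log (1 + 2*s*Real.cos (2*θ) + s^2)) 1 :=
          hX.log (by simpa using hA1.ne')
        have hYl : ContinuousAt (fun s : ℝ => Real.log (1 - 2*s*Real.cos (2*θ) + s^2)) 1 :=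
          hY.log (by simpa using hB1.ne')
        simp only [phiFun]
        exact (hXl.sub hYl).div_const 4
      have := (hcontAt.tendsto.comp hrlim)
      rw [phi_one_eq hθ] at this
      exact this.const_mul (θ^2)
  -- Step C : sum convergence
  have stepC : Tendsto (fun n => ∑' k, (rr n)^(2*k+1) * gSeq k) atTop
      (𝓝 (∑' k, gSeq k)) := by
    apply tendsto_tsum_of_dominated_convergence
      (bound := fun k : ℕ => π^2/32 * (1/(2*(k:ℝ)+1)^2) + (1/4) * (1/(2*(k:ℝ)+1)^4))
      summable_gBound
    · intro k
      have h1 : Tendsto (fun n => (rr n)^(2*k+1)) atTop (𝓝 1) := by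
        have := ((continuous_pow (2*k+1)).tendsto (1:ℝ)).comp hrlim
        rwa [one_pow] at this
      have := h1.mul_const (gSeq k)
      rwa [one_mul] at this
    · filter_upwards with n k
      rw [Real.norm_eq_abs, abs_mul, abs_pow, abs_of_nonneg (hr0 n)]
      calc (rr n)^(2*k+1) * |gSeq k| ≤ 1 * |gSeq k| := by
            apply mul_le_mul_of_nonneg_right ?_ (abs_nonneg _)
            exact pow_le_one₀ (hr0 n) (hr1 n).le
        _ = |gSeq k| := one_mul _
        _ ≤ _ := gSeq_abs_le k
  have hlhs : (fun n => ∫ θ in Ioc (0:ℝ) (π/4), θ^2 * phiFun (rr n) θ)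
      = fun n => ∑' k, (rr n)^(2*k+1) * gSeq k :=
    funext fun n => ((stepA n).tsum_eq).symm
  rw [hlhs] at stepB
  exact tendsto_nhds_unique stepB stepC


lemma summable_alt (p : ℕ) (hp : 2 ≤ p) :
    Summable (fun k : ℕ => ((-1:ℝ))^k/(2*(k:ℝ)+1)^p) := by
  apply Summable.of_abs
  have heq : (fun k : ℕ => |((-1:ℝ))^k/(2*(k:ℝ)+1)^p|) = fun k : ℕ => 1/(2*(k:ℝ)+1)^p := by
    funext k
    rw [abs_div, abs_pow, abs_neg, abs_one, one_pow, abs_pow,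
      abs_of_pos (by positivity : (0:ℝ) < 2*(k:ℝ)+1)]
  rw [heq]
  exact summable_inv_two_mul_add_one_pow hp

lemma tsum_gSeq : ∑' k : ℕ, gSeq k = π^2/32 * catalanConst - 1/4 * beta4 := by
  have h2 := (summable_alt 2 (by norm_num)).mul_left (π^2/32)
  have h4 := (summable_alt 4 (by norm_num)).mul_left ((1:ℝ)/4)
  have : ∑' k : ℕ, gSeq k
      = (∑' k : ℕ, (π^2/32) * (((-1:ℝ))^k/(2*(k:ℝ)+1)^2))
        - ∑' k : ℕ, (1/4) * (((-1:ℝ))^k/(2*(k:ℝ)+1)^4) := by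
    rw [← Summable.tsum_sub h2 h4]
    exact tsum_congr (fun k => rfl)
  rw [this, tsum_mul_left, tsum_mul_left, catalanConst, beta4]

lemma zeta2_eq : zeta2 = π^2/6 := by
  have hz := hasSum_zeta_two
  have hs := hz.summable
  have := Summable.tsum_eq_zero_add hs
  rw [show (1:ℝ)/((0:ℕ):ℝ)^2 = 0 by norm_num, zero_add, hz.tsum_eq] at this
  rw [zeta2]
  rw [show (fun n : ℕ => 1/((n:ℝ)+1)^2) = fun n : ℕ => (1:ℝ)/((n+1:ℕ):ℝ)^2 by
    funext n; push_cast; ring]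
  exact this.symm

theorem arctan_cube_div_x_integral :
    ∫ x in (0:ℝ)..1, Real.arctan x ^ 3 / x
      = (9/8) * zeta2 * catalanConst - (3/2) * beta4 := by
  have hpi4 : (0:ℝ) < π/4 := by linarith [Real.pi_pos]
  rw [subst_step, ftc_step]
  have h1 : ∫ θ in (0:ℝ)..(π/4), θ^2 * Real.log (Real.tan θ)
      = ∫ θ in Ioc (0:ℝ) (π/4), θ^2 * Real.log (Real.tan θ) :=
    intervalIntegral.integral_of_le hpi4.le
  have h2 : ∫ θ in Ioc (0:ℝ) (π/4), θ^2 * (-(1/2) * Real.log (Real.tan θ))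
      = -(1/2) * ∫ θ in Ioc (0:ℝ) (π/4), θ^2 * Real.log (Real.tan θ) := by
    rw [show (fun θ : ℝ => θ^2 * (-(1/2) * Real.log (Real.tan θ)))
      = fun θ : ℝ => -(1/2) * (θ^2 * Real.log (Real.tan θ)) from funext (fun θ => by ring)]
    exact MeasureTheory.integral_const_mul _ _
  have h3 := key_sum_eq
  rw [h2] at h3
  rw [h1]
  rw [show (∫ θ in Ioc (0:ℝ) (π/4), θ^2 * Real.log (Real.tan θ)) = -2 * ∑' k : ℕ, gSeq k by
    linarith [h3]]
  rw [tsum_gSeq, zeta2_eq]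
  ring
end

section
/- The integral from 0 to 1 of arctan(x)⁴/x dx equals (93/32)·ζ(5) − (3/2)·π·β(4) + (1/16)·π³·G. -/
open Real

/-- `ζ(5) = ∑_{n≥1} 1/n⁵`. -/
noncomputable def zeta5 : ℝ := ∑' n : ℕ, 1 / ((n : ℝ) + 1) ^ 5

noncomputable def hh (s : ℝ) : ℝ := s^4 / Real.sin s
noncomputable def hh' (s : ℝ) : ℝ := 4*s^3 / Real.sin s - s^4 * Real.cos s / (Real.sin s)^2

lemma sin_lower {s : ℝ} (h0 : 0 < s) (h1 : s ≤ 1) : 3/4 * s ≤ Real.sin s := by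
  have h2 := Real.sin_gt_sub_cube h0
  nlinarith [sq_nonneg s, sq_nonneg (1-s)]

lemma abs_sin_lower {s : ℝ} (h0 : s ≠ 0) (h1 : |s| ≤ 1) : 3/4 * |s| ≤ |Real.sin s| := by
  wlog h : 0 < s generalizing s
  · have hneg : 0 < -s := by
      rcases h0.lt_or_gt with h' | h'
      · linarith
      · exact absurd h' h
    have := this (s := -s) (by simpa using h0) (by simpa using h1) hneg
    simpa using this
  · rw [abs_of_pos h, abs_of_pos (Real.sin_pos_of_pos_of_lt_pi h
      (by nlinarith [Real.pi_gt_three, (abs_of_pos h ▸ h1 : s ≤ 1)]))]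
    exact sin_lower h (by rwa [abs_of_pos h] at h1)

lemma sin_ne_zero_of_Icc {s : ℝ} (h1 : 0 < s) (h2 : s ≤ π/2) : Real.sin s ≠ 0 :=
  ne_of_gt (Real.sin_pos_of_pos_of_lt_pi h1 (by linarith [Real.pi_pos]))

lemma hh_bound {s : ℝ} (h1 : |s| ≤ 1) : |hh s| ≤ 4/3 * |s|^3 := by
  rcases eq_or_ne s 0 with rfl | h0
  · simp [hh]
  · have hs := abs_sin_lower h0 h1
    have habs : |s| > 0 := abs_pos.mpr h0
    have hsin : |Real.sin s| > 0 := lt_of_lt_of_le (by positivity) hs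
    rw [hh, abs_div, abs_pow]
    rw [div_le_iff₀ hsin]
    calc |s|^4 = (4/3 * |s|^3) * (3/4 * |s|) := by ring
    _ ≤ (4/3 * |s|^3) * |Real.sin s| := by
        apply mul_le_mul_of_nonneg_left hs (by positivity)

lemma slope_bound {s : ℝ} (h1 : |s| ≤ 1) : |s^3 / Real.sin s| ≤ 4/3 * |s|^2 := by
  rcases eq_or_ne s 0 with rfl | h0
  · simp
  · have hs := abs_sin_lower h0 h1
    have habs : |s| > 0 := abs_pos.mpr h0
    have hsin : |Real.sin s| > 0 := lt_of_lt_of_le (by positivity) hs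
    rw [abs_div, abs_pow, div_le_iff₀ hsin]
    calc |s|^3 = (4/3 * |s|^2) * (3/4 * |s|) := by ring
    _ ≤ (4/3 * |s|^2) * |Real.sin s| := by
        apply mul_le_mul_of_nonneg_left hs (by positivity)

lemma hh'_bound {s : ℝ} (h1 : |s| ≤ 1) : |hh' s| ≤ 8 * |s|^2 := by
  rcases eq_or_ne s 0 with rfl | h0
  · simp [hh']
  · have hs := abs_sin_lower h0 h1
    have habs : |s| > 0 := abs_pos.mpr h0
    have hsin : |Real.sin s| > 0 := lt_of_lt_of_le (by positivity) hs
    have b1 : |4*s^3 / Real.sin s| ≤ 16/3 * |s|^2 := by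
      rw [abs_div, div_le_iff₀ (by positivity)]
      calc |4*s^3| = 4 * |s|^3 := by rw [abs_mul, abs_pow]; norm_num
      _ = (16/3 * |s|^2) * (3/4 * |s|) := by ring
      _ ≤ (16/3 * |s|^2) * |Real.sin s| := mul_le_mul_of_nonneg_left hs (by positivity)
    have b2 : |s^4 * Real.cos s / (Real.sin s)^2| ≤ 16/9 * |s|^2 := by
      rw [abs_div, div_le_iff₀ (abs_pos.mpr (pow_ne_zero 2 (abs_pos.mp hsin))), abs_mul, abs_pow, abs_pow]
      have hc : |Real.cos s| ≤ 1 := Real.abs_cos_le_one s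
      calc |s|^4 * |Real.cos s| ≤ |s|^4 * 1 := mul_le_mul_of_nonneg_left hc (by positivity)
      _ = (16/9 * |s|^2) * (3/4*|s|)^2 := by ring
      _ ≤ (16/9 * |s|^2) * |Real.sin s|^2 := by
          apply mul_le_mul_of_nonneg_left _ (by positivity)
          exact pow_le_pow_left₀ (by positivity) hs 2
    calc |hh' s| ≤ |4*s^3 / Real.sin s| + |s^4 * Real.cos s / (Real.sin s)^2| := abs_sub _ _
    _ ≤ 16/3 * |s|^2 + 16/9 * |s|^2 := add_le_add b1 b2
    _ ≤ 8 * |s|^2 := by nlinarith [sq_nonneg s, sq_abs s]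

lemma tendsto_cube_abs : Filter.Tendsto (fun s : ℝ => 4/3 * |s|^3) (nhds 0) (nhds 0) := by
  have : Filter.Tendsto (fun s : ℝ => 4/3 * |s|^3) (nhds 0) (nhds (4/3 * |(0:ℝ)|^3)) := by
    apply Filter.Tendsto.const_mul
    exact ((continuous_abs.pow 3).tendsto 0)
  simpa using this

lemma hh_cont0 : ContinuousAt hh 0 := by
  have h0 : hh 0 = 0 := by simp [hh]
  rw [ContinuousAt, h0]
  refine squeeze_zero_norm' ?_ tendsto_cube_abs
  have : ∀ᶠ s : ℝ in nhds 0, |s| ≤ 1 := by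
    have := Metric.ball_mem_nhds (0:ℝ) one_pos
    filter_upwards [this] with s hs
    rw [← Real.norm_eq_abs]; exact (mem_ball_zero_iff.mp hs).le
  filter_upwards [this] with s hs
  simpa using hh_bound hs

lemma hh'_cont0 : ContinuousAt hh' 0 := by
  have h0 : hh' 0 = 0 := by simp [hh']
  rw [ContinuousAt, h0]
  have htend : Filter.Tendsto (fun s : ℝ => 8 * |s|^2) (nhds 0) (nhds 0) := by
    have : Filter.Tendsto (fun s : ℝ => 8 * |s|^2) (nhds 0) (nhds (8 * |(0:ℝ)|^2)) :=
      Filter.Tendsto.const_mul _ ((continuous_abs.pow 2).tendsto 0)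
    simpa using this
  refine squeeze_zero_norm' ?_ htend
  have : ∀ᶠ s : ℝ in nhds 0, |s| ≤ 1 := by
    filter_upwards [Metric.ball_mem_nhds (0:ℝ) one_pos] with s hs
    rw [← Real.norm_eq_abs]; exact (mem_ball_zero_iff.mp hs).le
  filter_upwards [this] with s hs
  simpa using hh'_bound hs

lemma hh_contOn : ContinuousOn hh (Set.Icc 0 (π/2)) := by
  intro s hs
  rcases eq_or_lt_of_le hs.1 with rfl | hpos
  · exact hh_cont0.continuousWithinAt
  · apply ContinuousAt.continuousWithinAt
    exact ((continuous_pow 4).continuousAt).div (Real.continuous_sin.continuousAt)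
      (sin_ne_zero_of_Icc hpos hs.2)

lemma hh'_contOn : ContinuousOn hh' (Set.Icc 0 (π/2)) := by
  intro s hs
  rcases eq_or_lt_of_le hs.1 with rfl | hpos
  · exact hh'_cont0.continuousWithinAt
  · apply ContinuousAt.continuousWithinAt
    have hsin := sin_ne_zero_of_Icc hpos hs.2
    apply ContinuousAt.sub
    · exact ((continuous_const.mul (continuous_pow 3)).continuousAt).div
        Real.continuous_sin.continuousAt hsin
    · exact (((continuous_pow 4).mul Real.continuous_cos).continuousAt).div
        ((Real.continuous_sin.pow 2).continuousAt) (pow_ne_zero 2 hsin)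

lemma hh_deriv {s : ℝ} (hs : s ∈ Set.Icc (0:ℝ) (π/2)) : HasDerivAt hh (hh' s) s := by
  rcases eq_or_lt_of_le hs.1 with rfl | hpos
  · have h0 : hh' 0 = 0 := by simp [hh']
    rw [h0]
    rw [hasDerivAt_iff_tendsto_slope]
    have hslope : ∀ t : ℝ, t ≠ 0 → slope hh 0 t = t^3 / Real.sin t := by
      intro t ht
      rw [slope_def_field]
      simp only [hh, Real.sin_zero]
      rcases eq_or_ne (Real.sin t) 0 with hst | hst
      · simp [hst]
      · field_simp
        ring
    have htend : Filter.Tendsto (fun t : ℝ => 4/3 * |t|^2) (nhdsWithin 0 {(0:ℝ)}ᶜ) (nhds 0) := by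
      have : Filter.Tendsto (fun t : ℝ => 4/3 * |t|^2) (nhds 0) (nhds (4/3 * |(0:ℝ)|^2)) :=
        Filter.Tendsto.const_mul _ ((continuous_abs.pow 2).tendsto 0)
      have h2 : Filter.Tendsto (fun t : ℝ => 4/3 * |t|^2) (nhds 0) (nhds 0) := by simpa using this
      exact h2.mono_left nhdsWithin_le_nhds
    refine squeeze_zero_norm' ?_ htend
    have : ∀ᶠ t : ℝ in nhdsWithin 0 {(0:ℝ)}ᶜ, |t| ≤ 1 ∧ t ≠ 0 := by
      apply Filter.eventually_inf_principal.mpr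
      filter_upwards [Metric.ball_mem_nhds (0:ℝ) one_pos] with t ht ht'
      exact ⟨by rw [← Real.norm_eq_abs]; exact (mem_ball_zero_iff.mp ht).le, ht'⟩
    filter_upwards [this] with t ⟨ht1, ht0⟩
    rw [hslope t ht0, Real.norm_eq_abs]
    exact slope_bound ht1
  · have hsin := sin_ne_zero_of_Icc hpos hs.2
    have hd : HasDerivAt (fun t => t^4 / Real.sin t)
        ((4*s^3 * Real.sin s - s^4 * Real.cos s) / (Real.sin s)^2) s := by
      have h1 : HasDerivAt (fun t : ℝ => t^4) (4*s^3) s := by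
        simpa using hasDerivAt_pow 4 s
      exact h1.div (Real.hasDerivAt_sin s) hsin
    convert hd using 1
    · rfl
    rw [hh']
    field_simp

lemma cos_nat_pi (n : ℕ) : Real.cos (n * π) = (-1)^n := by
  induction n with
  | zero => simp
  | succ k ih => push_cast; rw [add_mul, one_mul, Real.cos_add_pi, ih]; ring

lemma term_integral (k : ℕ) :
    ∫ s in (0:ℝ)..(π/2), s^4 * Real.sin ((2*(k:ℝ)+1)*s)
      = (-1:ℝ)^k * (π^3/(2*(2*(k:ℝ)+1)^2) - 12*π/(2*(k:ℝ)+1)^4) + 24/(2*(k:ℝ)+1)^5 := by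
  set m : ℝ := 2*(k:ℝ)+1 with hm_def
  have hm : m ≠ 0 := by positivity
  set F : ℝ → ℝ := fun s => (-s^4/m + 12*s^2/m^3 - 24/m^5) * Real.cos (m*s)
      + (4*s^3/m^2 - 24*s/m^4) * Real.sin (m*s) with hF_def
  have hF : ∀ s : ℝ, HasDerivAt F (s^4 * Real.sin (m*s)) s := by
    intro s
    have hd : HasDerivAt (fun s : ℝ => m*s) m s := by
      simpa using (hasDerivAt_id s).const_mul m
    have hcos : HasDerivAt (fun s : ℝ => Real.cos (m*s)) (-Real.sin (m*s) * m) s := hd.cos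
    have hsin : HasDerivAt (fun s : ℝ => Real.sin (m*s)) (Real.cos (m*s) * m) s := hd.sin
    have h1 : HasDerivAt (fun s : ℝ => -s^4/m + 12*s^2/m^3 - 24/m^5)
        (-(4*s^3)/m + 12*(2*s)/m^3 - 0) s := by
      apply HasDerivAt.sub _ (hasDerivAt_const _ _)
      apply HasDerivAt.add
      · exact ((hasDerivAt_pow 4 s).neg.div_const m).congr_deriv (by norm_num)
      · exact (((hasDerivAt_pow 2 s).const_mul 12).div_const (m^3)).congr_deriv (by norm_num)
    have h2 : HasDerivAt (fun s : ℝ => 4*s^3 - 24*s) (4*(3*s^2) - 24) s := by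
      apply HasDerivAt.sub
      · exact ((hasDerivAt_pow 3 s).const_mul 4).congr_deriv (by norm_num)
      · simpa using (hasDerivAt_id s).const_mul 24
    have h2' : HasDerivAt (fun s : ℝ => 4*s^3/m^2 - 24*s/m^4)
        (4*(3*s^2)/m^2 - 24/m^4) s := by
      apply HasDerivAt.sub
      · exact (((hasDerivAt_pow 3 s).const_mul 4).div_const (m^2)).congr_deriv (by ring)
      · simpa using ((hasDerivAt_id s).const_mul 24).div_const (m^4)
    have := (h1.mul hcos).add (h2'.mul hsin)
    refine HasDerivAt.congr_deriv this ?_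
    field_simp
    ring
  rw [intervalIntegral.integral_eq_sub_of_hasDerivAt (fun s _ => hF s)
    (((continuous_pow 4).mul ((Real.continuous_sin.comp (continuous_const.mul continuous_id)))).intervalIntegrable 0 (π/2))]
  have harg : m * (π/2) = (k:ℝ)*π + π/2 := by rw [hm_def]; ring
  have hcos_val : Real.cos (m * (π/2)) = 0 := by
    rw [harg, Real.cos_add, Real.cos_pi_div_two, Real.sin_pi_div_two, Real.sin_nat_mul_pi]; ring
  have hsin_val : Real.sin (m * (π/2)) = (-1)^k := by
    rw [harg, Real.sin_add, Real.cos_pi_div_two, Real.sin_pi_div_two, Real.sin_nat_mul_pi,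
      cos_nat_pi]; ring
  rw [hF_def]
  simp only [hcos_val, hsin_val, mul_zero, Real.cos_zero, Real.sin_zero]
  field_simp
  ring

lemma sum_sin_mul (N : ℕ) (s : ℝ) :
    (∑ k ∈ Finset.range N, 2 * Real.sin ((2*(k:ℝ)+1)*s)) * Real.sin s
      = 1 - Real.cos (2*(N:ℝ)*s) := by
  induction N with
  | zero => simp
  | succ n ih =>
    rw [Finset.sum_range_succ, add_mul, ih]
    have e1 : (2*((n:ℝ)+1))*s = 2*(n:ℝ)*s + 2*s := by ring
    have e2 : (2*(n:ℝ)+1)*s = 2*(n:ℝ)*s + s := by ring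
    push_cast
    rw [e1, e2, Real.cos_add, Real.sin_add, Real.cos_two_mul, Real.sin_two_mul]
    linear_combination 2 * Real.cos (2*(n:ℝ)*s) * Real.sin_sq_add_cos_sq s

lemma ptwise (N : ℕ) {s : ℝ} (hs : s ∈ Set.Icc (0:ℝ) (π/2)) :
    hh s - ∑ k ∈ Finset.range N, 2 * s^4 * Real.sin ((2*(k:ℝ)+1)*s)
      = hh s * Real.cos (2*(N:ℝ)*s) := by
  rcases eq_or_lt_of_le hs.1 with rfl | hpos
  · simp [hh]
  · have hsin := sin_ne_zero_of_Icc hpos hs.2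
    have hid := sum_sin_mul N s
    have hsum : ∑ k ∈ Finset.range N, 2 * s^4 * Real.sin ((2*(k:ℝ)+1)*s)
        = s^4 * ∑ k ∈ Finset.range N, 2 * Real.sin ((2*(k:ℝ)+1)*s) := by
      rw [Finset.mul_sum]; exact Finset.sum_congr rfl (fun k _ => by ring)
    rw [hsum, hh]
    have hc : Real.cos (2*(N:ℝ)*s) = 1 - (∑ k ∈ Finset.range N, 2 * Real.sin ((2*(k:ℝ)+1)*s)) * Real.sin s := by linarith [hid]
    rw [hc]
    field_simp

lemma pi2_nonneg : (0:ℝ) ≤ π/2 := by positivity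

lemma uIcc_eq : Set.uIcc (0:ℝ) (π/2) = Set.Icc 0 (π/2) := Set.uIcc_of_le pi2_nonneg

lemma hh_intble : IntervalIntegrable hh MeasureTheory.volume 0 (π/2) :=
  (uIcc_eq ▸ hh_contOn).intervalIntegrable

lemma hh'_intble : IntervalIntegrable hh' MeasureTheory.volume 0 (π/2) :=
  (uIcc_eq ▸ hh'_contOn).intervalIntegrable

lemma cont_term (k : ℕ) : Continuous (fun s : ℝ => 2 * s^4 * Real.sin ((2*(k:ℝ)+1)*s)) := by
  continuity

lemma J_sub (N : ℕ) :
    (∫ s in (0:ℝ)..(π/2), hh s)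
      - ∑ k ∈ Finset.range N, (2 * ∫ s in (0:ℝ)..(π/2), s^4 * Real.sin ((2*(k:ℝ)+1)*s))
      = ∫ s in (0:ℝ)..(π/2), hh s * Real.cos (2*(N:ℝ)*s) := by
  have hsum : ∑ k ∈ Finset.range N, (2 * ∫ s in (0:ℝ)..(π/2), s^4 * Real.sin ((2*(k:ℝ)+1)*s))
      = ∫ s in (0:ℝ)..(π/2), ∑ k ∈ Finset.range N, 2 * s^4 * Real.sin ((2*(k:ℝ)+1)*s) := by
    rw [intervalIntegral.integral_finset_sum
      (fun k _ => (cont_term k).intervalIntegrable 0 (π/2))]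
    apply Finset.sum_congr rfl
    intro k _
    rw [← intervalIntegral.integral_const_mul]
    apply intervalIntegral.integral_congr
    intro s _
    ring
  rw [hsum, ← intervalIntegral.integral_sub hh_intble]
  · apply intervalIntegral.integral_congr
    intro s hs
    exact ptwise N (uIcc_eq ▸ hs)
  · apply Continuous.intervalIntegrable
    apply continuous_finset_sum
    exact fun k _ => cont_term k

lemma RN_bound (N : ℕ) (hN : 1 ≤ N) :
    |∫ s in (0:ℝ)..(π/2), hh s * Real.cos (2*(N:ℝ)*s)|
      ≤ (∫ s in (0:ℝ)..(π/2), |hh' s|) / (2*(N:ℝ)) := by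
  have hNpos : (0:ℝ) < 2*(N:ℝ) := by positivity
  set v : ℝ → ℝ := fun s => Real.sin (2*(N:ℝ)*s) / (2*(N:ℝ)) with hv_def
  have hv : ∀ s : ℝ, HasDerivAt v (Real.cos (2*(N:ℝ)*s)) s := by
    intro s
    have hd : HasDerivAt (fun s : ℝ => 2*(N:ℝ)*s) (2*(N:ℝ)) s := by
      simpa using (hasDerivAt_id s).const_mul (2*(N:ℝ))
    exact (hd.sin.div_const (2*(N:ℝ))).congr_deriv (by field_simp)
  have hparts := intervalIntegral.integral_mul_deriv_eq_deriv_mul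
    (u := hh) (u' := hh') (v := v) (v' := fun s => Real.cos (2*(N:ℝ)*s))
    (fun s hs => hh_deriv (uIcc_eq ▸ hs)) (fun s _ => hv s) hh'_intble
    ((Real.continuous_cos.comp (continuous_const.mul continuous_id)).intervalIntegrable 0 (π/2))
  have hv_pi : v (π/2) = 0 := by
    rw [hv_def]
    simp only
    rw [show 2*(N:ℝ)*(π/2) = (N:ℝ)*π by ring, Real.sin_nat_mul_pi]
    simp
  have hh0 : hh 0 = 0 := by simp [hh]
  rw [hparts, hv_pi, hh0, mul_zero, zero_mul, sub_zero, zero_sub, abs_neg]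
  calc |∫ s in (0:ℝ)..(π/2), hh' s * v s|
      ≤ ∫ s in (0:ℝ)..(π/2), |hh' s * v s| :=
        intervalIntegral.abs_integral_le_integral_abs pi2_nonneg
    _ ≤ ∫ s in (0:ℝ)..(π/2), |hh' s| / (2*(N:ℝ)) := by
        apply intervalIntegral.integral_mono_on pi2_nonneg
        · exact (hh'_intble.mul_continuousOn
            ((Real.continuous_sin.comp (continuous_const.mul continuous_id)).div_const _).continuousOn).abs
        · exact (hh'_intble.abs.div_const _)
        · intro s _
          rw [abs_mul]
          apply mul_le_mul_of_nonneg_left _ (abs_nonneg _)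
          rw [hv_def]
          simp only
          rw [abs_div, abs_of_pos hNpos, ← one_div]
          gcongr
          exact Real.abs_sin_le_one _
    _ = (∫ s in (0:ℝ)..(π/2), |hh' s|) / (2*(N:ℝ)) := by
        rw [intervalIntegral.integral_div]

lemma summable_shift2 : Summable (fun k : ℕ => 1 / ((k:ℝ)+1)^2) := by
  have h := (summable_nat_add_iff 1).mpr (Real.summable_one_div_nat_pow.mpr one_lt_two)
  apply h.congr
  intro n
  push_cast
  ring

lemma summable_odd_pow {p : ℕ} (hp : 2 ≤ p) :
    Summable (fun k : ℕ => 1 / (2*(k:ℝ)+1)^p) := by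
  apply Summable.of_nonneg_of_le (fun k => by positivity) _ summable_shift2
  intro k
  have h1 : ((k:ℝ)+1)^2 ≤ (2*(k:ℝ)+1)^2 := by
    apply pow_le_pow_left₀ (by positivity)
    push_cast; linarith [Nat.cast_nonneg (α := ℝ) k]
  have h2 : (2*(k:ℝ)+1)^2 ≤ (2*(k:ℝ)+1)^p :=
    pow_le_pow_right₀ (by linarith [Nat.cast_nonneg (α := ℝ) k]) hp
  apply div_le_div_of_nonneg_left (by norm_num) (by positivity)
  linarith

lemma summable_alt_pow {p : ℕ} (hp : 2 ≤ p) :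
    Summable (fun k : ℕ => (-1:ℝ)^k / (2*(k:ℝ)+1)^p) := by
  apply Summable.of_norm
  apply (summable_odd_pow hp).congr
  intro k
  rw [Real.norm_eq_abs, abs_div, abs_pow, abs_neg, abs_one, one_pow, abs_of_pos (by positivity)]

lemma summable_f5 : Summable (fun n : ℕ => 1 / ((n:ℝ)+1)^5) := by
  have h := (summable_nat_add_iff 1).mpr (Real.summable_one_div_nat_pow.mpr (by norm_num : 1 < 5))
  apply h.congr
  intro n; push_cast; ring

lemma odd_pow5_eq : (∑' k : ℕ, 1 / (2*(k:ℝ)+1)^5) = 31/32 * zeta5 := by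
  set f : ℕ → ℝ := fun n => 1 / ((n:ℝ)+1)^5 with hf_def
  have hf : Summable f := summable_f5
  have he : Summable (fun k : ℕ => f (2*k)) := by
    apply (summable_odd_pow (by norm_num : (2:ℕ) ≤ 5)).congr
    intro k; simp only [hf_def]; push_cast; ring
  have ho : Summable (fun k : ℕ => f (2*k+1)) := by
    apply (hf.mul_left (1/32)).congr
    intro k; simp only [hf_def]; push_cast
    rw [mul_one_div, div_div]
    congr 1
    ring
  have key := tsum_even_add_odd he ho
  have h1 : (∑' k : ℕ, f (2*k)) = ∑' k : ℕ, 1 / (2*(k:ℝ)+1)^5 := by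
    apply tsum_congr; intro k; simp only [hf_def]; push_cast; ring_nf
  have h2 : (∑' k : ℕ, f (2*k+1)) = 1/32 * zeta5 := by
    have : (∑' k : ℕ, f (2*k+1)) = ∑' k : ℕ, 1/32 * f k := by
      apply tsum_congr; intro k; simp only [hf_def]; push_cast
      rw [mul_one_div, div_div]
      congr 1
      ring
    rw [this, tsum_mul_left]
    rw [show (∑' n : ℕ, f n) = zeta5 from rfl]
  have h3 : (∑' n : ℕ, f n) = zeta5 := rfl
  rw [h1, h2, h3] at key
  linarith

lemma J_eq : (∫ s in (0:ℝ)..(π/2), hh s)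
    = π^3 * catalanConst - 24*π*beta4 + 48*(31/32*zeta5) := by
  set t : ℕ → ℝ := fun k => 2 * ∫ s in (0:ℝ)..(π/2), s^4 * Real.sin ((2*(k:ℝ)+1)*s) with ht_def
  set L : ℝ := π^3 * catalanConst - 24*π*beta4 + 48*(∑' k : ℕ, 1 / (2*(k:ℝ)+1)^5) with hL_def
  have hhs : HasSum t L := by
    have h1 : HasSum (fun k : ℕ => (-1:ℝ)^k / (2*(k:ℝ)+1)^2) catalanConst :=
      (summable_alt_pow le_rfl).hasSum
    have h2 : HasSum (fun k : ℕ => (-1:ℝ)^k / (2*(k:ℝ)+1)^4) beta4 :=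
      (summable_alt_pow (by norm_num)).hasSum
    have h3 : HasSum (fun k : ℕ => 1 / (2*(k:ℝ)+1)^5) (∑' k : ℕ, 1 / (2*(k:ℝ)+1)^5) :=
      (summable_odd_pow (by norm_num)).hasSum
    have hcomb := ((h1.mul_left (π^3)).sub (h2.mul_left (24*π))).add (h3.mul_left 48)
    have hfun : (fun k : ℕ => π^3 * ((-1:ℝ)^k / (2*(k:ℝ)+1)^2)
        - 24*π * ((-1:ℝ)^k / (2*(k:ℝ)+1)^4) + 48 * (1 / (2*(k:ℝ)+1)^5)) = t := by
      funext k
      rw [ht_def]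
      simp only
      rw [term_integral k]
      have hm : (2*(k:ℝ)+1) ≠ 0 := by positivity
      field_simp
      ring
    rwa [hfun] at hcomb
  have hS : Filter.Tendsto (fun N => ∑ k ∈ Finset.range N, t k) Filter.atTop (nhds L) :=
    hhs.tendsto_sum_nat
  set K : ℝ := ∫ s in (0:ℝ)..(π/2), |hh' s| with hK_def
  have hR : Filter.Tendsto
      (fun N : ℕ => (∫ s in (0:ℝ)..(π/2), hh s) - ∑ k ∈ Finset.range N, t k)
      Filter.atTop (nhds 0) := by
    have hbound : Filter.Tendsto (fun N : ℕ => K / (2*(N:ℝ))) Filter.atTop (nhds 0) := by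
      have h := tendsto_const_div_atTop_nhds_zero_nat (K/2)
      apply h.congr
      intro n
      rw [div_div]
    apply squeeze_zero_norm' _ hbound
    filter_upwards [Filter.eventually_ge_atTop 1] with N hN
    rw [J_sub N, Real.norm_eq_abs]
    exact RN_bound N hN
  have hS' : Filter.Tendsto (fun N => ∑ k ∈ Finset.range N, t k) Filter.atTop
      (nhds ((∫ s in (0:ℝ)..(π/2), hh s) - 0)) := by
    have := (tendsto_const_nhds (x := ∫ s in (0:ℝ)..(π/2), hh s)
      (f := Filter.atTop (α := ℕ))).sub hR
    simpa using this
  have := tendsto_nhds_unique hS' (by simpa using hS)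
  rw [sub_zero] at this
  rw [this, hL_def, odd_pow5_eq]

lemma arctan_pos' {x : ℝ} (h : 0 < x) : 0 < Real.arctan x := by
  have := Real.arctan_strictMono h
  rwa [Real.arctan_zero] at this

lemma abs_arctan_le_abs (x : ℝ) : |Real.arctan x| ≤ |x| := by
  wlog h : 0 < x generalizing x
  · rcases eq_or_lt_of_le (not_lt.mp h) with rfl | hneg
    · simp
    · have := this (-x) (by linarith)
      rwa [Real.arctan_neg, abs_neg, abs_neg] at this
  · rw [abs_of_pos h, abs_of_pos (arctan_pos' h)]
    rcases lt_or_ge x (π/2) with hx | hx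
    · have hy : Real.arctan x < x := by
        conv_rhs => rw [← Real.tan_arctan x]
        exact Real.lt_tan (arctan_pos' h) (Real.arctan_lt_pi_div_two x)
      exact hy.le
    · exact le_trans (Real.arctan_lt_pi_div_two x).le hx

lemma g_cont : Continuous (fun x : ℝ => Real.arctan x ^ 4 / x) := by
  rw [continuous_iff_continuousAt]
  intro x
  rcases eq_or_ne x 0 with rfl | hx
  · have h0 : Real.arctan (0:ℝ) ^ 4 / (0:ℝ) = 0 := by simp
    rw [ContinuousAt, h0]
    have htend : Filter.Tendsto (fun x : ℝ => |x|^3) (nhds 0) (nhds 0) := by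
      have : Filter.Tendsto (fun x : ℝ => |x|^3) (nhds 0) (nhds (|(0:ℝ)|^3)) :=
        (continuous_abs.pow 3).tendsto 0
      simpa using this
    apply squeeze_zero_norm _ htend
    intro t
    rcases eq_or_ne t 0 with rfl | ht
    · simp
    · have habs : (0:ℝ) < |t| := abs_pos.mpr ht
      rw [Real.norm_eq_abs, abs_div, abs_pow, div_le_iff₀ habs]
      calc |Real.arctan t|^4 ≤ |t|^4 := pow_le_pow_left₀ (abs_nonneg _) (abs_arctan_le_abs t) 4
      _ = |t|^3 * |t| := by ring
  · exact ((Real.continuous_arctan.pow 4).continuousAt).div continuousAt_id hx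

lemma subst1 : (∫ x in (0:ℝ)..1, Real.arctan x ^ 4 / x)
    = ∫ x in (0:ℝ)..(π/4), (1/8) * hh (2*x) := by
  have hpi4 : (0:ℝ) ≤ π/4 := by positivity
  have huIcc : Set.uIcc (0:ℝ) (π/4) = Set.Icc 0 (π/4) := Set.uIcc_of_le hpi4
  have hcos : ∀ x ∈ Set.Icc (0:ℝ) (π/4), Real.cos x ≠ 0 := by
    intro x hx
    apply ne_of_gt (Real.cos_pos_of_mem_Ioo _)
    constructor
    · linarith [hx.1, Real.pi_pos]
    · linarith [hx.2, Real.pi_pos]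
  have hderiv : ∀ x ∈ Set.uIcc (0:ℝ) (π/4), HasDerivAt Real.tan (1 / Real.cos x ^ 2) x := by
    intro x hx
    exact Real.hasDerivAt_tan (hcos x (huIcc ▸ hx))
  have hcont : ContinuousOn (fun x => 1 / Real.cos x ^ 2) (Set.uIcc (0:ℝ) (π/4)) := by
    rw [huIcc]
    intro x hx
    exact (continuousAt_const.div ((Real.continuous_cos.pow 2).continuousAt)
      (pow_ne_zero 2 (hcos x hx))).continuousWithinAt
  have hsub := intervalIntegral.integral_comp_smul_deriv hderiv hcont g_cont
  rw [Real.tan_zero, Real.tan_pi_div_four] at hsub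
  rw [← hsub]
  apply intervalIntegral.integral_congr
  intro x hx
  rw [huIcc] at hx
  rcases eq_or_lt_of_le hx.1 with rfl | hpos
  · simp [hh]
  · have hcosx := hcos x hx
    have hsinx : Real.sin x ≠ 0 :=
      ne_of_gt (Real.sin_pos_of_pos_of_lt_pi hpos (by linarith [hx.2, Real.pi_pos]))
    have hsin2x : Real.sin (2*x) = 2 * Real.sin x * Real.cos x := by
      exact Real.sin_two_mul x
    have harctan : Real.arctan (Real.tan x) = x :=
      Real.arctan_tan (by linarith [hx.1, Real.pi_pos]) (by linarith [hx.2, Real.pi_pos])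
    simp only [smul_eq_mul, Function.comp_apply]
    rw [harctan, hh, hsin2x, Real.tan_eq_sin_div_cos]
    field_simp
    ring

lemma subst2 : (∫ x in (0:ℝ)..(π/4), (1/8) * hh (2*x)) =
    (1/16) * ∫ s in (0:ℝ)..(π/2), hh s := by
  rw [intervalIntegral.integral_const_mul]
  have h := intervalIntegral.smul_integral_comp_mul_left (a := (0:ℝ)) (b := π/4) hh 2
  rw [show (2:ℝ)*0 = 0 by ring, show (2:ℝ)*(π/4) = π/2 by ring] at h
  rw [← h]
  simp only [smul_eq_mul]
  ring

theorem arctan_fourth_div_x_integral :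
    ∫ x in (0:ℝ)..1, Real.arctan x ^ 4 / x
      = (93/32) * zeta5 - (3/2) * π * beta4 + (1/16) * π ^ 3 * catalanConst := by
  rw [subst1, subst2, J_eq]
  ring
end

section
/- The alternating double S-value S(1̄,1) := 4·∑_{n₁>n₂≥1} (−1)^{n₁}/((2n₁−1)·(2n₂)) equals −2G + π·log 2. -/
open Real Filter

section Aux

open MeasureTheory Set Topology

noncomputable def auxR (j : ℕ) : ℝ := ∫ x in (0:ℝ)..1, x^(2*j+2)/(1+x^2)

lemma one_add_sq_pos (x : ℝ) : (0:ℝ) < 1 + x^2 := by positivity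

lemma aux_geom (x : ℝ) {j N : ℕ} (h : j ≤ N) :
    ∑ m ∈ Finset.Ico j N, (-1:ℝ)^m * x^(2*m+2)
      = ((-1)^j * x^(2*j+2) - (-1)^N * x^(2*N+2))/(1+x^2) := by
  induction N, h using Nat.le_induction with
  | base => simp
  | succ N hjN ih =>
      rw [Finset.sum_Ico_succ_top hjN, ih]
      have h0 : (1:ℝ) + x^2 ≠ 0 := (one_add_sq_pos x).ne'
      field_simp
      ring

lemma auxR_cont (j : ℕ) : Continuous (fun x : ℝ => x^(2*j+2)/(1+x^2)) := by
  exact Continuous.div (by continuity) (by continuity) (fun x => (one_add_sq_pos x).ne')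

lemma aux_tail {j N : ℕ} (h : j ≤ N) :
    ∑ m ∈ Finset.Ico j N, (-1:ℝ)^m/(2*(m:ℝ)+3)
      = (-1)^j * auxR j - (-1)^N * auxR N := by
  have key : ∀ m : ℕ, (-1:ℝ)^m/(2*(m:ℝ)+3) = ∫ x in (0:ℝ)..1, (-1:ℝ)^m * x^(2*m+2) := by
    intro m
    rw [intervalIntegral.integral_const_mul, integral_pow]
    push_cast
    ring
  calc ∑ m ∈ Finset.Ico j N, (-1:ℝ)^m/(2*(m:ℝ)+3)
      = ∑ m ∈ Finset.Ico j N, ∫ x in (0:ℝ)..1, (-1:ℝ)^m * x^(2*m+2) := by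
        exact Finset.sum_congr rfl fun m _ => key m
    _ = ∫ x in (0:ℝ)..1, ∑ m ∈ Finset.Ico j N, (-1:ℝ)^m * x^(2*m+2) := by
        rw [intervalIntegral.integral_finset_sum]
        intro m _
        exact (Continuous.intervalIntegrable (by continuity) _ _)
    _ = ∫ x in (0:ℝ)..1, ((-1:ℝ)^j * (x^(2*j+2)/(1+x^2)) - (-1)^N * (x^(2*N+2)/(1+x^2))) := by
        refine intervalIntegral.integral_congr fun x _ => ?_
        rw [aux_geom x h]
        ring
    _ = (-1)^j * auxR j - (-1)^N * auxR N := by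
        rw [intervalIntegral.integral_sub, intervalIntegral.integral_const_mul,
          intervalIntegral.integral_const_mul]
        · rfl
        · exact ((auxR_cont j).intervalIntegrable _ _).const_mul _
        · exact ((auxR_cont N).intervalIntegrable _ _).const_mul _

lemma aux_swap (N : ℕ) :
    ∑ m ∈ Finset.range N, ((-1:ℝ)^m / (2*(m:ℝ)+3)) * ∑ j ∈ Finset.range (m+1), 1/(2*(j:ℝ)+2)
      = (∑ j ∈ Finset.range N, (1/(2*(j:ℝ)+2)) * ((-1)^j * auxR j))
        - (∑ j ∈ Finset.range N, 1/(2*(j:ℝ)+2)) * ((-1)^N * auxR N) := by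
  have swap : ∑ m ∈ Finset.range N, ((-1:ℝ)^m / (2*(m:ℝ)+3)) * ∑ j ∈ Finset.range (m+1), 1/(2*(j:ℝ)+2)
      = ∑ j ∈ Finset.range N, (1/(2*(j:ℝ)+2)) * ∑ m ∈ Finset.Ico j N, (-1:ℝ)^m/(2*(m:ℝ)+3) := by
    calc ∑ m ∈ Finset.range N, ((-1:ℝ)^m / (2*(m:ℝ)+3)) * ∑ j ∈ Finset.range (m+1), 1/(2*(j:ℝ)+2)
        = ∑ m ∈ Finset.Ico 0 N, ∑ j ∈ Finset.Ico 0 (m+1),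
            (1/(2*(j:ℝ)+2)) * ((-1:ℝ)^m/(2*(m:ℝ)+3)) := by
          simp_rw [Nat.Ico_zero_eq_range, Finset.mul_sum]
          exact Finset.sum_congr rfl fun m _ => Finset.sum_congr rfl fun j _ => by ring
      _ = ∑ j ∈ Finset.Ico 0 N, ∑ m ∈ Finset.Ico j N,
            (1/(2*(j:ℝ)+2)) * ((-1:ℝ)^m/(2*(m:ℝ)+3)) := by
          exact (Finset.sum_Ico_Ico_comm 0 N _).symm
      _ = ∑ j ∈ Finset.range N, (1/(2*(j:ℝ)+2)) * ∑ m ∈ Finset.Ico j N, (-1:ℝ)^m/(2*(m:ℝ)+3) := by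
          simp_rw [Nat.Ico_zero_eq_range, Finset.mul_sum]
  rw [swap]
  rw [Finset.sum_mul]
  rw [← Finset.sum_sub_distrib]
  refine Finset.sum_congr rfl fun j hj => ?_
  rw [aux_tail (le_of_lt (Finset.mem_range.mp hj))]
  ring

lemma auxR_nonneg (j : ℕ) : 0 ≤ auxR j := by
  refine intervalIntegral.integral_nonneg zero_le_one fun x hx => ?_
  exact div_nonneg (pow_nonneg hx.1 _) (one_add_sq_pos x).le

lemma auxR_le (j : ℕ) : auxR j ≤ 1/(2*(j:ℝ)+3) := by
  have h1 : auxR j ≤ ∫ x in (0:ℝ)..1, x^(2*j+2) := by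
    refine intervalIntegral.integral_mono_on zero_le_one
      ((auxR_cont j).intervalIntegrable _ _)
      ((continuous_pow _).intervalIntegrable _ _) fun x hx => ?_
    rw [div_le_iff₀ (one_add_sq_pos x)]
    nlinarith [pow_nonneg hx.1 (2*j+2), sq_nonneg x, pow_nonneg hx.1 (2*j+2)]
  have h2 : (∫ x in (0:ℝ)..1, x^(2*j+2)) = 1/(2*(j:ℝ)+3) := by
    rw [integral_pow]
    push_cast
    rw [one_pow]
    norm_num
    ring
  linarith

lemma harmonic_le (N : ℕ) : ∑ j ∈ Finset.range N, 1/((j:ℝ)+1) ≤ 1 + Real.log N := by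
  induction N with
  | zero => simp
  | succ N ih =>
      rcases Nat.eq_zero_or_pos N with h | h
      · subst h; simp
      have hN : (0:ℝ) < N := by exact_mod_cast h
      rw [Finset.sum_range_succ]
      have key : 1/((N:ℝ)+1) ≤ Real.log (N+1) - Real.log N := by
        have hlog : Real.log ((N:ℝ)/((N:ℝ)+1)) ≤ (N:ℝ)/((N:ℝ)+1) - 1 :=
          Real.log_le_sub_one_of_pos (by positivity)
        rw [Real.log_div (by positivity) (by positivity)] at hlog
        have : (N:ℝ)/((N:ℝ)+1) - 1 = -(1/((N:ℝ)+1)) := by field_simp; ring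
        rw [this] at hlog
        linarith
      push_cast
      linarith

lemma c_le (N : ℕ) : ∑ j ∈ Finset.range N, 1/(2*(j:ℝ)+2) ≤ 1 + Real.log N := by
  refine le_trans (Finset.sum_le_sum fun j _ => ?_) (harmonic_le N)
  have : (0:ℝ) < (j:ℝ)+1 := by positivity
  rw [div_le_div_iff₀ (by positivity) this]
  linarith

lemma c_nonneg (N : ℕ) : 0 ≤ ∑ j ∈ Finset.range N, 1/(2*(j:ℝ)+2) :=
  Finset.sum_nonneg fun j _ => by positivity

lemma tendsto_err :
    Tendsto (fun N : ℕ => (∑ j ∈ Finset.range N, 1/(2*(j:ℝ)+2)) * ((-1:ℝ)^N * auxR N))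
      atTop (𝓝 0) := by
  have hreal : Tendsto (fun x : ℝ => 1/x + Real.log x / x) atTop (𝓝 0) := by
    have h1 : Tendsto (fun x : ℝ => 1/x) atTop (𝓝 0) := by
      simpa [one_div] using tendsto_inv_atTop_zero
    have h2 : Tendsto (fun x : ℝ => Real.log x / x) atTop (𝓝 0) := by
      simpa [Function.comp] using Real.isLittleO_log_id_atTop.tendsto_div_nhds_zero
    simpa using h1.add h2
  have hb : Tendsto (fun N : ℕ => 1/(N:ℝ) + Real.log N / N) atTop (𝓝 0) :=
    hreal.comp tendsto_natCast_atTop_atTop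
  refine squeeze_zero_norm' ?_ hb
  filter_upwards [eventually_ge_atTop 1] with N hN
  have hN1 : (1:ℝ) ≤ (N:ℝ) := by exact_mod_cast hN
  have hNpos : (0:ℝ) < N := by linarith
  have hlogpos : 0 ≤ Real.log N := Real.log_nonneg hN1
  have h1 : ‖(∑ j ∈ Finset.range N, 1/(2*(j:ℝ)+2)) * ((-1:ℝ)^N * auxR N)‖
      ≤ (1 + Real.log N) * (1/(2*(N:ℝ)+3)) := by
    rw [norm_mul, norm_mul, norm_pow, norm_neg, norm_one, one_pow, one_mul,
      Real.norm_of_nonneg (c_nonneg N), Real.norm_of_nonneg (auxR_nonneg N)]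
    exact mul_le_mul (c_le N) (auxR_le N) (auxR_nonneg N) (by linarith)
  have h2 : (1 + Real.log N) * (1/(2*(N:ℝ)+3)) ≤ 1/(N:ℝ) + Real.log N / N := by
    have : (1 + Real.log N) * (1/(2*(N:ℝ)+3)) ≤ (1 + Real.log N) * (1/(N:ℝ)) := by
      refine mul_le_mul_of_nonneg_left ?_ (by linarith)
      rw [div_le_div_iff₀ (by linarith) hNpos]
      linarith
    calc (1 + Real.log N) * (1/(2*(N:ℝ)+3)) ≤ (1 + Real.log N) * (1/(N:ℝ)) := this
      _ = 1/(N:ℝ) + Real.log N / N := by field_simp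
  linarith

lemma summable_a : Summable (fun j : ℕ => (1/(2*(j:ℝ)+2)) * ((-1:ℝ)^j * auxR j)) := by
  have hs : Summable (fun j : ℕ => 1/((j:ℝ)+1)^2) := by
    have h0 : Summable (fun n : ℕ => 1/(n:ℝ)^2) :=
      Real.summable_one_div_nat_pow.mpr one_lt_two
    have := (summable_nat_add_iff 1).mpr h0
    simpa using this
  refine Summable.of_norm_bounded hs fun j => ?_
  rw [norm_mul, norm_mul, norm_pow, norm_neg, norm_one, one_pow, one_mul,
    Real.norm_of_nonneg (auxR_nonneg j), Real.norm_of_nonneg (by positivity : (0:ℝ) ≤ 1/(2*(j:ℝ)+2))]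
  have h1 : auxR j ≤ 1/(2*(j:ℝ)+3) := auxR_le j
  have h2 : (0:ℝ) < 2*(j:ℝ)+2 := by positivity
  have h3 : (0:ℝ) < 2*(j:ℝ)+3 := by positivity
  have : (1/(2*(j:ℝ)+2)) * (1/(2*(j:ℝ)+3)) ≤ 1/((j:ℝ)+1)^2 := by
    rw [div_mul_div_comm, one_mul, div_le_div_iff₀ (by positivity) (by positivity)]
    nlinarith [sq_nonneg ((j:ℝ)+1)]
  calc (1/(2*(j:ℝ)+2)) * auxR j ≤ (1/(2*(j:ℝ)+2)) * (1/(2*(j:ℝ)+3)) :=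
        mul_le_mul_of_nonneg_left h1 (by positivity)
    _ ≤ 1/((j:ℝ)+1)^2 := this

lemma ftc_Ioo {V g : ℝ → ℝ} (hcont : ContinuousOn V (Icc 0 1))
    (hderiv : ∀ x ∈ Ioo (0:ℝ) 1, HasDerivAt V (g x) x)
    (hint : IntervalIntegrable g MeasureTheory.volume 0 1) :
    ∫ x in Ioo (0:ℝ) 1, g x = V 1 - V 0 := by
  rw [← integral_Ioc_eq_integral_Ioo, ← intervalIntegral.integral_of_le zero_le_one]
  exact intervalIntegral.integral_eq_sub_of_hasDeriv_right_of_le zero_le_one hcont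
    (fun x hx => (hderiv x hx).hasDerivWithinAt) hint

lemma intOn_deriv {V g : ℝ → ℝ} (hcont : ContinuousOn V (Icc 0 1))
    (hderiv : ∀ x ∈ Ioo (0:ℝ) 1, HasDerivAt V (g x) x)
    (hpos : ∀ x ∈ Ioo (0:ℝ) 1, 0 ≤ g x) : IntegrableOn g (Ioo (0:ℝ) 1) :=
  (integrableOn_Ioc_iff_integrableOn_Ioo).mp
    (intervalIntegral.integrableOn_deriv_of_nonneg hcont hderiv hpos)

lemma tendsto_mul_log : Tendsto (fun x : ℝ => x * Real.log x) (𝓝[>] (0:ℝ)) (𝓝 0) := by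
  have := tendsto_log_mul_rpow_nhdsGT_zero (r := 1) one_pos
  refine this.congr' ?_
  filter_upwards [self_mem_nhdsWithin] with x _
  rw [Real.rpow_one]
  ring

lemma tendsto_pow_mul_log (k : ℕ) :
    Tendsto (fun x : ℝ => x^k * (x * Real.log x)) (𝓝[>] (0:ℝ)) (𝓝 0) := by
  have h1 : Tendsto (fun x : ℝ => x^k) (𝓝[>] (0:ℝ)) (𝓝 ((0:ℝ)^k)) :=
    ((continuous_pow k).tendsto 0).mono_left nhdsWithin_le_nhds
  simpa using h1.mul tendsto_mul_log

/-- antiderivative of `x^k * (-log x)` -/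
noncomputable def Wlog (k : ℕ) (x : ℝ) : ℝ :=
  (x^(k+1) * (1 - ((k:ℝ)+1) * Real.log x)) / ((k:ℝ)+1)^2

lemma Wlog_contOn (k : ℕ) : ContinuousOn (Wlog k) (Icc 0 1) := by
  intro x hx
  rcases eq_or_ne x 0 with rfl | hx0
  · -- continuity at 0
    have hW0 : Wlog k 0 = 0 := by simp [Wlog]
    have key : Tendsto (fun x : ℝ => Wlog k x) (𝓝[>] (0:ℝ)) (𝓝 0) := by
      have h1 : Tendsto (fun x : ℝ => (x^(k+1) - ((k:ℝ)+1) * (x^k * (x * Real.log x)))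
          / ((k:ℝ)+1)^2) (𝓝[>] (0:ℝ)) (𝓝 0) := by
        have hp : Tendsto (fun x : ℝ => x^(k+1)) (𝓝[>] (0:ℝ)) (𝓝 0) := by
          have := ((continuous_pow (k+1)).tendsto 0).mono_left
            (nhdsWithin_le_nhds (s := Ioi (0:ℝ)))
          simpa using this
        have := (hp.sub ((tendsto_pow_mul_log k).const_mul ((k:ℝ)+1))).div_const (((k:ℝ)+1)^2)
        simpa using this
      refine h1.congr fun x => ?_
      unfold Wlog
      ring
    refine continuousWithinAt_diff_self.mp ?_
    have hsub : (Icc (0:ℝ) 1 \ {0}) ⊆ Ioi 0 := by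
      rintro y ⟨hy1, hy2⟩
      exact lt_of_le_of_ne hy1.1 (Ne.symm hy2)
    have h2 : Tendsto (Wlog k) (𝓝[Icc 0 1 \ {0}] 0) (𝓝 0) :=
      key.mono_left (nhdsWithin_mono _ hsub)
    rwa [ContinuousWithinAt, hW0]
  · have hc : ContinuousAt (Wlog k) x := by
      have : ContinuousAt Real.log x := Real.continuousAt_log hx0
      unfold Wlog
      fun_prop (disch := norm_num)
    exact hc.continuousWithinAt

lemma Wlog_deriv (k : ℕ) : ∀ x ∈ Ioo (0:ℝ) 1,
    HasDerivAt (Wlog k) (x^k * (-Real.log x)) x := by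
  intro x hx
  have hx0 : x ≠ 0 := ne_of_gt hx.1
  have h1 : HasDerivAt (fun x : ℝ => x^(k+1) * (1 - ((k:ℝ)+1) * Real.log x))
      (((k:ℝ)+1) * x^k * (1 - ((k:ℝ)+1) * Real.log x) + x^(k+1) * (-(((k:ℝ)+1) / x))) x := by
    have hp : HasDerivAt (fun x : ℝ => x^(k+1)) (((k:ℝ)+1) * x^k) x := by
      simpa using hasDerivAt_pow (k+1) x
    have hl : HasDerivAt (fun x : ℝ => 1 - ((k:ℝ)+1) * Real.log x) (-(((k:ℝ)+1) / x)) x := by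
      have := ((Real.hasDerivAt_log hx0).const_mul (((k:ℝ)+1))).const_sub 1
      simpa [div_eq_mul_inv] using this
    exact hp.mul hl
  have h2 := h1.div_const (((k:ℝ)+1)^2)
  have heq : (((k:ℝ)+1) * x^k * (1 - ((k:ℝ)+1) * Real.log x) + x^(k+1) * (-(((k:ℝ)+1) / x)))
      / ((k:ℝ)+1)^2 = x^k * (-Real.log x) := by
    have hk : ((k:ℝ)+1) ≠ 0 := by positivity
    field_simp
    ring
  rw [heq] at h2
  exact h2

lemma integral_pow_neg_log (k : ℕ) :
    ∫ x in Ioo (0:ℝ) 1, x^k * (-Real.log x) = 1/((k:ℝ)+1)^2 := by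
  have h := ftc_Ioo (Wlog_contOn k) (Wlog_deriv k) ?_
  · rw [h]
    unfold Wlog
    simp
  · rw [intervalIntegrable_iff_integrableOn_Ioo_of_le zero_le_one]
    exact intOn_deriv (Wlog_contOn k) (Wlog_deriv k)
      (fun x hx => mul_nonneg (pow_nonneg hx.1.le _)
        (neg_nonneg.mpr (Real.log_nonpos hx.1.le hx.2.le)))

lemma integrableOn_neg_log : IntegrableOn (fun x : ℝ => -Real.log x) (Ioo (0:ℝ) 1) := by
  have h := intOn_deriv (Wlog_contOn 0) (Wlog_deriv 0)
    (fun x hx => mul_nonneg (pow_nonneg hx.1.le _)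
      (neg_nonneg.mpr (Real.log_nonpos hx.1.le hx.2.le)))
  simpa using h


lemma intOn_pow_neg_log (k : ℕ) :
    IntegrableOn (fun x : ℝ => x^k * (-Real.log x)) (Ioo (0:ℝ) 1) :=
  intOn_deriv (Wlog_contOn k) (Wlog_deriv k)
    (fun x hx => mul_nonneg (pow_nonneg hx.1.le _)
      (neg_nonneg.mpr (Real.log_nonpos hx.1.le hx.2.le)))

lemma summable_inv_sq_shift : Summable (fun n : ℕ => 1/(2*(n:ℝ)+1)^2) := by
  have h0 : Summable (fun n : ℕ => 1/(n:ℝ)^2) :=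
    Real.summable_one_div_nat_pow.mpr one_lt_two
  have h1 := (summable_nat_add_iff 1).mpr h0
  refine Summable.of_nonneg_of_le (fun n => by positivity) (fun n => ?_) h1
  have h2 : ((n:ℝ)+1)^2 ≤ (2*(n:ℝ)+1)^2 := by nlinarith [Nat.cast_nonneg (α := ℝ) n]
  have h3 : (0:ℝ) < ((n:ℝ)+1)^2 := by positivity
  push_cast
  rw [div_le_div_iff₀ (by positivity) (by positivity : (0:ℝ) < ((n:ℝ)+1)^2)]
  nlinarith

lemma catalan_integral :
    ∫ x in Ioo (0:ℝ) 1, (-Real.log x)/(1+x^2)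
      = ∑' n : ℕ, (-1:ℝ)^n / (2*(n:ℝ)+1)^2 := by
  have hInt : ∀ n : ℕ, Integrable (fun x : ℝ => (-1:ℝ)^n * (x^(2*n) * (-Real.log x)))
      (volume.restrict (Ioo (0:ℝ) 1)) :=
    fun n => (intOn_pow_neg_log (2*n)).const_mul _
  have hnorm : ∀ n : ℕ, ∫ x in Ioo (0:ℝ) 1, ‖(-1:ℝ)^n * (x^(2*n) * (-Real.log x))‖
      = 1/(2*(n:ℝ)+1)^2 := by
    intro n
    have : ∀ x ∈ Ioo (0:ℝ) 1, ‖(-1:ℝ)^n * (x^(2*n) * (-Real.log x))‖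
        = x^(2*n) * (-Real.log x) := by
      intro x hx
      rw [norm_mul, norm_pow, norm_neg, norm_one, one_pow, one_mul,
        Real.norm_of_nonneg (mul_nonneg (pow_nonneg hx.1.le _)
          (neg_nonneg.mpr (Real.log_nonpos hx.1.le hx.2.le)))]
    rw [setIntegral_congr_fun measurableSet_Ioo this, integral_pow_neg_log (2*n)]
    push_cast
    ring_nf
  have hsum : Summable (fun n : ℕ => ∫ x in Ioo (0:ℝ) 1,
      ‖(-1:ℝ)^n * (x^(2*n) * (-Real.log x))‖) := by
    refine Summable.congr summable_inv_sq_shift fun n => (hnorm n).symm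
  have key := MeasureTheory.integral_tsum_of_summable_integral_norm hInt hsum
  have hL : ∀ n : ℕ, ∫ x in Ioo (0:ℝ) 1, (-1:ℝ)^n * (x^(2*n) * (-Real.log x))
      = (-1:ℝ)^n / (2*(n:ℝ)+1)^2 := by
    intro n
    rw [MeasureTheory.integral_const_mul, integral_pow_neg_log (2*n)]
    push_cast
    ring_nf
  have hR : ∀ x ∈ Ioo (0:ℝ) 1,
      (∑' n : ℕ, (-1:ℝ)^n * (x^(2*n) * (-Real.log x))) = (-Real.log x)/(1+x^2) := by
    intro x hx
    have hlt : ‖-(x^2)‖ < 1 := by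
      rw [norm_neg, Real.norm_of_nonneg (sq_nonneg x)]
      nlinarith [hx.1, hx.2]
    have hgeom := hasSum_geometric_of_norm_lt_one hlt
    have h2 : HasSum (fun n : ℕ => (-1:ℝ)^n * (x^(2*n) * (-Real.log x)))
        ((1 - (-(x^2)))⁻¹ * (-Real.log x)) := by
      have := hgeom.mul_right (-Real.log x)
      refine this.congr_fun fun n => ?_
      rw [neg_pow, pow_mul]
      ring
    rw [h2.tsum_eq]
    rw [div_eq_inv_mul]
    congr 1
    rw [sub_neg_eq_add]
  calc ∫ x in Ioo (0:ℝ) 1, (-Real.log x)/(1+x^2)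
      = ∫ x in Ioo (0:ℝ) 1, ∑' n : ℕ, (-1:ℝ)^n * (x^(2*n) * (-Real.log x)) := by
        exact (setIntegral_congr_fun measurableSet_Ioo (fun x hx => (hR x hx).symm))
    _ = ∑' n : ℕ, ∫ x in Ioo (0:ℝ) 1, (-1:ℝ)^n * (x^(2*n) * (-Real.log x)) := key.symm
    _ = ∑' n : ℕ, (-1:ℝ)^n / (2*(n:ℝ)+1)^2 := by
        exact tsum_congr hL

lemma subst_moebius :
    ∫ x in Ioo (0:ℝ) 1, (-Real.log x)/(1+x^2)
      = ∫ t in Ioo (0:ℝ) 1, (Real.log (1+t) - Real.log (1-t))/(1+t^2) := by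
  set f : ℝ → ℝ := fun t => (1-t)/(1+t) with hf
  set f' : ℝ → ℝ := fun t => -2/(1+t)^2 with hf'
  have himg : f '' Ioo (0:ℝ) 1 = Ioo (0:ℝ) 1 := by
    ext x
    constructor
    · rintro ⟨t, ht, rfl⟩
      have h1 : (0:ℝ) < 1 + t := by linarith [ht.1]
      constructor
      · apply div_pos (by linarith [ht.2]) h1
      · rw [div_lt_one h1]; linarith [ht.1]
    · intro hx
      refine ⟨(1-x)/(1+x), ?_, ?_⟩
      · have h1 : (0:ℝ) < 1 + x := by linarith [hx.1]
        exact ⟨div_pos (by linarith [hx.2]) h1, by rw [div_lt_one h1]; linarith [hx.1]⟩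
      · have h1 : (0:ℝ) < 1 + x := by linarith [hx.1]
        show (1 - (1-x)/(1+x))/(1 + (1-x)/(1+x)) = x
        rw [div_eq_iff]
        · field_simp
          ring
        · intro hcon
          have : 1 + (1-x)/(1+x) = 2/(1+x) := by field_simp; ring
          rw [this] at hcon
          have := div_pos (by norm_num : (0:ℝ) < 2) h1
          linarith
  have hinj : InjOn f (Ioo (0:ℝ) 1) := by
    intro a ha b hb hab
    have h1 : (0:ℝ) < 1 + a := by linarith [ha.1]
    have h2 : (0:ℝ) < 1 + b := by linarith [hb.1]
    rw [hf, div_eq_div_iff h1.ne' h2.ne'] at hab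
    nlinarith
  have hderiv : ∀ t ∈ Ioo (0:ℝ) 1, HasDerivWithinAt f (f' t) (Ioo (0:ℝ) 1) t := by
    intro t ht
    have h1 : (1:ℝ) + t ≠ 0 := by linarith [ht.1]
    have hd : HasDerivAt f (f' t) t := by
      have h := ((hasDerivAt_id t).const_sub 1).div (((hasDerivAt_id t).const_add 1)) h1
      simp only [id] at h
      refine h.congr_deriv (Eq.symm ?_)
      have h1b : ((1:ℝ)+t)^2 ≠ 0 := pow_ne_zero _ h1
      rw [div_eq_div_iff h1b h1b]
      ring
    exact hd.hasDerivWithinAt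
  have key := integral_image_eq_integral_abs_deriv_smul measurableSet_Ioo hderiv hinj
    (fun x => (-Real.log x)/(1+x^2))
  rw [himg] at key
  rw [key]
  refine setIntegral_congr_fun measurableSet_Ioo fun t ht => ?_
  have h1 : (0:ℝ) < 1 + t := by linarith [ht.1]
  have h2 : (0:ℝ) < 1 - t := by linarith [ht.2]
  have hft : f t = (1-t)/(1+t) := rfl
  have hlog : Real.log ((1-t)/(1+t)) = Real.log (1-t) - Real.log (1+t) :=
    Real.log_div h2.ne' h1.ne'
  show |f' t| • ((-Real.log (f t))/(1+(f t)^2)) = (Real.log (1+t) - Real.log (1-t))/(1+t^2)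
  rw [hft, hlog]
  have habs : |f' t| = 2/(1+t)^2 := by
    rw [hf']
    rw [abs_div, abs_neg]
    norm_num
  rw [habs, smul_eq_mul]
  have hden : 1 + ((1-t)/(1+t))^2 = 2*(1+t^2)/(1+t)^2 := by
    field_simp
    ring
  rw [hden]
  have h3 : (0:ℝ) < 1 + t^2 := by positivity
  field_simp
  ring

lemma arctan_lip (s t : ℝ) : |Real.arctan s - Real.arctan t| ≤ |s - t| := by
  have hlip : LipschitzWith 1 Real.arctan := by
    refine lipschitzWith_of_nnnorm_deriv_le Real.differentiable_arctan fun x => ?_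
    rw [Real.deriv_arctan]
    rw [← NNReal.coe_le_coe]
    have h1 : (0:ℝ) < 1 + x^2 := by positivity
    have : ‖(1:ℝ)/(1+x^2)‖ ≤ 1 := by
      rw [Real.norm_of_nonneg (by positivity)]
      rw [div_le_one h1]
      nlinarith
    simpa using this
  have := hlip.dist_le_mul s t
  simpa [Real.dist_eq] using this

-- the map t ↦ 1 - t into 𝓝[>] 0
lemma tendsto_one_sub : Tendsto (fun t : ℝ => 1 - t) (𝓝[Icc (0:ℝ) 1 \ {1}] 1) (𝓝[>] (0:ℝ)) := by
  rw [tendsto_nhdsWithin_iff]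
  constructor
  · have : Tendsto (fun t : ℝ => 1 - t) (𝓝 (1:ℝ)) (𝓝 0) := by
      have hc : Continuous (fun t : ℝ => 1 - t) := by continuity
      simpa using hc.tendsto (1:ℝ)
    exact this.mono_left nhdsWithin_le_nhds
  · filter_upwards [self_mem_nhdsWithin] with t ht
    rcases ht with ⟨ht1, ht2⟩
    have : t < 1 := lt_of_le_of_ne ht1.2 ht2
    simpa using this

-- integrability of -log(1-t)
lemma intOn_neg_log_one_sub : IntegrableOn (fun t : ℝ => -Real.log (1-t)) (Ioo (0:ℝ) 1) := by
  refine intOn_deriv (V := fun t => (1-t) * Real.log (1-t) + t) ?_ ?_ ?_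
  · intro t ht
    rcases eq_or_ne t 1 with rfl | ht1
    · refine continuousWithinAt_diff_self.mp ?_
      have key : Tendsto (fun t : ℝ => (1-t) * Real.log (1-t) + t)
          (𝓝[Icc (0:ℝ) 1 \ {1}] 1) (𝓝 1) := by
        have h1 : Tendsto (fun t : ℝ => (1-t) * Real.log (1-t))
            (𝓝[Icc (0:ℝ) 1 \ {1}] 1) (𝓝 0) := tendsto_mul_log.comp tendsto_one_sub
        have h2 : Tendsto (fun t : ℝ => t) (𝓝[Icc (0:ℝ) 1 \ {1}] 1) (𝓝 1) :=
          tendsto_id.mono_left nhdsWithin_le_nhds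
        simpa using h1.add h2
      have hV1 : (1-(1:ℝ)) * Real.log (1-1) + 1 = 1 := by norm_num
      rw [ContinuousWithinAt, hV1]
      exact key
    · have h2 : (1:ℝ) - t ≠ 0 := by
        intro hcon; exact ht1 (by linarith)
      have : ContinuousAt (fun t : ℝ => (1-t) * Real.log (1-t) + t) t := by
        have hl : ContinuousAt (fun t : ℝ => Real.log (1-t)) t :=
          (Real.continuousAt_log h2).comp (by fun_prop)
        fun_prop
      exact this.continuousWithinAt
  · intro t ht
    have h2 : (1:ℝ) - t ≠ 0 := by intro hcon; exact (ne_of_lt ht.2) (by linarith)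
    have hd1 : HasDerivAt (fun t : ℝ => 1 - t) (-1) t := by
      simpa using ((hasDerivAt_id t).const_sub 1)
    have hdl : HasDerivAt (fun t : ℝ => Real.log (1-t)) (-1/(1-t)) t := by
      have := (hd1.log h2)
      simpa using this
    have := (hd1.mul hdl).add ((hasDerivAt_id t))
    refine this.congr_deriv (Eq.symm ?_)
    field_simp
    ring
  · intro t ht
    simp only [neg_nonneg]
    exact Real.log_nonpos (by linarith [ht.2]) (by linarith [ht.1])

noncomputable def Vmain (t : ℝ) : ℝ :=
  Real.arctan t * ((Real.log (1+t) - Real.log (1-t))/2)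
    + (π/8) * (Real.log (1-t) + Real.log (1+t))

noncomputable def gmain (t : ℝ) : ℝ :=
  (Real.arctan t - (π/4)*t)/(1-t^2) + ((Real.log (1+t) - Real.log (1-t))/2)/(1+t^2)

lemma Vmain_deriv : ∀ t ∈ Ioo (0:ℝ) 1, HasDerivAt Vmain (gmain t) t := by
  intro t ht
  have h1 : (0:ℝ) < 1 + t := by linarith [ht.1]
  have h2 : (0:ℝ) < 1 - t := by linarith [ht.2]
  have hd1 : HasDerivAt (fun t : ℝ => Real.log (1+t)) (1/(1+t)) t := by
    have hi : HasDerivAt (fun t : ℝ => 1 + t) 1 t := by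
      simpa using ((hasDerivAt_id t).const_add 1)
    simpa using hi.log h1.ne'
  have hd2 : HasDerivAt (fun t : ℝ => Real.log (1-t)) (-1/(1-t)) t := by
    have hi : HasDerivAt (fun t : ℝ => 1 - t) (-1) t := by
      simpa using ((hasDerivAt_id t).const_sub 1)
    simpa using hi.log h2.ne'
  have hA : HasDerivAt (fun t : ℝ => (Real.log (1+t) - Real.log (1-t))/2)
      ((1/(1+t) + 1/(1-t))/2) t := by
    have := (hd1.sub hd2).div_const 2
    refine this.congr_deriv (Eq.symm ?_)
    ring
  have harc : HasDerivAt Real.arctan (1/(1+t^2)) t := Real.hasDerivAt_arctan t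
  have hP : HasDerivAt (fun t : ℝ => Real.arctan t * ((Real.log (1+t) - Real.log (1-t))/2))
      (1/(1+t^2) * ((Real.log (1+t) - Real.log (1-t))/2)
        + Real.arctan t * ((1/(1+t) + 1/(1-t))/2)) t := harc.mul hA
  have hQ : HasDerivAt (fun t : ℝ => (π/8) * (Real.log (1-t) + Real.log (1+t)))
      ((π/8) * (-1/(1-t) + 1/(1+t))) t := ((hd2.add hd1).const_mul _)
  have := hP.add hQ
  refine this.congr_deriv (Eq.symm ?_)
  unfold gmain
  have h3 : (0:ℝ) < 1 + t^2 := by positivity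
  have h6 : (1:ℝ) - t^2 ≠ 0 := by nlinarith [ht.1, ht.2]
  field_simp [h1.ne', h2.ne', h3.ne', h6]
  ring

lemma Vmain_cont : ContinuousOn Vmain (Icc 0 1) := by
  intro t ht
  rcases eq_or_ne t 1 with rfl | ht1
  · refine continuousWithinAt_diff_self.mp ?_
    have hV1 : Vmain 1 = (π/4) * Real.log 2 := by
      unfold Vmain
      rw [show (1:ℝ)-1 = 0 by ring, Real.log_zero, Real.arctan_one]
      ring
    have key : Tendsto Vmain (𝓝[Icc (0:ℝ) 1 \ {1}] 1) (𝓝 ((π/4) * Real.log 2)) := by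
      have hre : ∀ t : ℝ, Vmain t = Real.arctan t * (Real.log (1+t)/2)
          + (π/8) * Real.log (1+t) + (π/8 - Real.arctan t/2) * Real.log (1-t) := by
        intro t; unfold Vmain; ring
      have h1 : Tendsto (fun t : ℝ => Real.arctan t * (Real.log (1+t)/2)
          + (π/8) * Real.log (1+t)) (𝓝[Icc (0:ℝ) 1 \ {1}] 1)
          (𝓝 (Real.arctan 1 * (Real.log 2/2) + (π/8) * Real.log 2)) := by
        have hc : ContinuousAt (fun t : ℝ => Real.arctan t * (Real.log (1+t)/2)
            + (π/8) * Real.log (1+t)) 1 := by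
          have hl : ContinuousAt (fun t : ℝ => Real.log (1+t)) 1 :=
            (Real.continuousAt_log (by norm_num)).comp (by fun_prop)
          exact (Real.continuous_arctan.continuousAt.mul (hl.div_const 2)).add
            (continuousAt_const.mul hl)
        have := hc.tendsto
        rw [show (1:ℝ)+1 = 2 by norm_num] at this
        exact this.mono_left nhdsWithin_le_nhds
      have h2 : Tendsto (fun t : ℝ => (π/8 - Real.arctan t/2) * Real.log (1-t))
          (𝓝[Icc (0:ℝ) 1 \ {1}] 1) (𝓝 0) := by
        have hb : Tendsto (fun t : ℝ => |(1-t) * Real.log (1-t)|)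
            (𝓝[Icc (0:ℝ) 1 \ {1}] 1) (𝓝 0) := by
          have := (tendsto_mul_log.comp tendsto_one_sub).abs
          simpa using this
        refine squeeze_zero_norm' ?_ hb
        filter_upwards [self_mem_nhdsWithin] with t ht'
        have h1t : t ≤ 1 := ht'.1.2
        have h0t : 0 ≤ t := ht'.1.1
        have harc : |π/8 - Real.arctan t/2| ≤ (1-t)/2 := by
          have := arctan_lip 1 t
          rw [Real.arctan_one] at this
          have heq : π/8 - Real.arctan t/2 = (π/4 - Real.arctan t)/2 := by ring
          rw [heq, abs_div]
          have h1t' : |(1:ℝ) - t| = 1 - t := abs_of_nonneg (by linarith)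
          rw [h1t'] at this
          calc |π/4 - Real.arctan t|/|(2:ℝ)| = |π/4 - Real.arctan t|/2 := by norm_num
            _ ≤ (1-t)/2 := by
                apply div_le_div_of_nonneg_right ?_ (by norm_num)
                · exact this
        calc ‖(π/8 - Real.arctan t/2) * Real.log (1-t)‖
            = |π/8 - Real.arctan t/2| * |Real.log (1-t)| := by
              rw [norm_mul]; rfl
          _ ≤ ((1-t)/2) * |Real.log (1-t)| := by
              apply mul_le_mul_of_nonneg_right harc (abs_nonneg _)
          _ ≤ |(1-t) * Real.log (1-t)| := by
              rw [abs_mul, abs_of_nonneg (by linarith : (0:ℝ) ≤ 1-t)]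
              nlinarith [abs_nonneg (Real.log (1-t))]
      have := h1.add h2
      rw [Real.arctan_one] at this
      have heq : π/4 * (Real.log 2/2) + π/8 * Real.log 2 + 0 = (π/4) * Real.log 2 := by ring
      rw [heq] at this
      exact this.congr fun t => (hre t).symm
    rw [ContinuousWithinAt, hV1]
    exact key
  · have h2 : (1:ℝ) - t ≠ 0 := fun hcon => ht1 (by linarith)
    have h1 : (0:ℝ) < 1 + t := by rcases ht with ⟨h,_⟩; linarith
    have : ContinuousAt Vmain t := by
      have hl1 : ContinuousAt (fun t : ℝ => Real.log (1+t)) t :=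
        (Real.continuousAt_log h1.ne').comp (by fun_prop)
      have hl2 : ContinuousAt (fun t : ℝ => Real.log (1-t)) t :=
        (Real.continuousAt_log h2).comp (by fun_prop)
      unfold Vmain
      exact (Real.continuous_arctan.continuousAt.mul ((hl1.sub hl2).div_const 2)).add
        (continuousAt_const.mul (hl2.add hl1))
    exact this.continuousWithinAt

lemma intOn_h1 : IntegrableOn (fun t : ℝ => (Real.arctan t - (π/4)*t)/(1-t^2)) (Ioo (0:ℝ) 1) := by
  refine Measure.integrableOn_of_bounded (M := 2) measure_Ioo_lt_top.ne ?_ ?_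
  · exact (((Real.continuous_arctan.sub (continuous_const.mul continuous_id)).measurable).div
      ((continuous_const.sub (continuous_pow 2)).measurable)).aestronglyMeasurable
  · filter_upwards [ae_restrict_mem measurableSet_Ioo] with t ht
    have h0t : (0:ℝ) < t := ht.1
    have ht1 : t < 1 := ht.2
    have hnum : |Real.arctan t - (π/4)*t| ≤ 2*(1-t) := by
      have hl := arctan_lip t 1
      rw [Real.arctan_one] at hl
      have habs : |t - 1| = 1 - t := by rw [abs_sub_comm]; exact abs_of_nonneg (by linarith)
      rw [habs] at hl
      have hpi : π/4 ≤ 1 := by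
        have := Real.pi_le_four
        linarith
      calc |Real.arctan t - (π/4)*t| = |(Real.arctan t - π/4) + (π/4)*(1-t)| := by ring_nf
        _ ≤ |Real.arctan t - π/4| + |(π/4)*(1-t)| := abs_add_le _ _
        _ ≤ (1-t) + (π/4)*(1-t) := by
            refine add_le_add ?_ ?_
            · exact hl
            · rw [abs_mul, abs_of_nonneg (by positivity : (0:ℝ) ≤ π/4),
                abs_of_nonneg (by linarith : (0:ℝ) ≤ 1-t)]
        _ ≤ 2*(1-t) := by nlinarith
    have hden : (1:ℝ) - t^2 = (1-t)*(1+t) := by ring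
    have hdenpos : (0:ℝ) < 1 - t^2 := by nlinarith
    rw [Real.norm_eq_abs, abs_div, abs_of_pos hdenpos]
    rw [div_le_iff₀ hdenpos]
    calc |Real.arctan t - (π/4)*t| ≤ 2*(1-t) := hnum
      _ ≤ 2*(1-t^2) := by nlinarith
      _ = 2*(1-t^2) := rfl

lemma intOn_h2 : IntegrableOn
    (fun t : ℝ => ((Real.log (1+t) - Real.log (1-t))/2)/(1+t^2)) (Ioo (0:ℝ) 1) := by
  have hbound : IntegrableOn (fun t : ℝ => (Real.log 2 + -Real.log (1-t))/2) (Ioo (0:ℝ) 1) := by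
    exact (((integrable_const (Real.log 2)).add intOn_neg_log_one_sub).div_const 2)
  refine Integrable.mono' hbound ?_ ?_
  · exact (((((Real.measurable_log.comp (by fun_prop : Measurable fun t : ℝ => 1+t)).sub
        (Real.measurable_log.comp (by fun_prop : Measurable fun t : ℝ => 1-t))).div_const 2)).div
        ((continuous_const.add (continuous_pow 2)).measurable)).aestronglyMeasurable
  · filter_upwards [ae_restrict_mem measurableSet_Ioo] with t ht
    have h0t : (0:ℝ) < t := ht.1
    have ht1 : t < 1 := ht.2
    have hl1 : 0 ≤ Real.log (1+t) := Real.log_nonneg (by linarith)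
    have hl1' : Real.log (1+t) ≤ Real.log 2 := by
      apply Real.log_le_log (by linarith)
      linarith
    have hl2 : Real.log (1-t) ≤ 0 := Real.log_nonpos (by linarith) (by linarith)
    have hden : (1:ℝ) ≤ 1 + t^2 := by nlinarith
    rw [Real.norm_eq_abs, abs_div, abs_div]
    have hnn : 0 ≤ Real.log (1+t) - Real.log (1-t) := by linarith
    rw [abs_of_nonneg hnn, abs_of_pos (by positivity : (0:ℝ) < 1+t^2)]
    have h2 : |(2:ℝ)| = 2 := by norm_num
    rw [h2]
    have hstep : (Real.log (1+t) - Real.log (1-t))/2/(1+t^2)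
        ≤ (Real.log (1+t) - Real.log (1-t))/2 := by
      refine div_le_self (by positivity) hden
    refine hstep.trans ?_
    apply div_le_div_of_nonneg_right ?_ (by norm_num)
    linarith

lemma ftc_main : ∫ t in Ioo (0:ℝ) 1, gmain t = (π/4) * Real.log 2 := by
  have hint : IntervalIntegrable gmain MeasureTheory.volume 0 1 := by
    rw [intervalIntegrable_iff_integrableOn_Ioo_of_le zero_le_one]
    exact intOn_h1.add intOn_h2
  have := ftc_Ioo Vmain_cont Vmain_deriv hint
  rw [this]
  have hV1 : Vmain 1 = (π/4) * Real.log 2 := by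
    unfold Vmain
    rw [show (1:ℝ)-1 = 0 by ring, Real.log_zero, Real.arctan_one]
    ring
  have hV0 : Vmain 0 = 0 := by
    unfold Vmain
    simp
  rw [hV1, hV0]
  ring

lemma Ioo_int {f : ℝ → ℝ} (_h : Continuous f) :
    ∫ x in Ioo (0:ℝ) 1, f x = ∫ x in (0:ℝ)..1, f x := by
  rw [intervalIntegral.integral_of_le zero_le_one, integral_Ioc_eq_integral_Ioo]

lemma int_pow_Ioo (k : ℕ) : ∫ x in Ioo (0:ℝ) 1, x^k = 1/((k:ℝ)+1) := by
  rw [Ioo_int (continuous_pow k), integral_pow]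
  norm_num

noncomputable def nu : Measure ℝ := volume.restrict (Ioo (0:ℝ) 1)

instance : IsFiniteMeasure nu :=
  ⟨by rw [nu, Measure.restrict_apply_univ]; exact measure_Ioo_lt_top⟩

lemma intOn_pow_Ioo (k : ℕ) : Integrable (fun x : ℝ => x^k) nu :=
  ((continuous_pow k).integrableOn_Icc).mono_set Ioo_subset_Icc_self

lemma intOn_auxR (j : ℕ) : Integrable (fun x : ℝ => x^(2*j+2)/(1+x^2)) nu :=
  ((auxR_cont j).integrableOn_Icc).mono_set Ioo_subset_Icc_self

noncomputable def Phi : ℝ × ℝ → ℝ :=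
  fun p => p.1 * p.2^2 / ((1+p.2^2) * (1+p.1^2*p.2^2))

lemma Phi_cont : Continuous Phi := by
  apply Continuous.div (by fun_prop)
  · fun_prop
  · intro p
    have h1 := one_add_sq_pos p.2
    have h2 : (0:ℝ) < 1 + p.1^2*p.2^2 := by nlinarith [sq_nonneg (p.1*p.2), sq_nonneg p.1, sq_nonneg p.2]
    positivity

lemma inner_x_integral {t : ℝ} (ht : t ∈ Ioo (0:ℝ) 1) :
    ∫ x in Ioo (0:ℝ) 1, t * x^2 / ((1+x^2) * (1+t^2*x^2))
      = (Real.arctan t - (π/4)*t)/(1-t^2) := by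
  have h1t : (0:ℝ) < 1 - t^2 := by nlinarith [ht.1, ht.2]
  have hcont : Continuous (fun x : ℝ => t * x^2 / ((1+x^2) * (1+t^2*x^2))) := by
    apply Continuous.div (by fun_prop) (by fun_prop)
    intro x
    have h1 := one_add_sq_pos x
    have h2 : (0:ℝ) < 1 + t^2*x^2 := by positivity
    positivity
  rw [Ioo_int hcont]
  have hderiv : ∀ x ∈ uIcc (0:ℝ) 1,
      HasDerivAt (fun x : ℝ => (Real.arctan (t*x) - t * Real.arctan x)/(1-t^2))
        (t * x^2 / ((1+x^2) * (1+t^2*x^2))) x := by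
    intro x _
    have ha : HasDerivAt (fun x : ℝ => Real.arctan (t*x)) ((1/(1+(t*x)^2)) * t) x := by
      have hm : HasDerivAt (fun x : ℝ => t*x) t x := by
        simpa using (hasDerivAt_id x).const_mul t
      exact (Real.hasDerivAt_arctan (t*x)).comp x hm
    have hb : HasDerivAt (fun x : ℝ => t * Real.arctan x) (t * (1/(1+x^2))) x :=
      (Real.hasDerivAt_arctan x).const_mul t
    have := (ha.sub hb).div_const (1-t^2)
    refine this.congr_deriv (Eq.symm ?_)
    have h1 := one_add_sq_pos x
    have h2 : (0:ℝ) < 1 + t^2*x^2 := by positivity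
    have h3 : (0:ℝ) < 1 + (t*x)^2 := by positivity
    field_simp
    ring
  rw [intervalIntegral.integral_eq_sub_of_hasDerivAt hderiv
    (hcont.intervalIntegrable _ _)]
  rw [mul_one, Real.arctan_one, mul_zero, Real.arctan_zero, mul_zero]
  ring

lemma tsum_eq_integral :
    ∑' j : ℕ, (1/(2*(j:ℝ)+2)) * ((-1:ℝ)^j * auxR j)
      = ∫ t in Ioo (0:ℝ) 1, (Real.arctan t - (π/4)*t)/(1-t^2) := by
  classical
  set F : ℕ → ℝ × ℝ → ℝ :=
    fun j p => (-1:ℝ)^j * (p.1^(2*j+1) * (p.2^(2*j+2)/(1+p.2^2))) with hF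
  have hInt : ∀ j, Integrable (F j) (nu.prod nu) := by
    intro j
    exact (Integrable.mul_prod (intOn_pow_Ioo (2*j+1)) (intOn_auxR j)).const_mul _
  have hval : ∀ j, ∫ p, F j p ∂(nu.prod nu)
      = (-1:ℝ)^j * ((1/(2*(j:ℝ)+2)) * auxR j) := by
    intro j
    rw [hF]
    simp only
    rw [MeasureTheory.integral_const_mul]
    rw [MeasureTheory.integral_prod_mul (μ := nu) (ν := nu)
      (f := fun t => t^(2*j+1)) (g := fun x => x^(2*j+2)/(1+x^2))]
    have h1 : ∫ t, t^(2*j+1) ∂nu = 1/(2*(j:ℝ)+2) := by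
      rw [nu, int_pow_Ioo]
      push_cast; norm_num; ring
    have h2 : ∫ x, x^(2*j+2)/(1+x^2) ∂nu = auxR j := by
      rw [nu, Ioo_int (auxR_cont j)]; rfl
    rw [h1, h2]
  have hnu_ae : ∀ᵐ x ∂nu, x ∈ Ioo (0:ℝ) 1 := ae_restrict_mem measurableSet_Ioo
  have hnorm1 : ∀ k : ℕ, ∫ x, ‖x^k‖ ∂nu = 1/((k:ℝ)+1) := by
    intro k
    rw [show ∫ x, ‖x^k‖ ∂nu = ∫ x in Ioo (0:ℝ) 1, ‖x^k‖ from rfl]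
    rw [← int_pow_Ioo k]
    refine setIntegral_congr_fun measurableSet_Ioo fun x hx => ?_
    rw [Real.norm_of_nonneg (pow_nonneg hx.1.le k)]
  have hnorm2 : ∀ j : ℕ, ∫ x, ‖x^(2*j+2)/(1+x^2)‖ ∂nu = auxR j := by
    intro j
    rw [show ∫ x, ‖x^(2*j+2)/(1+x^2)‖ ∂nu = ∫ x in Ioo (0:ℝ) 1, ‖x^(2*j+2)/(1+x^2)‖ from rfl]
    rw [show auxR j = ∫ x in Ioo (0:ℝ) 1, x^(2*j+2)/(1+x^2) from (Ioo_int (auxR_cont j)).symm ▸ rfl]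
    · refine setIntegral_congr_fun measurableSet_Ioo fun x hx => ?_
      rw [Real.norm_of_nonneg (div_nonneg (pow_nonneg hx.1.le _) (one_add_sq_pos x).le)]
  have hnorm : ∀ j : ℕ, ∫ p, ‖F j p‖ ∂(nu.prod nu) = (1/(2*(j:ℝ)+2)) * auxR j := by
    intro j
    have heq : (fun p : ℝ × ℝ => ‖F j p‖)
        = fun p => ‖p.1^(2*j+1)‖ * ‖p.2^(2*j+2)/(1+p.2^2)‖ := by
      funext p
      rw [hF]
      simp only
      rw [norm_mul, norm_mul, norm_pow, norm_neg, norm_one, one_pow, one_mul]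
    rw [show ∫ p, ‖F j p‖ ∂(nu.prod nu) = ∫ p, ‖p.1^(2*j+1)‖ * ‖p.2^(2*j+2)/(1+p.2^2)‖ ∂(nu.prod nu)
      from by rw [← heq]]
    rw [MeasureTheory.integral_prod_mul (μ := nu) (ν := nu)
      (f := fun t => ‖t^(2*j+1)‖) (g := fun x => ‖x^(2*j+2)/(1+x^2)‖)]
    rw [hnorm1 (2*j+1), hnorm2 j]
    push_cast
    norm_num
    left
    ring
  have hsum : Summable (fun j : ℕ => ∫ p, ‖F j p‖ ∂(nu.prod nu)) := by
    refine Summable.congr summable_a.abs fun j => ?_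
    rw [hnorm j, abs_mul, abs_mul, abs_pow, abs_neg, abs_one, one_pow, one_mul,
      abs_of_nonneg (auxR_nonneg j), abs_of_nonneg (by positivity : (0:ℝ) ≤ 1/(2*(j:ℝ)+2))]
  have key := MeasureTheory.integral_tsum_of_summable_integral_norm hInt hsum
  have hLHS : ∑' j : ℕ, (1/(2*(j:ℝ)+2)) * ((-1:ℝ)^j * auxR j) = ∑' j, ∫ p, F j p ∂(nu.prod nu) := by
    refine tsum_congr fun j => ?_
    rw [hval j]
    ring
  rw [hLHS, key]
  -- now compute the integral of the tsum
  have hmeas : (nu.prod nu) = (volume.prod volume).restrict (Ioo (0:ℝ) 1 ×ˢ Ioo (0:ℝ) 1) := by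
    rw [nu, Measure.prod_restrict]
  have htsum_eq : ∀ p ∈ Ioo (0:ℝ) 1 ×ˢ Ioo (0:ℝ) 1, (∑' j, F j p) = Phi p := by
    rintro ⟨t, x⟩ ⟨ht, hx⟩
    have hq : ‖-(t^2*x^2)‖ < 1 := by
      rw [norm_neg, Real.norm_of_nonneg (by positivity)]
      have h1 : t^2 < 1 := by nlinarith [ht.1, ht.2]
      have h2 : x^2 ≤ 1 := by nlinarith [hx.1, hx.2]
      nlinarith [sq_nonneg t, sq_nonneg x]
    have hgeom := (hasSum_geometric_of_norm_lt_one hq).mul_left (t * x^2/(1+x^2))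
    have hgeom2 : HasSum (fun j => F j (t, x))
        (t * x^2/(1+x^2) * (1 - -(t^2*x^2))⁻¹) := by
      refine hgeom.congr_fun fun j => ?_
      rw [hF]
      simp only
      have e1 : t^(2*j+1) = (t^2)^j * t := by rw [pow_add, pow_mul, pow_one]
      have e2 : x^(2*j+2) = (x^2)^j * x^2 := by rw [pow_add, pow_mul]
      have e3 : (-(t^2*x^2))^j = (-1)^j * ((t^2)^j * (x^2)^j) := by
        rw [show -(t^2*x^2) = (-1)*(t^2*(x^2)) by ring, mul_pow, mul_pow]
      rw [e1, e2, e3]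
      field_simp
    rw [hgeom2.tsum_eq]
    unfold Phi
    simp only
    rw [sub_neg_eq_add]
    have h1 := one_add_sq_pos x
    have h2 : (0:ℝ) < 1 + t^2*x^2 := by positivity
    field_simp
  have hPhiInt : Integrable Phi (nu.prod nu) := by
    refine Integrable.mono' (integrable_const 1) Phi_cont.aestronglyMeasurable ?_
    rw [hmeas]
    filter_upwards [ae_restrict_mem (measurableSet_Ioo.prod measurableSet_Ioo)] with p hp
    rcases hp with ⟨ht, hx⟩
    unfold Phi
    rw [Real.norm_of_nonneg]
    · have h1 := one_add_sq_pos p.2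
      have h2 : (0:ℝ) < 1 + p.1^2*p.2^2 := by positivity
      rw [div_le_one (by positivity)]
      nlinarith [ht.1.le, ht.2.le, hx.1.le, hx.2.le, sq_nonneg p.2, mul_pos h1 h2]
    · have h1 := one_add_sq_pos p.2
      have h2 : (0:ℝ) < 1 + p.1^2*p.2^2 := by positivity
      have := ht.1.le
      positivity
  have hcongr : ∫ p, (∑' j, F j p) ∂(nu.prod nu) = ∫ p, Phi p ∂(nu.prod nu) := by
    rw [hmeas]
    exact setIntegral_congr_fun (measurableSet_Ioo.prod measurableSet_Ioo) htsum_eq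
  rw [hcongr]
  rw [MeasureTheory.integral_prod _ hPhiInt]
  refine setIntegral_congr_fun measurableSet_Ioo fun t ht => ?_
  rw [← inner_x_integral ht]
  rfl


lemma integral_h1_value :
    ∫ t in Ioo (0:ℝ) 1, (Real.arctan t - (π/4)*t)/(1-t^2)
      = (π/4)*Real.log 2 - (1/2) * catalanConst := by
  have hsplit : ∫ t in Ioo (0:ℝ) 1, gmain t
      = (∫ t in Ioo (0:ℝ) 1, (Real.arctan t - (π/4)*t)/(1-t^2))
        + ∫ t in Ioo (0:ℝ) 1, ((Real.log (1+t) - Real.log (1-t))/2)/(1+t^2) := by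
    exact integral_add intOn_h1 intOn_h2
  have h2val : ∫ t in Ioo (0:ℝ) 1, ((Real.log (1+t) - Real.log (1-t))/2)/(1+t^2)
      = (1/2) * catalanConst := by
    have hpt : ∀ t : ℝ, ((Real.log (1+t) - Real.log (1-t))/2)/(1+t^2)
        = (1/2) * ((Real.log (1+t) - Real.log (1-t))/(1+t^2)) := fun t => by ring
    calc ∫ t in Ioo (0:ℝ) 1, ((Real.log (1+t) - Real.log (1-t))/2)/(1+t^2)
        = ∫ t in Ioo (0:ℝ) 1, (1/2) * ((Real.log (1+t) - Real.log (1-t))/(1+t^2)) := by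
          simp_rw [hpt]
      _ = (1/2) * ∫ t in Ioo (0:ℝ) 1, (Real.log (1+t) - Real.log (1-t))/(1+t^2) := by
          rw [MeasureTheory.integral_const_mul]
      _ = (1/2) * ∫ x in Ioo (0:ℝ) 1, (-Real.log x)/(1+x^2) := by rw [subst_moebius]
      _ = (1/2) * catalanConst := by rw [catalan_integral]; rfl
  have := ftc_main
  rw [hsplit, h2val] at this
  linarith

end Aux

/-- `S(1̄,1) = 4·∑_{n=2}^∞ (−1)^n/(2n−1) · ∑_{k=1}^{n−1} 1/(2k) = −2G + π·log 2`,
stated as a limit of partial sums (conditionally convergent series); here `n = m + 2`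
and `k = j + 1`. -/
theorem S_onebar_one :
    Tendsto (fun N : ℕ =>
        4 * ∑ m ∈ Finset.range N, ((-1 : ℝ) ^ m / (2 * (m : ℝ) + 3)) *
          ∑ j ∈ Finset.range (m + 1), 1 / (2 * (j : ℝ) + 2))
      atTop (nhds (-2 * catalanConst + π * Real.log 2)) := by
  have hT : Filter.Tendsto (fun N : ℕ => ∑ j ∈ Finset.range N, (1/(2*(j:ℝ)+2)) * ((-1:ℝ)^j * auxR j))
      atTop (nhds ((π/4)*Real.log 2 - (1/2) * catalanConst)) := by
    have h1 := summable_a.hasSum.tendsto_sum_nat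
    rw [tsum_eq_integral, integral_h1_value] at h1
    exact h1
  have hmain := (hT.sub tendsto_err).const_mul (4:ℝ)
  have hfun : ∀ N : ℕ,
      4 * ∑ m ∈ Finset.range N, ((-1 : ℝ) ^ m / (2 * (m : ℝ) + 3)) *
          ∑ j ∈ Finset.range (m + 1), 1 / (2 * (j : ℝ) + 2)
      = 4 * ((∑ j ∈ Finset.range N, (1/(2*(j:ℝ)+2)) * ((-1:ℝ)^j * auxR j))
          - (∑ j ∈ Finset.range N, 1/(2*(j:ℝ)+2)) * ((-1:ℝ)^N * auxR N)) := by
    intro N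
    rw [aux_swap N]
  have hval : 4 * (((π/4)*Real.log 2 - (1/2) * catalanConst) - 0)
      = -2 * catalanConst + π * Real.log 2 := by ring
  rw [← hval]
  exact hmain.congr fun N => (hfun N).symm
end

section
/- The alternating double S-value S(1̄,1̄) := 4·∑_{n₁>n₂≥1} (−1)^{n₁+n₂}/((2n₁−1)·(2n₂)) equals −2G + (1/2)·π·log 2. -/
open Real Filter
open scoped ENNReal NNReal
open MeasureTheory Set intervalIntegral

namespace SbbAux

lemma one_add_pos {x : ℝ} (hx : x ∈ Set.Icc (0:ℝ) 1) : 0 < 1 + x := by linarith [hx.1]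

lemma uIcc01 : Set.uIcc (0:ℝ) 1 = Set.Icc 0 1 := Set.uIcc_of_le (by norm_num)

lemma contOn_inv_one_add : ContinuousOn (fun x : ℝ => 1/(1+x)) (Set.Icc 0 1) := by
  apply ContinuousOn.div continuousOn_const (by fun_prop)
  intro x hx; exact ne_of_gt (one_add_pos hx)

lemma int_one_div_one_add : ∫ x in (0:ℝ)..1, 1/(1+x) = Real.log 2 := by
  have h := intervalIntegral.integral_comp_add_left (a := (0:ℝ)) (b := 1)
      (fun u : ℝ => 1/u) 1
  simp only [add_zero] at h
  rw [h, integral_one_div (by rw [Set.uIcc_of_le (by norm_num)]; intro hc; exact absurd hc.1 (by norm_num))]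
  norm_num

noncomputable def ee (m : ℕ) : ℝ := ∫ x in (0:ℝ)..1, x^(m+1)/(1+x)

lemma contOn_pow_div (m : ℕ) : ContinuousOn (fun x : ℝ => x^(m+1)/(1+x)) (Set.Icc 0 1) := by
  apply ContinuousOn.div (by fun_prop) (by fun_prop)
  intro x hx; exact ne_of_gt (one_add_pos hx)

lemma ee_intInt (m : ℕ) :
    IntervalIntegrable (fun x : ℝ => x^(m+1)/(1+x)) volume 0 1 :=
  ((contOn_pow_div m).mono (by rw [uIcc01] : Set.uIcc (0:ℝ) 1 ⊆ Set.Icc 0 1)).intervalIntegrable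

lemma ee_nonneg (m : ℕ) : 0 ≤ ee m := by
  apply intervalIntegral.integral_nonneg (by norm_num)
  intro x hx
  have h := one_add_pos hx
  have h2 : (0:ℝ) ≤ x^(m+1) := pow_nonneg hx.1 _
  positivity

lemma ee_le (m : ℕ) : ee m ≤ 1/((m:ℝ)+2) := by
  have h1 : ee m ≤ ∫ x in (0:ℝ)..1, x^(m+1) := by
    apply intervalIntegral.integral_mono_on (by norm_num) (ee_intInt m) (intervalIntegrable_pow _)
    intro x hx
    have h2 := one_add_pos hx
    have h3 : (0:ℝ) ≤ x^(m+1) := pow_nonneg hx.1 _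
    calc x^(m+1)/(1+x) ≤ x^(m+1)/1 := by
          gcongr
          linarith [hx.1]
        _ = x^(m+1) := by ring
  rw [integral_pow] at h1
  refine h1.trans (le_of_eq ?_)
  rw [one_pow, zero_pow (by omega)]; push_cast; ring


lemma int_neg_pow (j : ℕ) : ∫ x in (0:ℝ)..1, (-x)^j = (-1:ℝ)^j/((j:ℝ)+1) := by
  have h : (fun x : ℝ => (-x)^j) = fun x : ℝ => (-1:ℝ)^j * x^j := by
    funext x; rw [neg_pow]
  rw [h, intervalIntegral.integral_const_mul, integral_pow]
  push_cast; ring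

lemma intInt_neg_pow (j : ℕ) : IntervalIntegrable (fun x : ℝ => (-x)^j) volume 0 1 := by
  have h : (fun x : ℝ => (-x)^j) = fun x : ℝ => (-1:ℝ)^j * x^j := by
    funext x; rw [neg_pow]
  rw [h]; exact (intervalIntegrable_pow j).const_mul _

lemma ee_eq (m : ℕ) :
    (-1:ℝ)^(m+1) * ee m = Real.log 2 - ∑ j ∈ Finset.range (m+1), (-1:ℝ)^j/((j:ℝ)+1) := by
  have hpt : Set.EqOn (fun x : ℝ => (1 - (-x)^(m+1))/(1+x))
      (fun x : ℝ => ∑ j ∈ Finset.range (m+1), (-x)^j) (Set.uIcc 0 1) := by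
    intro x hx
    rw [uIcc01] at hx
    have h1 : (-x : ℝ) ≠ 1 := by intro h; nlinarith [hx.1]
    have hg := geom_sum_eq h1 (m+1)
    have h2 : (0:ℝ) < 1 + x := one_add_pos hx
    simp only
    rw [hg, div_eq_div_iff (ne_of_gt h2) (by intro h; apply ne_of_gt h2; linarith)]
    ring
  have key : ∫ x in (0:ℝ)..1, ((1 - (-x)^(m+1))/(1+x))
      = ∑ j ∈ Finset.range (m+1), (-1:ℝ)^j/((j:ℝ)+1) := by
    rw [intervalIntegral.integral_congr hpt,
      intervalIntegral.integral_finset_sum (fun j _ => intInt_neg_pow j)]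
    exact Finset.sum_congr rfl fun j _ => int_neg_pow j
  have split : ∫ x in (0:ℝ)..1, ((1 - (-x)^(m+1))/(1+x))
      = Real.log 2 - (-1:ℝ)^(m+1) * ee m := by
    have hpt2 : Set.EqOn (fun x : ℝ => (1 - (-x)^(m+1))/(1+x))
        (fun x : ℝ => 1/(1+x) - (-1:ℝ)^(m+1) * (x^(m+1)/(1+x))) (Set.uIcc 0 1) := by
      intro x hx
      rw [uIcc01] at hx
      have h2 : (0:ℝ) < 1 + x := one_add_pos hx
      have hxp : (-x : ℝ)^(m+1) = (-1:ℝ)^(m+1) * x^(m+1) := by rw [neg_pow]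
      simp only
      rw [hxp]
      field_simp
    rw [intervalIntegral.integral_congr hpt2, intervalIntegral.integral_sub
        ((contOn_inv_one_add.mono (by rw [uIcc01] : Set.uIcc (0:ℝ) 1 ⊆ Set.Icc 0 1)).intervalIntegrable)
        ((ee_intInt m).const_mul _), int_one_div_one_add,
      intervalIntegral.integral_const_mul]
    rfl
  rw [← key, split]
  ring

lemma inner_sum (m : ℕ) :
    ∑ j ∈ Finset.range (m+1), (-1:ℝ)^(j+1)/(2*(j:ℝ)+2)
      = -(1/2) * Real.log 2 + (1/2) * ((-1:ℝ)^(m+1) * ee m) := by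
  have h1 : ∑ j ∈ Finset.range (m+1), (-1:ℝ)^(j+1)/(2*(j:ℝ)+2)
      = -(1/2) * ∑ j ∈ Finset.range (m+1), (-1:ℝ)^j/((j:ℝ)+1) := by
    rw [Finset.mul_sum]
    apply Finset.sum_congr rfl
    intro j _
    have hj : ((j:ℝ)+1) ≠ 0 := by positivity
    rw [pow_succ]
    field_simp
  rw [h1, ee_eq]
  ring

lemma term_eq (m : ℕ) :
    ((-1:ℝ)^m/(2*(m:ℝ)+3)) * ∑ j ∈ Finset.range (m+1), (-1:ℝ)^(j+1)/(2*(j:ℝ)+2)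
      = -(1/2) * Real.log 2 * ((-1:ℝ)^m/(2*(m:ℝ)+3)) - (1/2) * (ee m/(2*(m:ℝ)+3)) := by
  rw [inner_sum]
  have hmm : (-1:ℝ)^m * (-1:ℝ)^(m+1) = -1 := by
    rw [← pow_add]
    have : m + (m+1) = 2*m+1 := by omega
    rw [this, pow_succ, pow_mul]
    norm_num
  have h3 : (2*(m:ℝ)+3) ≠ 0 := by positivity
  have expand : ((-1:ℝ)^m/(2*(m:ℝ)+3)) * (-(1/2) * Real.log 2 + (1/2) * ((-1:ℝ)^(m+1) * ee m))
      = -(1/2) * Real.log 2 * ((-1:ℝ)^m/(2*(m:ℝ)+3))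
        + (1/2) * (((-1:ℝ)^m * (-1:ℝ)^(m+1)) * ee m)/(2*(m:ℝ)+3) := by ring
  rw [expand, hmm]
  ring

lemma leibniz_shift :
    Tendsto (fun N : ℕ => ∑ m ∈ Finset.range N, (-1:ℝ)^m/(2*(m:ℝ)+3)) atTop
      (nhds (1 - π/4)) := by
  have h0 : Tendsto (fun N : ℕ => ∑ i ∈ Finset.range (N+1), (-1:ℝ)^i/(2*(i:ℝ)+1)) atTop
      (nhds (π/4)) := Real.tendsto_sum_pi_div_four.comp (tendsto_add_atTop_nat 1)
  have heq : ∀ N : ℕ, ∑ m ∈ Finset.range N, (-1:ℝ)^m/(2*(m:ℝ)+3)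
      = 1 - ∑ i ∈ Finset.range (N+1), (-1:ℝ)^i/(2*(i:ℝ)+1) := by
    intro N
    rw [Finset.sum_range_succ' (fun i => (-1:ℝ)^i/(2*(i:ℝ)+1)) N]
    have : ∀ m : ℕ, (-1:ℝ)^(m+1)/(2*((m:ℝ)+1)+1) = -((-1:ℝ)^m/(2*(m:ℝ)+3)) := by
      intro m
      rw [pow_succ]
      have : (2*(m:ℝ)+3) ≠ 0 := by positivity
      field_simp
      ring
    push_cast
    simp_rw [this]
    rw [Finset.sum_neg_distrib]
    norm_num
  simp_rw [heq]
  simpa using h0.const_sub 1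


lemma intInt_neg_log : IntervalIntegrable (fun y : ℝ => -Real.log y) volume 0 1 := by
  apply intervalIntegral.intervalIntegrable_deriv_of_nonneg
    (g := fun y : ℝ => y - y * Real.log y)
  · exact (continuous_id.sub Real.continuous_mul_log).continuousOn
  · intro x hx
    simp only [min_def, max_def] at hx
    norm_num at hx
    have hx0 : x ≠ 0 := ne_of_gt hx.1
    have h1 : HasDerivAt (fun y : ℝ => y * Real.log y) (Real.log x + 1) x := by
      have := (hasDerivAt_id x).fun_mul (Real.hasDerivAt_log hx0)
      refine this.congr_deriv ?_
      symm
      simp only [id]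
      field_simp
    have := (hasDerivAt_id x).fun_sub h1
    refine this.congr_deriv ?_
    symm
    ring
  · intro x hx
    simp only [min_def, max_def] at hx
    norm_num at hx
    simp only [neg_nonneg]
    exact Real.log_nonpos hx.1.le hx.2.le

lemma intInt_pow_neg_log (k : ℕ) :
    IntervalIntegrable (fun y : ℝ => y^k * (-Real.log y)) volume 0 1 := by
  have h := intInt_neg_log.continuousOn_mul (g := fun y : ℝ => y^k) (by fun_prop)
  exact h

lemma integral_pow_neg_log (k : ℕ) :
    ∫ y in (0:ℝ)..1, y^k * (-Real.log y) = 1/((k:ℝ)+1)^2 := by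
  set c : ℝ := ((k:ℝ)+1)
  have hc : c ≠ 0 := by positivity
  have hF : ContinuousOn (fun y : ℝ => y^(k+1)/c^2 - y^(k+1) * Real.log y/c) (Set.Icc 0 1) := by
    have h1 : (fun y : ℝ => y^(k+1) * Real.log y) = fun y : ℝ => y^k * (y * Real.log y) := by
      funext y; rw [pow_succ]; ring
    apply ContinuousOn.sub (by fun_prop)
    apply ContinuousOn.div_const
    rw [h1]
    exact ((continuous_pow k).mul Real.continuous_mul_log).continuousOn
  have hD : ∀ x ∈ Set.Ioo (0:ℝ) 1,
      HasDerivWithinAt (fun y : ℝ => y^(k+1)/c^2 - y^(k+1) * Real.log y/c)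
        (x^k * (-Real.log x)) (Set.Ioi x) x := by
    intro x hx
    have hx0 : x ≠ 0 := ne_of_gt hx.1
    have h1 : HasDerivAt (fun y : ℝ => y^(k+1) * Real.log y)
        ((k+1) * x^k * Real.log x + x^k) x := by
      have := (hasDerivAt_pow (k+1) x).fun_mul (Real.hasDerivAt_log hx0)
      refine this.congr_deriv ?_
      symm
      have : x^(k+1) * x⁻¹ = x^k := by
        rw [pow_succ]; field_simp
      push_cast
      rw [this]
    have h2 := ((hasDerivAt_pow (k+1) x).div_const (c^2)).fun_sub (h1.div_const c)
    apply HasDerivAt.hasDerivWithinAt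
    refine h2.congr_deriv ?_
    symm
    push_cast
    field_simp
    ring
  have := intervalIntegral.integral_eq_sub_of_hasDeriv_right_of_le (by norm_num)
    (by rw [← uIcc01] at hF; exact hF.mono (by rw [uIcc01]))
    hD (intInt_pow_neg_log k)
  rw [this]
  norm_num [Real.log_one]


lemma summable_inv_sq : Summable (fun n : ℕ => 1/((n:ℝ)+1)^2) := by
  have h : Summable (fun n : ℕ => 1/((n:ℝ))^2) := by
    have := Real.summable_one_div_nat_pow (p := 2)
    exact this.mpr one_lt_two
  have := h.comp_injective (Nat.succ_injective)
  refine this.congr fun n => ?_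
  simp [Nat.succ_eq_add_one]

lemma summable_catalan : Summable (fun n : ℕ => (-1:ℝ)^n/(2*(n:ℝ)+1)^2) := by
  apply Summable.of_abs
  apply Summable.of_nonneg_of_le (fun n => abs_nonneg _) (fun n => ?_) summable_inv_sq
  rw [abs_div, abs_pow, abs_neg, abs_one, one_pow]
  rw [abs_of_pos (by positivity : (0:ℝ) < (2*(n:ℝ)+1)^2)]
  apply one_div_le_one_div_of_le (by positivity)
  nlinarith [Nat.cast_nonneg (α := ℝ) n]

lemma hasSum_catalan : HasSum (fun n : ℕ => (-1:ℝ)^n/(2*(n:ℝ)+1)^2) catalanConst := by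
  unfold catalanConst
  exact summable_catalan.hasSum

lemma intInt_neg_log_div : IntervalIntegrable (fun y : ℝ => (-Real.log y) * (1/(1+y^2))) volume 0 1 := by
  apply intInt_neg_log.mul_continuousOn
  apply ContinuousOn.div continuousOn_const (by fun_prop)
  intro x _; positivity

lemma catalan_integral :
    ∫ y in (0:ℝ)..1, (-Real.log y) * (1/(1+y^2)) = catalanConst := by
  set I : ℝ := ∫ y in (0:ℝ)..1, (-Real.log y) * (1/(1+y^2)) with hI
  have key : ∀ N : ℕ, I = (∑ n ∈ Finset.range N, (-1:ℝ)^n/(2*(n:ℝ)+1)^2)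
      + ∫ y in (0:ℝ)..1, (-Real.log y) * ((-y^2)^N/(1+y^2)) := by
    intro N
    have hpt : Set.EqOn (fun y : ℝ => (-Real.log y) * (1/(1+y^2)))
        (fun y : ℝ => (∑ n ∈ Finset.range N, (-1:ℝ)^n * (y^(2*n) * (-Real.log y)))
          + (-Real.log y) * ((-y^2)^N/(1+y^2))) (Set.uIcc 0 1) := by
      intro y _
      have hy1 : (-y^2 : ℝ) ≠ 1 := by nlinarith [sq_nonneg y]
      have hg := geom_sum_eq hy1 N
      have h2 : (0:ℝ) < 1 + y^2 := by positivity
      have hterm : ∀ n : ℕ, (-1:ℝ)^n * (y^(2*n) * (-Real.log y)) = (-y^2)^n * (-Real.log y) := by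
        intro n
        rw [neg_pow, pow_mul]
        ring
      simp only
      simp_rw [hterm]
      rw [← Finset.sum_mul, hg]
      have hne : (-y^2 - 1 : ℝ) ≠ 0 := by intro h; apply ne_of_gt h2; linarith
      have hne2 : (1 + y^2 : ℝ) ≠ 0 := ne_of_gt h2
      field_simp
      ring
    rw [hI, intervalIntegral.integral_congr hpt]
    have hint1 : ∀ n ∈ Finset.range N, IntervalIntegrable
        (fun y : ℝ => (-1:ℝ)^n * (y^(2*n) * (-Real.log y))) volume 0 1 :=
      fun n _ => (intInt_pow_neg_log (2*n)).const_mul _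
    have hint2 : IntervalIntegrable (fun y : ℝ => (-Real.log y) * ((-y^2)^N/(1+y^2))) volume 0 1 := by
      apply intInt_neg_log.mul_continuousOn
      apply ContinuousOn.div (by fun_prop) (by fun_prop)
      intro x _; positivity
    have hsumint : IntervalIntegrable
        (fun y : ℝ => ∑ n ∈ Finset.range N, (-1:ℝ)^n * (y^(2*n) * (-Real.log y))) volume 0 1 := by
      have h := IntervalIntegrable.sum (Finset.range N) hint1
      have heq : (∑ n ∈ Finset.range N, fun y : ℝ => (-1:ℝ)^n * (y^(2*n) * (-Real.log y)))
          = fun y : ℝ => ∑ n ∈ Finset.range N, (-1:ℝ)^n * (y^(2*n) * (-Real.log y)) := by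
        funext y; simp
      rwa [heq] at h
    rw [intervalIntegral.integral_add hsumint hint2]
    congr 1
    rw [intervalIntegral.integral_finset_sum hint1]
    apply Finset.sum_congr rfl
    intro n _
    rw [intervalIntegral.integral_const_mul, integral_pow_neg_log (2*n)]
    push_cast; ring
  have hbound : ∀ N : ℕ, ‖∫ y in (0:ℝ)..1, (-Real.log y) * ((-y^2)^N/(1+y^2))‖
      ≤ 1/(2*(N:ℝ)+1)^2 := by
    intro N
    have h := intervalIntegral.norm_integral_le_abs_of_norm_le
      (g := fun y : ℝ => y^(2*N) * (-Real.log y))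
      (μ := volume) (f := fun y : ℝ => (-Real.log y) * ((-y^2)^N/(1+y^2)))
      (a := 0) (b := 1) ?_ (intInt_pow_neg_log (2*N))
    · rw [integral_pow_neg_log (2*N)] at h
      refine h.trans (le_of_eq ?_)
      rw [abs_of_nonneg (by positivity)]
      push_cast; ring_nf
    · rw [Set.uIoc_of_le (by norm_num : (0:ℝ) ≤ 1)]
      apply (ae_restrict_iff' measurableSet_Ioc).mpr
      apply ae_of_all
      intro y hy
      have hy0 : 0 < y := hy.1
      have hy1 : y ≤ 1 := hy.2
      have hlog : 0 ≤ -Real.log y := by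
        simp only [neg_nonneg]; exact Real.log_nonpos hy0.le hy1
      have h2 : (0:ℝ) < 1 + y^2 := by positivity
      rw [Real.norm_eq_abs, abs_mul, abs_of_nonneg hlog, abs_div, abs_pow, abs_neg,
        abs_of_nonneg (sq_nonneg y), abs_of_pos h2, ← pow_mul]
      rw [mul_comm]
      apply mul_le_mul_of_nonneg_right _ hlog
      exact div_le_self (by positivity) (by nlinarith [sq_nonneg y])
  have hE : Tendsto (fun N : ℕ => ∫ y in (0:ℝ)..1, (-Real.log y) * ((-y^2)^N/(1+y^2)))
      atTop (nhds 0) := by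
    apply squeeze_zero_norm hbound
    have h1 : Tendsto (fun N : ℕ => 1/((N:ℝ)+1)) atTop (nhds 0) :=
      tendsto_one_div_add_atTop_nhds_zero_nat
    apply squeeze_zero (fun N => by positivity) (fun N => ?_) h1
    apply one_div_le_one_div_of_le (by positivity)
    nlinarith [Nat.cast_nonneg (α := ℝ) N]
  have hS : Tendsto (fun N : ℕ => ∑ n ∈ Finset.range N, (-1:ℝ)^n/(2*(n:ℝ)+1)^2)
      atTop (nhds I) := by
    have heq : (fun N : ℕ => ∑ n ∈ Finset.range N, (-1:ℝ)^n/(2*(n:ℝ)+1)^2)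
        = fun N => I - (∫ y in (0:ℝ)..1, (-Real.log y)*((-y^2)^N/(1+y^2))) := by
      funext N
      have := key N
      linarith
    rw [heq]
    simpa using (tendsto_const_nhds (x := I)).sub hE
  exact tendsto_nhds_unique hS hasSum_catalan.tendsto_sum_nat


noncomputable def phi : ℝ → ℝ := fun t => (1-t)/(1+t)

lemma phi_deriv : ∀ t ∈ Set.uIcc (0:ℝ) 1, HasDerivAt phi (-2/(1+t)^2) t := by
  intro t ht
  rw [uIcc01] at ht
  have h2 : (0:ℝ) < 1 + t := one_add_pos ht
  have h := ((hasDerivAt_id t).const_sub 1).div ((hasDerivAt_id t).const_add 1) (ne_of_gt h2)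
  refine h.congr_deriv ?_
  symm
  simp only [id]
  field_simp
  ring

lemma phi_cont : ContinuousOn phi (Set.uIcc (0:ℝ) 1) := by
  rw [uIcc01]
  apply ContinuousOn.div (by fun_prop) (by fun_prop)
  intro x hx; exact ne_of_gt (one_add_pos hx)

lemma phi_deriv_cont : ContinuousOn (fun t : ℝ => -2/(1+t)^2) (Set.uIcc (0:ℝ) 1) := by
  rw [uIcc01]
  apply ContinuousOn.div (by fun_prop) (by fun_prop)
  intro x hx
  have := one_add_pos hx
  positivity

lemma phi_mem (t : ℝ) (ht : t ∈ Set.Icc (0:ℝ) 1) : phi t ∈ Set.Icc (0:ℝ) 1 := by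
  have h2 : (0:ℝ) < 1 + t := one_add_pos ht
  unfold phi
  constructor
  · apply div_nonneg (by linarith [ht.2]) h2.le
  · rw [div_le_one h2]; linarith [ht.1]

lemma phi_image_sub : phi '' Set.uIcc (0:ℝ) 1 ⊆ Set.Icc 0 1 := by
  rw [uIcc01]
  rintro y ⟨t, ht, rfl⟩
  exact phi_mem t ht

lemma phi_zero : phi 0 = 1 := by norm_num [phi]
lemma phi_one : phi 1 = 0 := by norm_num [phi]

lemma contOn_log_one_add_div : ContinuousOn (fun y : ℝ => Real.log (1+y)/(1+y^2)) (Set.Icc 0 1) := by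
  apply ContinuousOn.div
  · apply ContinuousOn.log (by fun_prop)
    intro x hx; exact ne_of_gt (one_add_pos hx)
  · fun_prop
  · intro x _; positivity

lemma intInt_log_one_add_div :
    IntervalIntegrable (fun y : ℝ => Real.log (1+y)/(1+y^2)) volume 0 1 :=
  (contOn_log_one_add_div.mono (by rw [uIcc01] : Set.uIcc (0:ℝ) 1 ⊆ Set.Icc 0 1)).intervalIntegrable

lemma Lplus : ∫ y in (0:ℝ)..1, Real.log (1+y)/(1+y^2) = π/8 * Real.log 2 := by
  have hsub := intervalIntegral.integral_comp_smul_deriv' (f := phi)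
    (f' := fun t => -2/(1+t)^2) (g := fun y : ℝ => Real.log (1+y)/(1+y^2))
    phi_deriv phi_deriv_cont (contOn_log_one_add_div.mono phi_image_sub)
  rw [phi_zero, phi_one] at hsub
  have hlhs : ∫ t in (0:ℝ)..1, (-2/(1+t)^2) • ((fun y : ℝ => Real.log (1+y)/(1+y^2)) ∘ phi) t
      = ∫ t in (0:ℝ)..1, -((Real.log 2 - Real.log (1+t))/(1+t^2)) := by
    apply intervalIntegral.integral_congr
    intro t ht
    rw [uIcc01] at ht
    have h2 : (0:ℝ) < 1 + t := one_add_pos ht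
    have h3 : (0:ℝ) < 1 + t^2 := by positivity
    simp only [Function.comp_apply, smul_eq_mul, phi]
    have e1 : 1 + (1-t)/(1+t) = 2/(1+t) := by field_simp; ring
    have e2 : 1 + ((1-t)/(1+t))^2 = 2*(1+t^2)/(1+t)^2 := by field_simp; ring
    rw [e1, e2, Real.log_div (by norm_num) (ne_of_gt h2)]
    field_simp
  rw [hlhs] at hsub
  have hrev : ∫ y in (1:ℝ)..0, Real.log (1+y)/(1+y^2)
      = -∫ y in (0:ℝ)..1, Real.log (1+y)/(1+y^2) := intervalIntegral.integral_symm 0 1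
  rw [hrev] at hsub
  have hsplit : ∫ t in (0:ℝ)..1, -((Real.log 2 - Real.log (1+t))/(1+t^2))
      = -(Real.log 2 * (π/4) - ∫ t in (0:ℝ)..1, Real.log (1+t)/(1+t^2)) := by
    rw [intervalIntegral.integral_neg]
    congr 1
    have hpt : Set.EqOn (fun t : ℝ => (Real.log 2 - Real.log (1+t))/(1+t^2))
        (fun t : ℝ => Real.log 2 * (1/(1+t^2)) - Real.log (1+t)/(1+t^2)) (Set.uIcc 0 1) := by
      intro t _
      simp only
      ring
    rw [intervalIntegral.integral_congr hpt, intervalIntegral.integral_sub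
        ((intervalIntegrable_one_div_one_add_sq).const_mul _) intInt_log_one_add_div,
      intervalIntegral.integral_const_mul, integral_one_div_one_add_sq]
    rw [Real.arctan_one, Real.arctan_zero]
    ring_nf
  rw [hsplit] at hsub
  have := hsub
  linarith [this]


lemma ae_ne (c : ℝ) : ∀ᵐ t : ℝ, t ≠ c := by
  rw [ae_iff]
  have h : {t : ℝ | ¬ t ≠ c} = {c} := by ext t; simp
  rw [h]
  exact measure_singleton c

lemma intInt_log : IntervalIntegrable Real.log volume 0 1 := by
  have h := intInt_neg_log.neg
  have heq : (-fun y : ℝ => -Real.log y) = Real.log := by funext y; simp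
  rwa [heq] at h

lemma intInt_log_one_sub : IntervalIntegrable (fun y : ℝ => Real.log (1-y)) volume 0 1 := by
  have h := intInt_log.comp_sub_left 1
  norm_num at h
  exact h.symm

lemma intInt_log_one_sub_div :
    IntervalIntegrable (fun y : ℝ => Real.log (1-y)/(1+y^2)) volume 0 1 := by
  have h := intInt_log_one_sub.mul_continuousOn (g := fun y : ℝ => 1/(1+y^2))
    (by apply ContinuousOn.div continuousOn_const (by fun_prop); intro x _; positivity)
  have heq : (fun y : ℝ => Real.log (1-y) * (1/(1+y^2)))
      = fun y : ℝ => Real.log (1-y)/(1+y^2) := by funext y; ring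
  rwa [heq] at h

lemma int_log_div : ∫ t in (0:ℝ)..1, Real.log t * (1/(1+t^2)) = -catalanConst := by
  have heq : (fun t : ℝ => Real.log t * (1/(1+t^2)))
      = fun t : ℝ => -((-Real.log t) * (1/(1+t^2))) := by funext t; ring
  rw [heq, intervalIntegral.integral_neg, catalan_integral]

noncomputable def rfun : ℝ → ℝ :=
  fun t => -((Real.log 2 + Real.log t - Real.log (1+t))/(1+t^2))

lemma intInt_rfun : IntervalIntegrable rfun volume 0 1 := by
  have h1 : IntervalIntegrable (fun t : ℝ => -Real.log 2 - Real.log t + Real.log (1+t))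
      volume 0 1 := by
    apply IntervalIntegrable.add
    · exact intervalIntegrable_const.sub intInt_log
    · apply ContinuousOn.intervalIntegrable
      apply ContinuousOn.log (by fun_prop)
      intro x hx; rw [uIcc01] at hx; exact ne_of_gt (one_add_pos hx)
  have h := h1.mul_continuousOn (g := fun t : ℝ => 1/(1+t^2))
    (by apply ContinuousOn.div continuousOn_const (by fun_prop); intro x _; positivity)
  have heq : (fun t : ℝ => (-Real.log 2 - Real.log t + Real.log (1+t)) * (1/(1+t^2))) = rfun := by
    funext t
    have ht : (1+t^2 : ℝ) ≠ 0 := by positivity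
    unfold rfun
    field_simp
    ring
  rwa [heq] at h

lemma int_rfun : ∫ t in (0:ℝ)..1, rfun t = catalanConst - π/8 * Real.log 2 := by
  have hpt : Set.EqOn rfun
      (fun t : ℝ => (-(Real.log 2)) * (1/(1+t^2)) - Real.log t * (1/(1+t^2))
        + Real.log (1+t)/(1+t^2)) (Set.uIcc 0 1) := by
    intro t _
    have ht : (1+t^2 : ℝ) ≠ 0 := by positivity
    unfold rfun
    simp only
    field_simp
    ring
  rw [intervalIntegral.integral_congr hpt]
  have i1 : IntervalIntegrable (fun t : ℝ => (-(Real.log 2)) * (1/(1+t^2))) volume 0 1 :=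
    intervalIntegrable_one_div_one_add_sq.const_mul _
  have i2 : IntervalIntegrable (fun t : ℝ => Real.log t * (1/(1+t^2))) volume 0 1 := by
    have h := intInt_log.mul_continuousOn (g := fun t : ℝ => 1/(1+t^2))
      (by apply ContinuousOn.div continuousOn_const (by fun_prop); intro x _; positivity)
    exact h
  rw [intervalIntegral.integral_add (i1.sub i2) intInt_log_one_add_div,
    intervalIntegral.integral_sub i1 i2, intervalIntegral.integral_const_mul,
    integral_one_div_one_add_sq, int_log_div, Lplus, Real.arctan_one, Real.arctan_zero]
  ring

lemma Lminus : ∫ y in (0:ℝ)..1, Real.log (1-y)/(1+y^2) = π/8 * Real.log 2 - catalanConst := by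
  have key : ∀ t : ℝ, t ≠ 0 → t ≠ -1 →
      (-2/(1+t)^2) • ((fun y : ℝ => Real.log (1-y)/(1+y^2)) ∘ phi) t = rfun t := by
    intro t ht0 ht1
    have h2 : (1+t : ℝ) ≠ 0 := fun h => ht1 (by linarith)
    have h3 : (0:ℝ) < 1 + t^2 := by positivity
    simp only [Function.comp_apply, smul_eq_mul, phi]
    have e1 : 1 - (1-t)/(1+t) = 2*t/(1+t) := by field_simp; ring
    have e2 : 1 + ((1-t)/(1+t))^2 = 2*(1+t^2)/(1+t)^2 := by field_simp; ring
    rw [e1, e2, Real.log_div (by simp [ht0] : (2*t : ℝ) ≠ 0) h2,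
      Real.log_mul (by norm_num) ht0]
    unfold rfun
    field_simp
  have hae : ∀ᵐ t : ℝ, (-2/(1+t)^2) • ((fun y : ℝ => Real.log (1-y)/(1+y^2)) ∘ phi) t
      = rfun t := by
    filter_upwards [ae_ne 0, ae_ne (-1)] with t ht0 ht1
    exact key t ht0 ht1
  have hsub := intervalIntegral.integral_comp_smul_deriv''' (f := phi)
    (f' := fun t : ℝ => -2/(1+t)^2) (g := fun y : ℝ => Real.log (1-y)/(1+y^2))
    (a := 0) (b := 1) phi_cont ?_ ?_ ?_ ?_
  · rw [phi_zero, phi_one, intervalIntegral.integral_symm 0 1] at hsub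
    have hlhs : ∫ t in (0:ℝ)..1,
        (-2/(1+t)^2) • ((fun y : ℝ => Real.log (1-y)/(1+y^2)) ∘ phi) t
        = ∫ t in (0:ℝ)..1, rfun t := by
      apply intervalIntegral.integral_congr_ae
      filter_upwards [hae] with t h _
      exact h
    rw [hlhs, int_rfun] at hsub
    linarith [hsub]
  · intro x hx
    simp only [min_def, max_def] at hx
    norm_num at hx
    exact (phi_deriv x (by rw [uIcc01]; exact ⟨hx.1.le, hx.2.le⟩)).hasDerivWithinAt
  · apply ContinuousOn.mono (s := Set.Iio 1)
    · apply ContinuousOn.div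
      · apply ContinuousOn.log (by fun_prop)
        intro x hx
        have : x < 1 := hx
        intro h; linarith [h]
      · fun_prop
      · intro x _; positivity
    · rintro y ⟨t, ht, rfl⟩
      simp only [min_def, max_def] at ht
      norm_num at ht
      have h2 : (0:ℝ) < 1 + t := by linarith [ht.1]
      show phi t < 1
      unfold phi
      rw [div_lt_one h2]
      linarith [ht.1]
  · apply MeasureTheory.IntegrableOn.mono_set _ phi_image_sub
    exact (intervalIntegrable_iff_integrableOn_Icc_of_le (by norm_num)).mp intInt_log_one_sub_div
  · have hr : IntegrableOn rfun (Set.uIcc (0:ℝ) 1) volume := by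
      rw [uIcc01]
      exact (intervalIntegrable_iff_integrableOn_Icc_of_le (by norm_num)).mp intInt_rfun
    apply hr.congr
    apply ae_restrict_of_ae
    filter_upwards [hae] with t h
    exact h.symm


lemma int_inv_one_sub {y : ℝ} (hy0 : 0 < y) (hy1 : y < 1) :
    ∫ x in (0:ℝ)..1, 1/(1-x*y^2) = -(Real.log (1-y^2))/y^2 := by
  have hyne : y ≠ 0 := ne_of_gt hy0
  have hy2 : y^2 < 1 := by nlinarith
  have hden : ∀ x ∈ Set.Icc (0:ℝ) 1, (0:ℝ) < 1 - x*y^2 := by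
    intro x hx
    nlinarith [hx.1, hx.2, sq_nonneg y]
  have hD : ∀ x ∈ Set.uIcc (0:ℝ) 1,
      HasDerivAt (fun x => -(Real.log (1-x*y^2)/y^2)) (1/(1-x*y^2)) x := by
    intro x hx
    rw [uIcc01] at hx
    have hne : (1 - x*y^2 : ℝ) ≠ 0 := ne_of_gt (hden x hx)
    have hinner : HasDerivAt (fun x : ℝ => 1 - x*y^2) (-y^2) x := by
      simpa using ((hasDerivAt_id x).mul_const (y^2)).const_sub 1
    have h2 := ((hinner.log hne).div_const (y^2)).fun_neg
    refine h2.congr_deriv ?_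
    symm
    have hy2ne : (y^2:ℝ) ≠ 0 := pow_ne_zero 2 hyne
    rw [one_div]
    field_simp
  have hInt : IntervalIntegrable (fun x : ℝ => 1/(1-x*y^2)) volume 0 1 := by
    apply ContinuousOn.intervalIntegrable
    apply ContinuousOn.div continuousOn_const
    · fun_prop
    · intro x hx
      rw [uIcc01] at hx
      exact ne_of_gt (hden x hx)
  rw [intervalIntegral.integral_eq_sub_of_hasDerivAt hD hInt]
  have h1 : (1 - 1*y^2 : ℝ) = 1 - y^2 := by ring
  have h0 : (1 - 0*y^2 : ℝ) = 1 := by ring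
  rw [h1, h0, Real.log_one]
  ring

noncomputable def Hfun : ℝ → ℝ := fun y =>
  -((Real.log (1-y) + Real.log (1+y))/(1+y^2)) - Real.log 2 * (y^2/(1+y^2))

lemma hasSum_ee_pow {y : ℝ} (hy0 : 0 < y) (hy1 : y < 1) :
    HasSum (fun m : ℕ => ee m * y^(2*m+2)) (Hfun y) := by
  have hyne : y ≠ 0 := ne_of_gt hy0
  have hy2pos : (0:ℝ) < y^2 := by positivity
  have hy2 : y^2 < 1 := by nlinarith
  have hy2' : (0:ℝ) ≤ y^2 := sq_nonneg y
  -- summability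
  have hsummable : Summable (fun m : ℕ => ee m * y^(2*m+2)) := by
    apply Summable.of_nonneg_of_le
      (fun m => mul_nonneg (ee_nonneg m) (by positivity))
      (fun m => ?_) (summable_geometric_of_lt_one hy2' hy2 |>.mul_left (y^2))
    have h1 : ee m * y^(2*m+2) ≤ 1 * y^(2*m+2) := by
      apply mul_le_mul_of_nonneg_right _ (by positivity)
      exact (ee_le m).trans (by rw [div_le_one (by positivity)]; linarith [Nat.cast_nonneg (α := ℝ) m])
    rw [one_mul] at h1
    refine h1.trans (le_of_eq ?_)
    rw [pow_add, pow_mul]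
    ring
  -- value via integral_tsum
  have hval : ∑' m : ℕ, ee m * y^(2*m+2) = Hfun y := by
    classical
    set S : Set ℝ := Set.Ioo 0 1
    have hmeasS : MeasurableSet S := measurableSet_Ioo
    set f : ℕ → ℝ → ℝ := fun m x => y^(2*m+2) * (x^(m+1)/(1+x))
    have hmeas : ∀ m : ℕ, AEStronglyMeasurable (f m) (volume.restrict S) := by
      intro m
      apply ContinuousOn.aestronglyMeasurable _ hmeasS
      apply ContinuousOn.mul continuousOn_const
      exact (contOn_pow_div m).mono (Set.Ioo_subset_Icc_self)
    have hbound : ∑' m : ℕ, ∫⁻ x in S, ‖f m x‖₊ ∂volume ≠ ⊤ := by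
      have hle : ∀ m : ℕ, ∫⁻ x in S, ‖f m x‖₊ ∂volume ≤ ENNReal.ofReal (y^2) ^ (m+1) := by
        intro m
        have hptb : ∀ x ∈ S, (‖f m x‖₊ : ℝ≥0∞) ≤ ENNReal.ofReal ((y^2)^(m+1)) := by
          intro x hx
          have hx0 : (0:ℝ) < x := hx.1
          have hx1 : x < 1 := hx.2
          have h1x : (0:ℝ) < 1 + x := by linarith
          have hfnn : 0 ≤ f m x := by
            apply mul_nonneg (by positivity)
            positivity
          have hfle : f m x ≤ (y^2)^(m+1) := by
            have : x^(m+1)/(1+x) ≤ 1 := by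
              rw [div_le_one h1x]
              calc x^(m+1) ≤ 1 := by
                    apply pow_le_one₀ hx0.le hx1.le
                _ ≤ 1 + x := by linarith
            calc f m x ≤ y^(2*m+2) * 1 := by
                  apply mul_le_mul_of_nonneg_left this (by positivity)
              _ = (y^2)^(m+1) := by rw [mul_one, ← pow_mul]; ring_nf
          rw [← enorm_eq_nnnorm, ← ofReal_norm, Real.norm_of_nonneg hfnn]
          exact ENNReal.ofReal_le_ofReal hfle
        calc ∫⁻ x in S, ‖f m x‖₊ ∂volume
            ≤ ∫⁻ _ in S, ENNReal.ofReal ((y^2)^(m+1)) ∂volume := by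
              apply MeasureTheory.setLIntegral_mono' hmeasS hptb
          _ = ENNReal.ofReal ((y^2)^(m+1)) * volume S := by
              rw [MeasureTheory.setLIntegral_const]
          _ ≤ ENNReal.ofReal ((y^2)^(m+1)) * 1 := by
              apply mul_le_mul_right
              simp [S, Real.volume_Ioo]
          _ = ENNReal.ofReal (y^2) ^ (m+1) := by
              rw [mul_one, ENNReal.ofReal_pow hy2']
      apply ne_top_of_le_ne_top _ (ENNReal.tsum_le_tsum hle)
      have hr : ENNReal.ofReal (y^2) < 1 := by
        rw [ENNReal.ofReal_lt_one]
        exact hy2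
      have : ∑' m : ℕ, ENNReal.ofReal (y^2) ^ (m+1)
          ≤ ∑' m : ℕ, ENNReal.ofReal (y^2) ^ m := by
        apply ENNReal.tsum_le_tsum
        intro m
        exact pow_le_pow_of_le_one zero_le hr.le (by omega)
      apply ne_top_of_le_ne_top _ this
      rw [ENNReal.tsum_geometric]
      simp only [ne_eq, ENNReal.inv_eq_top]
      intro h
      rw [tsub_eq_zero_iff_le] at h
      exact absurd h (not_le.mpr hr)
    have hswap := MeasureTheory.integral_tsum hmeas hbound
    -- RHS: each integral
    have hterm : ∀ m : ℕ, ∫ x in S, f m x ∂volume = ee m * y^(2*m+2) := by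
      intro m
      rw [← MeasureTheory.integral_Ioc_eq_integral_Ioo,
        ← intervalIntegral.integral_of_le (by norm_num : (0:ℝ) ≤ 1)]
      rw [intervalIntegral.integral_const_mul, ee]
      ring
    -- LHS pointwise
    have hpt : ∀ x ∈ S, ∑' m : ℕ, f m x = (y^2/(1+y^2)) * (1/(1-x*y^2)) - (y^2/(1+y^2)) * (1/(1+x)) := by
      intro x hx
      have hx0 : (0:ℝ) < x := hx.1
      have hx1 : x < 1 := hx.2
      have h1x : (0:ℝ) < 1 + x := by linarith
      have hr0 : (0:ℝ) ≤ x*y^2 := by positivity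
      have hr1 : x*y^2 < 1 := by nlinarith
      have hg := (hasSum_geometric_of_lt_one hr0 hr1).mul_right (x*y^2/(1+x))
      have hco : (fun m : ℕ => (x*y^2)^m * (x*y^2/(1+x))) = fun m => f m x := by
        funext m
        show (x*y^2)^m * (x*y^2/(1+x)) = y^(2*m+2) * (x^(m+1)/(1+x))
        field_simp
        ring
      rw [hco] at hg
      rw [hg.tsum_eq]
      have hne1 : (1 - x*y^2 : ℝ) ≠ 0 := by nlinarith
      have hne2 : (1 + x : ℝ) ≠ 0 := ne_of_gt h1x
      have hne3 : (1 + y^2 : ℝ) ≠ 0 := by positivity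
      field_simp
      ring
    -- combine
    have hleft : ∫ x in S, (∑' m : ℕ, f m x) ∂volume
        = ∫ x in S, ((y^2/(1+y^2)) * (1/(1-x*y^2)) - (y^2/(1+y^2)) * (1/(1+x))) ∂volume := by
      apply MeasureTheory.setIntegral_congr_fun hmeasS
      intro x hx
      exact hpt x hx
    have hright : ∫ x in S, ((y^2/(1+y^2)) * (1/(1-x*y^2)) - (y^2/(1+y^2)) * (1/(1+x))) ∂volume
        = Hfun y := by
      rw [← MeasureTheory.integral_Ioc_eq_integral_Ioo,
        ← intervalIntegral.integral_of_le (by norm_num : (0:ℝ) ≤ 1)]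
      have hInt1 : IntervalIntegrable (fun x : ℝ => 1/(1-x*y^2)) volume 0 1 := by
        apply ContinuousOn.intervalIntegrable
        apply ContinuousOn.div continuousOn_const (by fun_prop)
        intro x hx
        rw [uIcc01] at hx
        nlinarith [hx.1, hx.2]
      have hInt2 : IntervalIntegrable (fun x : ℝ => 1/(1+x)) volume 0 1 :=
        (contOn_inv_one_add.mono (by rw [uIcc01] : Set.uIcc (0:ℝ) 1 ⊆ Set.Icc 0 1)).intervalIntegrable
      rw [intervalIntegral.integral_sub (hInt1.const_mul _) (hInt2.const_mul _),
        intervalIntegral.integral_const_mul, intervalIntegral.integral_const_mul,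
        int_inv_one_sub hy0 hy1, int_one_div_one_add]
      have hfac : (1-y^2 : ℝ) = (1-y)*(1+y) := by ring
      rw [hfac, Real.log_mul (by linarith : (1-y:ℝ) ≠ 0) (by linarith : (1+y:ℝ) ≠ 0)]
      unfold Hfun
      have hy2ne : (y^2:ℝ) ≠ 0 := pow_ne_zero 2 hyne
      have hne3 : (1 + y^2 : ℝ) ≠ 0 := by positivity
      field_simp
    rw [hswap] at hleft
    rw [← hright, ← hleft]
    exact tsum_congr fun m => (hterm m).symm
  exact hsummable.hasSum_iff.mpr hval


lemma dm_le (m : ℕ) : ee m/(2*(m:ℝ)+3) ≤ 1/((m:ℝ)+1)^2 := by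
  have hm : (0:ℝ) ≤ (m:ℝ) := Nat.cast_nonneg m
  have h1 : ee m/(2*(m:ℝ)+3) ≤ (1/((m:ℝ)+2))/(2*(m:ℝ)+3) := by
    gcongr
    exact ee_le m
  refine h1.trans ?_
  rw [div_div]
  apply one_div_le_one_div_of_le (by positivity)
  nlinarith

lemma summable_dm : Summable (fun m : ℕ => ee m/(2*(m:ℝ)+3)) := by
  apply Summable.of_nonneg_of_le
    (fun m => div_nonneg (ee_nonneg m) (by positivity)) dm_le summable_inv_sq

lemma intInt_sq_div : IntervalIntegrable (fun y : ℝ => y^2/(1+y^2)) volume 0 1 := by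
  apply ContinuousOn.intervalIntegrable
  apply ContinuousOn.div (by fun_prop) (by fun_prop)
  intro x _; positivity

lemma int_sq_div : ∫ y in (0:ℝ)..1, y^2/(1+y^2) = 1 - π/4 := by
  have hpt : Set.EqOn (fun y : ℝ => y^2/(1+y^2))
      (fun y : ℝ => 1 - 1/(1+y^2)) (Set.uIcc 0 1) := by
    intro y _
    have h : (1+y^2 : ℝ) ≠ 0 := by positivity
    simp only
    field_simp
    ring
  rw [intervalIntegral.integral_congr hpt,
    intervalIntegral.integral_sub intervalIntegrable_const
      intervalIntegrable_one_div_one_add_sq,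
    integral_one_div_one_add_sq, Real.arctan_one, Real.arctan_zero]
  simp

lemma int_Hfun : ∫ y in (0:ℝ)..1, Hfun y = catalanConst - Real.log 2 := by
  have hpt : Set.EqOn Hfun
      (fun y : ℝ => -(Real.log (1-y)/(1+y^2)) - Real.log (1+y)/(1+y^2)
        - Real.log 2 * (y^2/(1+y^2))) (Set.uIcc 0 1) := by
    intro y _
    unfold Hfun
    simp only
    ring
  have i1 : IntervalIntegrable (fun y : ℝ => -(Real.log (1-y)/(1+y^2))) volume 0 1 := by
    have h := intInt_log_one_sub_div.neg
    convert h using 1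
    rfl
  rw [intervalIntegral.integral_congr hpt,
    intervalIntegral.integral_sub (i1.sub intInt_log_one_add_div)
      (intInt_sq_div.const_mul _),
    intervalIntegral.integral_sub i1 intInt_log_one_add_div,
    intervalIntegral.integral_neg, intervalIntegral.integral_const_mul,
    Lminus, Lplus, int_sq_div]
  ring

lemma hasSum_dm : HasSum (fun m : ℕ => ee m/(2*(m:ℝ)+3)) (catalanConst - Real.log 2) := by
  apply summable_dm.hasSum_iff.mpr
  classical
  set S : Set ℝ := Set.Ioo 0 1
  have hmeasS : MeasurableSet S := measurableSet_Ioo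
  set g : ℕ → ℝ → ℝ := fun m y => ee m * y^(2*m+2) with hg
  have hcont : ∀ m : ℕ, Continuous (g m) := fun m => continuous_const.mul (continuous_pow _)
  have hint : ∀ m : ℕ, IntegrableOn (g m) S volume := by
    intro m
    apply MeasureTheory.IntegrableOn.mono_set _ (Set.Ioo_subset_Icc_self)
    exact (hcont m).integrableOn_Icc
  have hterm : ∀ m : ℕ, ∫ y in S, g m y ∂volume = ee m/(2*(m:ℝ)+3) := by
    intro m
    rw [← MeasureTheory.integral_Ioc_eq_integral_Ioo,
      ← intervalIntegral.integral_of_le (by norm_num : (0:ℝ) ≤ 1),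
      intervalIntegral.integral_const_mul, integral_pow]
    push_cast
    rw [one_pow, zero_pow (by omega)]
    ring
  have hmeas : ∀ m : ℕ, AEStronglyMeasurable (g m) (volume.restrict S) :=
    fun m => (hcont m).aestronglyMeasurable
  have hbound : ∑' m : ℕ, ∫⁻ y in S, ‖g m y‖₊ ∂volume ≠ ⊤ := by
    have heach : ∀ m : ℕ, ∫⁻ y in S, ‖g m y‖₊ ∂volume = ENNReal.ofReal (ee m/(2*(m:ℝ)+3)) := by
      intro m
      have hnn : 0 ≤ᵐ[volume.restrict S] g m :=
        (ae_restrict_iff' hmeasS).mpr (ae_of_all _ fun y hy =>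
          mul_nonneg (ee_nonneg m) (pow_nonneg hy.1.le _))
      rw [← hterm m, MeasureTheory.ofReal_integral_eq_lintegral_ofReal (hint m) hnn]
      apply lintegral_congr_ae
      apply (ae_restrict_iff' hmeasS).mpr
      apply ae_of_all
      intro y hy
      have h0 : 0 ≤ g m y := mul_nonneg (ee_nonneg m) (pow_nonneg hy.1.le _)
      show (‖g m y‖₊ : ℝ≥0∞) = ENNReal.ofReal (g m y)
      rw [← enorm_eq_nnnorm, ← ofReal_norm, Real.norm_of_nonneg h0]
    simp_rw [heach]
    have hle : ∀ m : ℕ, ENNReal.ofReal (ee m/(2*(m:ℝ)+3)) ≤ ENNReal.ofReal (1/((m:ℝ)+1)^2) :=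
      fun m => ENNReal.ofReal_le_ofReal (dm_le m)
    apply ne_top_of_le_ne_top _ (ENNReal.tsum_le_tsum hle)
    rw [← ENNReal.ofReal_tsum_of_nonneg (fun m => by positivity) summable_inv_sq]
    exact ENNReal.ofReal_ne_top
  have hswap := MeasureTheory.integral_tsum hmeas hbound
  have hleft : ∫ y in S, (∑' m : ℕ, g m y) ∂volume = ∫ y in S, Hfun y ∂volume := by
    apply MeasureTheory.setIntegral_congr_fun hmeasS
    intro y hy
    exact (hasSum_ee_pow hy.1 hy.2).tsum_eq
  have hright : ∫ y in S, Hfun y ∂volume = catalanConst - Real.log 2 := by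
    rw [← MeasureTheory.integral_Ioc_eq_integral_Ioo,
      ← intervalIntegral.integral_of_le (by norm_num : (0:ℝ) ≤ 1)]
    exact int_Hfun
  calc ∑' m : ℕ, ee m/(2*(m:ℝ)+3) = ∑' m : ℕ, ∫ y in S, g m y ∂volume := by
        exact tsum_congr fun m => (hterm m).symm
    _ = ∫ y in S, (∑' m : ℕ, g m y) ∂volume := hswap.symm
    _ = catalanConst - Real.log 2 := by rw [hleft, hright]

end SbbAux


/-- `S(1̄,1̄) = 4·∑_{n=2}^∞ (−1)^n/(2n−1) · ∑_{k=1}^{n−1} (−1)^k/(2k) = −2G + (π/2)·log 2`,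
stated as a limit of partial sums; here `n = m + 2` and `k = j + 1`. -/
theorem S_onebar_onebar :
    Tendsto (fun N : ℕ =>
        4 * ∑ m ∈ Finset.range N, ((-1 : ℝ) ^ m / (2 * (m : ℝ) + 3)) *
          ∑ j ∈ Finset.range (m + 1), (-1 : ℝ) ^ (j + 1) / (2 * (j : ℝ) + 2))
      atTop (nhds (-2 * catalanConst + (1/2) * π * Real.log 2)) := by

  have hT := (SbbAux.leibniz_shift.const_mul (-2*Real.log 2)).add
    (SbbAux.hasSum_dm.tendsto_sum_nat.const_mul (-2))
  have hval : (-2*Real.log 2) * (1 - π/4) + (-2) * (catalanConst - Real.log 2)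
      = -2 * catalanConst + (1/2) * π * Real.log 2 := by ring
  rw [hval] at hT
  apply hT.congr
  intro N
  rw [Finset.mul_sum, Finset.mul_sum, Finset.mul_sum, ← Finset.sum_add_distrib]
  apply Finset.sum_congr rfl
  intro m _
  have h := SbbAux.term_eq m
  linarith [h]
end
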